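/- arXiv:2604.20339 — 4 statements merged into one kernel-verified Lean document; each statement's English description precedes it below -/
import Mathlib

section
/- (Compact embedding of V into L²) Let (u_n)_{n∈ℕ} be a sequence of functions in V such that sup_n (∫_{−1}^{1} u_n(x)² dx + ∫_{−1}^{1} (1−x²)·u_n′(x)² dx) < ∞. Then there exist a subsequence (u_{n_k}) and a function u∈L²(−1,1) such that ∫_{−1}^{1} (u_{n_k}(x)−u(x))² dx → 0 as k→∞. -/
open MeasureTheory Set Filter

noncomputable section

/-- `u` belongs to the weighted space `V` on `I = (-1,1)`: it is square integrable on `I`,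
locally absolutely continuous on `I` with a.e. derivative `u'`, and `√(1-x²)·u'` is square
integrable on `I`. -/
structure MemV (u u' : ℝ → ℝ) : Prop where
  sq_int : IntegrableOn (fun x => u x ^ 2) (Ioo (-1:ℝ) 1)
  locAC : ∀ a b : ℝ, a ∈ Ioo (-1:ℝ) 1 → b ∈ Ioo (-1:ℝ) 1 →
      u b - u a = ∫ t in a..b, u' t
  deriv_intble : ∀ a b : ℝ, a ∈ Ioo (-1:ℝ) 1 → b ∈ Ioo (-1:ℝ) 1 →
      IntervalIntegrable u' volume a b
  wsq_int : IntegrableOn (fun x => (1 - x ^ 2) * u' x ^ 2) (Ioo (-1:ℝ) 1)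


lemma w_pos {t : ℝ} (ht : t ∈ Ioo (-1:ℝ) 1) : 0 < 1 - t ^ 2 := by
  obtain ⟨h1, h2⟩ := ht; nlinarith

lemma Ioc_subset_I {a b : ℝ} (ha : a ∈ Ioo (-1:ℝ) 1) (hb : b ∈ Ioo (-1:ℝ) 1) :
    Ioc a b ⊆ Ioo (-1:ℝ) 1 := fun t ht => ⟨lt_trans ha.1 ht.1, lt_of_le_of_lt ht.2 hb.2⟩

lemma Icc_subset_I {a b : ℝ} (ha : a ∈ Ioo (-1:ℝ) 1) (hb : b ∈ Ioo (-1:ℝ) 1) :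
    Icc a b ⊆ Ioo (-1:ℝ) 1 := fun t ht => ⟨lt_of_lt_of_le ha.1 ht.1, lt_of_le_of_lt ht.2 hb.2⟩

lemma invw_integrableOn {a b : ℝ} (ha : a ∈ Ioo (-1:ℝ) 1) (hb : b ∈ Ioo (-1:ℝ) 1) :
    IntegrableOn (fun t : ℝ => (1 - t ^ 2)⁻¹) (Ioc a b) := by
  refine (ContinuousOn.integrableOn_Icc ?_).mono_set Ioc_subset_Icc_self
  refine ContinuousOn.inv₀ (by fun_prop) ?_
  intro t ht
  exact ne_of_gt (w_pos (Icc_subset_I ha hb ht))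

/-- Cauchy–Schwarz estimate for the increment. -/
lemma cs_est {u u' : ℝ → ℝ} (hu : MemV u u') {a b : ℝ} (ha : a ∈ Ioo (-1:ℝ) 1)
    (hb : b ∈ Ioo (-1:ℝ) 1) (hab : a ≤ b) :
    (u b - u a) ^ 2 ≤ (∫ t in Ioc a b, (1 - t ^ 2) * u' t ^ 2) *
      (∫ t in Ioc a b, (1 - t ^ 2)⁻¹) := by
  have hsub : Ioc a b ⊆ Ioo (-1:ℝ) 1 := Ioc_subset_I ha hb
  set μ := volume.restrict (Ioc a b) with hμ
  have hu'int : IntegrableOn u' (Ioc a b) :=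
    (intervalIntegrable_iff_integrableOn_Ioc_of_le hab).1 (hu.deriv_intble a b ha hb)
  have hwpos : ∀ᵐ t ∂μ, 0 < 1 - t ^ 2 := by
    rw [hμ, ae_restrict_iff' measurableSet_Ioc]
    exact Eventually.of_forall fun t ht => w_pos (hsub ht)
  set f := fun t : ℝ => Real.sqrt (1 - t ^ 2) * |u' t| with hf
  set g := fun t : ℝ => (Real.sqrt (1 - t ^ 2))⁻¹ with hg
  have hfmeas : AEStronglyMeasurable f μ := by
    exact ((continuous_const.sub (continuous_pow 2)).sqrt.aestronglyMeasurable).mul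
      hu'int.aestronglyMeasurable.norm
  have hgmeas : AEStronglyMeasurable g μ :=
    ((continuous_const.sub (continuous_pow 2)).sqrt.measurable.inv).aestronglyMeasurable
  have hfsq : (fun t => f t ^ 2) =ᵐ[μ] fun t => (1 - t ^ 2) * u' t ^ 2 := by
    filter_upwards [hwpos] with t ht
    rw [hf]; simp only
    rw [mul_pow, Real.sq_sqrt ht.le, sq_abs]
  have hgsq : (fun t => g t ^ 2) =ᵐ[μ] fun t => (1 - t ^ 2)⁻¹ := by
    filter_upwards [hwpos] with t ht
    rw [hg]; simp only
    rw [← Real.sqrt_inv, Real.sq_sqrt (by positivity)]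
  have hfL2 : MemLp f 2 μ := by
    rw [memLp_two_iff_integrable_sq hfmeas]
    exact (Integrable.congr (hu.wsq_int.mono_set hsub) hfsq.symm)
  have hgL2 : MemLp g 2 μ := by
    rw [memLp_two_iff_integrable_sq hgmeas]
    exact (Integrable.congr (invw_integrableOn ha hb) hgsq.symm)
  have hconj : (2:ℝ).HolderConjugate 2 := by constructor <;> norm_num
  have h2 : ENNReal.ofReal (2:ℝ) = 2 := by norm_num
  have hfg := integral_mul_le_Lp_mul_Lq_of_nonneg hconj
    (Eventually.of_forall fun t => by positivity)
    (Eventually.of_forall fun t => by positivity) (h2 ▸ hfL2) (h2 ▸ hgL2)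
  -- rewrite rpow as pow
  have hrw : ∀ h : ℝ → ℝ, (∫ t, h t ^ (2:ℝ) ∂μ) = ∫ t, h t ^ 2 ∂μ := by
    intro h
    refine integral_congr_ae (Eventually.of_forall fun t => ?_)
    show h t ^ (2:ℝ) = h t ^ 2
    rw [show ((2:ℝ) = ((2:ℕ):ℝ)) by norm_num, Real.rpow_natCast]
  rw [hrw f, hrw g] at hfg
  set X := ∫ t in Ioc a b, (1 - t ^ 2) * u' t ^ 2 with hX
  set Y := ∫ t in Ioc a b, (1 - t ^ 2)⁻¹ with hY
  have hXE : (∫ t, f t ^ 2 ∂μ) = X := integral_congr_ae hfsq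
  have hYE : (∫ t, g t ^ 2 ∂μ) = Y := integral_congr_ae hgsq
  rw [hXE, hYE] at hfg
  have hX0 : 0 ≤ X := by
    refine setIntegral_nonneg measurableSet_Ioc fun t ht => ?_
    have := w_pos (hsub ht); positivity
  have hY0 : 0 ≤ Y := by
    refine setIntegral_nonneg measurableSet_Ioc fun t ht => ?_
    have := w_pos (hsub ht); positivity
  have hstep1 : |u b - u a| ≤ ∫ t, f t * g t ∂μ := by
    have heq : u b - u a = ∫ t, u' t ∂μ := by
      rw [hu.locAC a b ha hb, intervalIntegral.integral_of_le hab]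
    have habs : (fun t => |u' t|) =ᵐ[μ] fun t => f t * g t := by
      filter_upwards [hwpos] with t ht
      have hs : (0:ℝ) < Real.sqrt (1 - t ^ 2) := Real.sqrt_pos.2 ht
      rw [hf, hg]; field_simp
    calc |u b - u a| = |∫ t, u' t ∂μ| := by rw [heq]
      _ ≤ ∫ t, |u' t| ∂μ := by
          simpa [Real.norm_eq_abs] using norm_integral_le_integral_norm (f := u') (μ := μ)
      _ = ∫ t, f t * g t ∂μ := integral_congr_ae habs
  have hmain : |u b - u a| ≤ X ^ ((1:ℝ)/2) * Y ^ ((1:ℝ)/2) := le_trans hstep1 hfg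
  have hsq : (u b - u a) ^ 2 = |u b - u a| ^ 2 := (sq_abs _).symm
  rw [hsq]
  calc |u b - u a| ^ 2 ≤ (X ^ ((1:ℝ)/2) * Y ^ ((1:ℝ)/2)) ^ 2 := by
        apply pow_le_pow_left₀ (abs_nonneg _) hmain
    _ = X * Y := by
        rw [mul_pow, ← Real.sqrt_eq_rpow, ← Real.sqrt_eq_rpow,
          Real.sq_sqrt hX0, Real.sq_sqrt hY0]

lemma rpow_helper {s a : ℝ} (hs : 0 < s) (hb : Real.sqrt s ≤ a) :
    s⁻¹ ≤ a * s ^ (-(3/2) : ℝ) := by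
  have key : Real.sqrt s * s ^ (-(3/2) : ℝ) = s⁻¹ := by
    rw [Real.sqrt_eq_rpow, ← Real.rpow_add hs]
    norm_num [Real.rpow_neg_one]
  calc s⁻¹ = Real.sqrt s * s ^ (-(3/2) : ℝ) := key.symm
    _ ≤ a * s ^ (-(3/2) : ℝ) :=
        mul_le_mul_of_nonneg_right hb (Real.rpow_nonneg hs.le _)

lemma int_right_32 {y x : ℝ} (hyx : y ≤ x) (hx : x < 1) :
    ∫ t in Ioc y x, (1 - t) ^ (-(3/2) : ℝ) =
      2 * (1 - x) ^ (-(1/2) : ℝ) - 2 * (1 - y) ^ (-(1/2) : ℝ) := by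
  rw [← intervalIntegral.integral_of_le hyx]
  rw [show (fun t : ℝ => (1 - t) ^ (-(3/2):ℝ)) = (fun t : ℝ => ((fun s : ℝ => s ^ (-(3/2):ℝ)) (1 - t))) from rfl]
  rw [intervalIntegral.integral_comp_sub_left (fun s : ℝ => s ^ (-(3/2):ℝ)) 1]
  rw [integral_rpow (Or.inr ⟨by norm_num, by
    intro h
    rw [mem_uIcc] at h
    rcases h with ⟨h1, h2⟩ | ⟨h1, h2⟩ <;> nlinarith⟩)]
  norm_num
  ring
lemma int_right_12 {y x : ℝ} (hyx : y ≤ x) :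
    ∫ t in Ioc y x, (1 - t) ^ (-(1/2) : ℝ) =
      2 * (1 - y) ^ ((1/2) : ℝ) - 2 * (1 - x) ^ ((1/2) : ℝ) := by
  rw [← intervalIntegral.integral_of_le hyx]
  rw [show (fun t : ℝ => (1 - t) ^ (-(1/2):ℝ)) = (fun t : ℝ => ((fun s : ℝ => s ^ (-(1/2):ℝ)) (1 - t))) from rfl]
  rw [intervalIntegral.integral_comp_sub_left (fun s : ℝ => s ^ (-(1/2):ℝ)) 1]
  rw [integral_rpow (Or.inl (by norm_num))]
  norm_num
  ring

lemma int_left_32 {x y : ℝ} (hxy : x ≤ y) (hx : -1 < x) :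
    ∫ t in Ioc x y, (1 + t) ^ (-(3/2) : ℝ) =
      2 * (1 + x) ^ (-(1/2) : ℝ) - 2 * (1 + y) ^ (-(1/2) : ℝ) := by
  rw [← intervalIntegral.integral_of_le hxy]
  rw [show (fun t : ℝ => (1 + t) ^ (-(3/2):ℝ)) = (fun t : ℝ => ((fun s : ℝ => s ^ (-(3/2):ℝ)) (1 + t))) from rfl]
  rw [intervalIntegral.integral_comp_add_left (fun s : ℝ => s ^ (-(3/2):ℝ)) 1]
  rw [integral_rpow (Or.inr ⟨by norm_num, by
    intro h
    rw [mem_uIcc] at h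
    rcases h with ⟨h1, h2⟩ | ⟨h1, h2⟩ <;> nlinarith⟩)]
  norm_num
  ring

lemma int_left_12 {x y : ℝ} (hxy : x ≤ y) :
    ∫ t in Ioc x y, (1 + t) ^ (-(1/2) : ℝ) =
      2 * (1 + y) ^ ((1/2) : ℝ) - 2 * (1 + x) ^ ((1/2) : ℝ) := by
  rw [← intervalIntegral.integral_of_le hxy]
  rw [show (fun t : ℝ => (1 + t) ^ (-(1/2):ℝ)) = (fun t : ℝ => ((fun s : ℝ => s ^ (-(1/2):ℝ)) (1 + t))) from rfl]
  rw [intervalIntegral.integral_comp_add_left (fun s : ℝ => s ^ (-(1/2):ℝ)) 1]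
  rw [integral_rpow (Or.inl (by norm_num))]
  norm_num
  ring

lemma intble_right_32 {y x : ℝ} (hyx : y ≤ x) (hx : x < 1) :
    IntegrableOn (fun t : ℝ => (1 - t) ^ (-(3/2) : ℝ)) (Ioc y x) := by
  rw [← intervalIntegrable_iff_integrableOn_Ioc_of_le hyx]
  have h := (intervalIntegral.intervalIntegrable_rpow (μ := volume)
    (a := 1 - y) (b := 1 - x) (r := (-(3/2):ℝ)) (Or.inr (by
      intro h
      rw [mem_uIcc] at h
      rcases h with ⟨h1, h2⟩ | ⟨h1, h2⟩ <;> nlinarith))).comp_sub_left 1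
  simpa using h

lemma intble_left_32 {x y : ℝ} (hxy : x ≤ y) (hx : -1 < x) :
    IntegrableOn (fun t : ℝ => (1 + t) ^ (-(3/2) : ℝ)) (Ioc x y) := by
  rw [← intervalIntegrable_iff_integrableOn_Ioc_of_le hxy]
  have h := (intervalIntegral.intervalIntegrable_rpow (μ := volume)
    (a := 1 + x) (b := 1 + y) (r := (-(3/2):ℝ)) (Or.inr (by
      intro h
      rw [mem_uIcc] at h
      rcases h with ⟨h1, h2⟩ | ⟨h1, h2⟩ <;> nlinarith))).comp_add_left 1
  simpa using h

lemma intble_right_12 {y x : ℝ} (hyx : y ≤ x) :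
    IntegrableOn (fun t : ℝ => (1 - t) ^ (-(1/2) : ℝ)) (Ioc y x) := by
  rw [← intervalIntegrable_iff_integrableOn_Ioc_of_le hyx]
  have h := (intervalIntegral.intervalIntegrable_rpow' (a := 1 - y) (b := 1 - x)
    (r := (-(1/2):ℝ)) (by norm_num)).comp_sub_left 1
  simpa using h

lemma inv_mono' {p q : ℝ} (hp : 0 < p) (hpq : p ≤ q) : q⁻¹ ≤ p⁻¹ :=
  inv_anti₀ hp hpq

lemma J1 {a b δ : ℝ} (hδ : 0 < δ) (ha : -1 + δ ≤ a) (hab : a ≤ b) (hb : b ≤ 1 - δ) :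
    ∫ t in Ioc a b, (1 - t ^ 2)⁻¹ ≤ (b - a) / δ := by
  have hδ1 : δ ≤ 1 := by linarith
  have haI : a ∈ Ioo (-1:ℝ) 1 := ⟨by linarith, by linarith⟩
  have hbI : b ∈ Ioo (-1:ℝ) 1 := ⟨by linarith, by linarith⟩
  have hconst : IntegrableOn (fun _ : ℝ => δ⁻¹) (Ioc a b) := by
    exact integrableOn_const measure_Ioc_lt_top.ne
  have h := setIntegral_mono_on (invw_integrableOn haI hbI) hconst measurableSet_Ioc
    (fun t ht => by
      have h1 : t ≤ 1 - δ := le_trans ht.2 hb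
      have h2 : -(1 - δ) ≤ t := by have := ht.1; linarith
      have h3 : δ ≤ 1 - t ^ 2 := by nlinarith
      exact inv_mono' hδ h3)
  calc ∫ t in Ioc a b, (1 - t ^ 2)⁻¹ ≤ ∫ _ in Ioc a b, δ⁻¹ := h
    _ = (b - a) / δ := by
        rw [setIntegral_const, Real.volume_real_Ioc_of_le hab, smul_eq_mul]
        ring

lemma JtailR {δ x : ℝ} (hδ : 0 < δ) (hδ2 : δ ≤ 1/2) (hx : x ∈ Ioo (1 - δ) 1) :
    ∫ t in Ioc (1 - δ) x, (1 - t ^ 2)⁻¹ ≤ 2 * Real.sqrt δ * (1 - x) ^ (-(1/2) : ℝ) := by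
  have hyI : (1 - δ) ∈ Ioo (-1:ℝ) 1 := ⟨by linarith, by linarith⟩
  have hxI : x ∈ Ioo (-1:ℝ) 1 := ⟨by linarith [hx.1], hx.2⟩
  have hyx : 1 - δ ≤ x := hx.1.le
  have hmono := setIntegral_mono_on (invw_integrableOn hyI hxI)
    ((intble_right_32 hyx hx.2).const_mul (Real.sqrt δ)) measurableSet_Ioc
    (fun t ht => by
      have ht1 : 1 - δ < t := ht.1
      have ht2 : t ≤ x := ht.2
      have hs : 0 < 1 - t := by linarith [hx.2]
      have h1 : (1 - t ^ 2)⁻¹ ≤ (1 - t)⁻¹ := by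
        apply inv_mono' hs
        nlinarith
      have h2 : (1 - t)⁻¹ ≤ Real.sqrt δ * (1 - t) ^ (-(3/2) : ℝ) :=
        rpow_helper hs (by
          have : (1:ℝ) - t ≤ δ := by linarith
          exact Real.sqrt_le_sqrt this)
      exact le_trans h1 h2)
  calc ∫ t in Ioc (1 - δ) x, (1 - t ^ 2)⁻¹
      ≤ ∫ t in Ioc (1 - δ) x, Real.sqrt δ * (1 - t) ^ (-(3/2) : ℝ) := hmono
    _ = Real.sqrt δ * (2 * (1 - x) ^ (-(1/2):ℝ) - 2 * (1 - (1 - δ)) ^ (-(1/2):ℝ)) := by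
        rw [integral_const_mul, int_right_32 hyx hx.2]
    _ ≤ Real.sqrt δ * (2 * (1 - x) ^ (-(1/2):ℝ)) := by
        apply mul_le_mul_of_nonneg_left _ (Real.sqrt_nonneg δ)
        have : (0:ℝ) ≤ 2 * (1 - (1 - δ)) ^ (-(1/2):ℝ) :=
          mul_nonneg (by norm_num) (Real.rpow_nonneg (by linarith) _)
        linarith
    _ = 2 * Real.sqrt δ * (1 - x) ^ (-(1/2) : ℝ) := by ring

lemma JtailL {δ x : ℝ} (hδ : 0 < δ) (hδ2 : δ ≤ 1/2) (hx : x ∈ Ioo (-1:ℝ) (-1 + δ)) :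
    ∫ t in Ioc x (-1 + δ), (1 - t ^ 2)⁻¹ ≤ 2 * Real.sqrt δ * (1 + x) ^ (-(1/2) : ℝ) := by
  have hyI : (-1 + δ) ∈ Ioo (-1:ℝ) 1 := ⟨by linarith, by linarith⟩
  have hxI : x ∈ Ioo (-1:ℝ) 1 := ⟨hx.1, by linarith [hx.2]⟩
  have hxy : x ≤ -1 + δ := hx.2.le
  have hmono := setIntegral_mono_on (invw_integrableOn hxI hyI)
    ((intble_left_32 hxy hx.1).const_mul (Real.sqrt δ)) measurableSet_Ioc
    (fun t ht => by
      have ht1 : x < t := ht.1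
      have ht2 : t ≤ -1 + δ := ht.2
      have hs : 0 < 1 + t := by linarith [hx.1]
      have h1 : (1 - t ^ 2)⁻¹ ≤ (1 + t)⁻¹ := by
        apply inv_mono' hs
        nlinarith
      have h2 : (1 + t)⁻¹ ≤ Real.sqrt δ * (1 + t) ^ (-(3/2) : ℝ) :=
        rpow_helper hs (by
          have : (1:ℝ) + t ≤ δ := by linarith
          exact Real.sqrt_le_sqrt this)
      exact le_trans h1 h2)
  calc ∫ t in Ioc x (-1 + δ), (1 - t ^ 2)⁻¹
      ≤ ∫ t in Ioc x (-1 + δ), Real.sqrt δ * (1 + t) ^ (-(3/2) : ℝ) := hmono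
    _ = Real.sqrt δ * (2 * (1 + x) ^ (-(1/2):ℝ) - 2 * (1 + (-1 + δ)) ^ (-(1/2):ℝ)) := by
        rw [integral_const_mul, int_left_32 hxy hx.1]
    _ ≤ Real.sqrt δ * (2 * (1 + x) ^ (-(1/2):ℝ)) := by
        apply mul_le_mul_of_nonneg_left _ (Real.sqrt_nonneg δ)
        have : (0:ℝ) ≤ 2 * (1 + (-1 + δ)) ^ (-(1/2):ℝ) :=
          mul_nonneg (by norm_num) (Real.rpow_nonneg (by linarith) _)
        linarith
    _ = 2 * Real.sqrt δ * (1 + x) ^ (-(1/2) : ℝ) := by ring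

lemma sqrt_le_two {s : ℝ} (h : s ≤ 4) : Real.sqrt s ≤ 2 := by
  have h2 : Real.sqrt s ≤ Real.sqrt 4 := Real.sqrt_le_sqrt h
  rwa [show (4:ℝ) = 2 ^ 2 by norm_num, Real.sqrt_sq (by norm_num : (0:ℝ) ≤ 2)] at h2

lemma JmidR {δ z : ℝ} (hδ : 0 < δ) (hδ2 : δ ≤ 1/2) (hz : z ∈ Icc (-(1/2):ℝ) (1/2)) :
    ∫ t in Ioc z (1 - δ), (1 - t ^ 2)⁻¹ ≤ 8 * δ ^ (-(1/2) : ℝ) := by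
  have hzy : z ≤ 1 - δ := by linarith [hz.2]
  have hy1 : (1 - δ) < 1 := by linarith
  have hmono := setIntegral_mono_on
    (invw_integrableOn ⟨by linarith [hz.1], by linarith [hz.2]⟩ ⟨by linarith, hy1⟩)
    ((intble_right_32 hzy hy1).const_mul 4) measurableSet_Ioc
    (fun t ht => by
      have ht1 : z < t := ht.1
      have ht2 : t ≤ 1 - δ := ht.2
      have hs : 0 < 1 - t := by linarith
      have h1 : (1 - t ^ 2)⁻¹ ≤ ((1 - t)/2)⁻¹ := by
        apply inv_mono' (by linarith)
        nlinarith [hz.1]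
      have h2 : (1 - t)⁻¹ ≤ 2 * (1 - t) ^ (-(3/2) : ℝ) :=
        rpow_helper hs (sqrt_le_two (by linarith [hz.1]))
      have h3 : ((1 - t)/2)⁻¹ = 2 * (1 - t)⁻¹ := by
        field_simp
      rw [h3] at h1
      calc (1 - t ^ 2)⁻¹ ≤ 2 * (1 - t)⁻¹ := h1
        _ ≤ 2 * (2 * (1 - t) ^ (-(3/2) : ℝ)) := by linarith
        _ = 4 * (1 - t) ^ (-(3/2) : ℝ) := by ring)
  calc ∫ t in Ioc z (1 - δ), (1 - t ^ 2)⁻¹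
      ≤ ∫ t in Ioc z (1 - δ), 4 * (1 - t) ^ (-(3/2) : ℝ) := hmono
    _ = 4 * (2 * (1 - (1 - δ)) ^ (-(1/2):ℝ) - 2 * (1 - z) ^ (-(1/2):ℝ)) := by
        rw [integral_const_mul, int_right_32 hzy hy1]
    _ ≤ 4 * (2 * δ ^ (-(1/2):ℝ)) := by
        have h0 : (0:ℝ) ≤ 2 * (1 - z) ^ (-(1/2):ℝ) :=
          mul_nonneg (by norm_num) (Real.rpow_nonneg (by linarith [hz.2]) _)
        have : (1 : ℝ) - (1 - δ) = δ := by ring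
        rw [this]
        linarith
    _ = 8 * δ ^ (-(1/2) : ℝ) := by ring

lemma JmidL {δ z : ℝ} (hδ : 0 < δ) (hδ2 : δ ≤ 1/2) (hz : z ∈ Icc (-(1/2):ℝ) (1/2)) :
    ∫ t in Ioc (-1 + δ) z, (1 - t ^ 2)⁻¹ ≤ 8 * δ ^ (-(1/2) : ℝ) := by
  have hyz : -1 + δ ≤ z := by linarith [hz.1]
  have hy1 : (-1:ℝ) < -1 + δ := by linarith
  have hmono := setIntegral_mono_on
    (invw_integrableOn ⟨hy1, by linarith⟩ ⟨by linarith [hz.1], by linarith [hz.2]⟩)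
    ((intble_left_32 hyz hy1).const_mul 4) measurableSet_Ioc
    (fun t ht => by
      have ht1 : -1 + δ < t := ht.1
      have ht2 : t ≤ z := ht.2
      have hs : 0 < 1 + t := by linarith
      have h1 : (1 - t ^ 2)⁻¹ ≤ ((1 + t)/2)⁻¹ := by
        apply inv_mono' (by linarith)
        nlinarith [hz.2]
      have h2 : (1 + t)⁻¹ ≤ 2 * (1 + t) ^ (-(3/2) : ℝ) :=
        rpow_helper hs (sqrt_le_two (by linarith [hz.2]))
      have h3 : ((1 + t)/2)⁻¹ = 2 * (1 + t)⁻¹ := by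
        field_simp
      rw [h3] at h1
      calc (1 - t ^ 2)⁻¹ ≤ 2 * (1 + t)⁻¹ := h1
        _ ≤ 2 * (2 * (1 + t) ^ (-(3/2) : ℝ)) := by linarith
        _ = 4 * (1 + t) ^ (-(3/2) : ℝ) := by ring)
  calc ∫ t in Ioc (-1 + δ) z, (1 - t ^ 2)⁻¹
      ≤ ∫ t in Ioc (-1 + δ) z, 4 * (1 + t) ^ (-(3/2) : ℝ) := hmono
    _ = 4 * (2 * (1 + (-1 + δ)) ^ (-(1/2):ℝ) - 2 * (1 + z) ^ (-(1/2):ℝ)) := by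
        rw [integral_const_mul, int_left_32 hyz hy1]
    _ ≤ 4 * (2 * δ ^ (-(1/2):ℝ)) := by
        have h0 : (0:ℝ) ≤ 2 * (1 + z) ^ (-(1/2):ℝ) :=
          mul_nonneg (by norm_num) (Real.rpow_nonneg (by linarith [hz.1]) _)
        have : (1 : ℝ) + (-1 + δ) = δ := by ring
        rw [this]
        linarith
    _ = 8 * δ ^ (-(1/2) : ℝ) := by ring

lemma MemV.W_nonneg {u u' : ℝ → ℝ} (hu : MemV u u') :
    0 ≤ ∫ t in Ioo (-1:ℝ) 1, (1 - t ^ 2) * u' t ^ 2 :=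
  setIntegral_nonneg measurableSet_Ioo (fun t ht => by have := w_pos ht; positivity)

lemma MemV.wsq_le {u u' : ℝ → ℝ} (hu : MemV u u') {a b : ℝ} (ha : a ∈ Ioo (-1:ℝ) 1)
    (hb : b ∈ Ioo (-1:ℝ) 1) :
    ∫ t in Ioc a b, (1 - t ^ 2) * u' t ^ 2 ≤ ∫ t in Ioo (-1:ℝ) 1, (1 - t ^ 2) * u' t ^ 2 := by
  apply setIntegral_mono_set hu.wsq_int
  · rw [EventuallyLE, ae_restrict_iff' measurableSet_Ioo]
    exact Eventually.of_forall fun t ht => by have := w_pos ht; positivity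
  · exact (Ioc_subset_I ha hb).eventuallyLE

/-- combined Cauchy-Schwarz + global weighted bound -/
lemma cs_est' {u u' : ℝ → ℝ} (hu : MemV u u') {a b B J : ℝ} (ha : a ∈ Ioo (-1:ℝ) 1)
    (hb : b ∈ Ioo (-1:ℝ) 1) (hab : a ≤ b)
    (hW : ∫ t in Ioo (-1:ℝ) 1, (1 - t ^ 2) * u' t ^ 2 ≤ B)
    (hJ : ∫ t in Ioc a b, (1 - t ^ 2)⁻¹ ≤ J) :
    (u b - u a) ^ 2 ≤ B * J := by
  have h1 := cs_est hu ha hb hab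
  have hX0 : 0 ≤ ∫ t in Ioc a b, (1 - t ^ 2) * u' t ^ 2 :=
    setIntegral_nonneg measurableSet_Ioc fun t ht => by
      have := w_pos (Ioc_subset_I ha hb ht); positivity
  have hJ0 : 0 ≤ ∫ t in Ioc a b, (1 - t ^ 2)⁻¹ :=
    setIntegral_nonneg measurableSet_Ioc fun t ht => by
      have := w_pos (Ioc_subset_I ha hb ht); positivity
  have hXB : (∫ t in Ioc a b, (1 - t ^ 2) * u' t ^ 2) ≤ B := le_trans (hu.wsq_le ha hb) hW
  calc (u b - u a) ^ 2 ≤ _ := h1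
    _ ≤ B * J := mul_le_mul hXB hJ hJ0 (le_trans hX0 hXB)

lemma MemV.contOn {u u' : ℝ → ℝ} (hu : MemV u u') : ContinuousOn u (Ioo (-1:ℝ) 1) := by
  set W := ∫ t in Ioo (-1:ℝ) 1, (1 - t ^ 2) * u' t ^ 2 with hWdef
  have hW0 : 0 ≤ W := hu.W_nonneg
  intro x₀ hx₀
  apply ContinuousAt.continuousWithinAt
  set r := min (1 + x₀) (1 - x₀) with hr
  have hr0 : 0 < r := lt_min (by linarith [hx₀.1]) (by linarith [hx₀.2])
  have key : ∀ x : ℝ, |x - x₀| ≤ r / 2 → (u x - u x₀) ^ 2 ≤ W * (2 * |x - x₀| / r) := by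
    intro x hx
    have hb1 : x₀ - r / 2 ≤ x := by
      have := abs_le.1 hx; linarith [this.1]
    have hb2 : x ≤ x₀ + r / 2 := by
      have := abs_le.1 hx; linarith [this.2]
    have hrx1 : -1 + r / 2 ≤ x₀ - r / 2 := by
      have : r ≤ 1 + x₀ := min_le_left _ _; linarith
    have hrx2 : x₀ + r / 2 ≤ 1 - r / 2 := by
      have : r ≤ 1 - x₀ := min_le_right _ _; linarith
    have hxI : x ∈ Ioo (-1:ℝ) 1 := ⟨by linarith, by linarith⟩
    rcases le_total x x₀ with h | h
    · have hJ := J1 (by positivity : (0:ℝ) < r / 2) (by linarith) h (by linarith)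
      have hJ2 : ∫ t in Ioc x x₀, (1 - t ^ 2)⁻¹ ≤ 2 * |x - x₀| / r := by
        refine le_trans hJ ?_
        rw [abs_of_nonpos (by linarith : x - x₀ ≤ 0),
          div_le_div_iff₀ (by positivity) (by positivity)]
        nlinarith [hr0]
      have := cs_est' hu hxI hx₀ h le_rfl hJ2
      calc (u x - u x₀) ^ 2 = (u x₀ - u x) ^ 2 := by ring
        _ ≤ W * (2 * |x - x₀| / r) := this
    · have hJ := J1 (by positivity : (0:ℝ) < r / 2) (by linarith) h (by linarith)
      have hJ2 : ∫ t in Ioc x₀ x, (1 - t ^ 2)⁻¹ ≤ 2 * |x - x₀| / r := by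
        refine le_trans hJ ?_
        rw [abs_of_nonneg (by linarith : (0:ℝ) ≤ x - x₀),
          div_le_div_iff₀ (by positivity) (by positivity)]
        nlinarith [hr0]
      exact cs_est' hu hx₀ hxI h le_rfl hJ2
  rw [Metric.continuousAt_iff]
  intro ε hε
  refine ⟨min (r / 2) (r * ε ^ 2 / (2 * (W + 1))), by positivity, fun {x} hdist => ?_⟩
  rw [Real.dist_eq] at hdist ⊢
  have h1 : |x - x₀| ≤ r / 2 := le_of_lt (lt_of_lt_of_le hdist (min_le_left _ _))
  have h2 : |x - x₀| < r * ε ^ 2 / (2 * (W + 1)) := lt_of_lt_of_le hdist (min_le_right _ _)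
  have h3 := key x h1
  have h4 : W * (2 * |x - x₀| / r) < ε ^ 2 := by
    have hA := (lt_div_iff₀ (by positivity : (0:ℝ) < 2 * (W + 1))).1 h2
    have hre : W * (2 * |x - x₀| / r) = W * (2 * |x - x₀|) / r := by ring
    rw [hre, div_lt_iff₀ hr0]
    nlinarith [abs_nonneg (x - x₀)]
  have h5 : (u x - u x₀) ^ 2 < ε ^ 2 := lt_of_le_of_lt h3 h4
  have h6 : |u x - u x₀| < ε := by
    have := Real.sqrt_lt_sqrt (sq_nonneg _) h5
    rwa [Real.sqrt_sq_eq_abs, Real.sqrt_sq hε.le] at this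
  exact h6

lemma exists_small_point {u u' : ℝ → ℝ} (hu : MemV u u') :
    ∃ z ∈ Icc (-(1/2):ℝ) (1/2), u z ^ 2 ≤ ∫ x in Ioo (-1:ℝ) 1, u x ^ 2 := by
  have hIccsub : Icc (-(1/2):ℝ) (1/2) ⊆ Ioo (-1:ℝ) 1 := fun t ht =>
    ⟨by linarith [ht.1], by linarith [ht.2]⟩
  have hcont : ContinuousOn (fun t => u t ^ 2) (Icc (-(1/2):ℝ) (1/2)) :=
    ((hu.contOn.mono hIccsub).pow 2)
  obtain ⟨z, hz, hmin⟩ := isCompact_Icc.exists_isMinOn (by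
    exact ⟨-(1/2), by constructor <;> norm_num⟩) hcont
  refine ⟨z, hz, ?_⟩
  have hsub2 : Ioo (-(1/2):ℝ) (1/2) ⊆ Ioo (-1:ℝ) 1 := fun t ht =>
    ⟨by linarith [ht.1], by linarith [ht.2]⟩
  have step1 : u z ^ 2 * (volume (Ioo (-(1/2):ℝ) (1/2))).toReal
      ≤ ∫ x in Ioo (-(1/2):ℝ) (1/2), u x ^ 2 := by
    apply setIntegral_ge_of_const_le_real measurableSet_Ioo (measure_Ioo_lt_top).ne
      (fun x hx => hmin (Ioo_subset_Icc_self hx))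
      (hu.sq_int.mono_set hsub2)
  have hvol : (volume (Ioo (-(1/2):ℝ) (1/2))).toReal = 1 := by
    rw [Real.volume_Ioo]
    norm_num
  rw [hvol, mul_one] at step1
  refine le_trans step1 ?_
  apply setIntegral_mono_set hu.sq_int
  · rw [EventuallyLE, ae_restrict_iff' measurableSet_Ioo]
    exact Eventually.of_forall fun t _ => by positivity
  · exact hsub2.eventuallyLE

lemma sq_bound_y_R {u u' : ℝ → ℝ} {B δ : ℝ} (hu : MemV u u') (hδ : 0 < δ) (hδ2 : δ ≤ 1/2)
    (hIu : ∫ x in Ioo (-1:ℝ) 1, u x ^ 2 ≤ B)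
    (hW : ∫ t in Ioo (-1:ℝ) 1, (1 - t ^ 2) * u' t ^ 2 ≤ B) :
    u (1 - δ) ^ 2 ≤ 2 * B + 16 * B * δ ^ (-(1/2) : ℝ) := by
  obtain ⟨z, hz, hzle⟩ := exists_small_point hu
  have hzB : u z ^ 2 ≤ B := le_trans hzle hIu
  have hB0 : 0 ≤ B := le_trans (sq_nonneg _) hzB
  have hzI : z ∈ Ioo (-1:ℝ) 1 := ⟨by linarith [hz.1], by linarith [hz.2]⟩
  have hyI : (1 - δ) ∈ Ioo (-1:ℝ) 1 := ⟨by linarith, by linarith⟩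
  have hcs := cs_est' hu hzI hyI (by linarith [hz.2]) hW (JmidR hδ hδ2 hz)
  have hJ0 : (0:ℝ) ≤ 8 * δ ^ (-(1/2):ℝ) := by positivity
  nlinarith [sq_nonneg (2 * u z - u (1 - δ))]

lemma sq_bound_y_L {u u' : ℝ → ℝ} {B δ : ℝ} (hu : MemV u u') (hδ : 0 < δ) (hδ2 : δ ≤ 1/2)
    (hIu : ∫ x in Ioo (-1:ℝ) 1, u x ^ 2 ≤ B)
    (hW : ∫ t in Ioo (-1:ℝ) 1, (1 - t ^ 2) * u' t ^ 2 ≤ B) :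
    u (-1 + δ) ^ 2 ≤ 2 * B + 16 * B * δ ^ (-(1/2) : ℝ) := by
  obtain ⟨z, hz, hzle⟩ := exists_small_point hu
  have hzB : u z ^ 2 ≤ B := le_trans hzle hIu
  have hB0 : 0 ≤ B := le_trans (sq_nonneg _) hzB
  have hzI : z ∈ Ioo (-1:ℝ) 1 := ⟨by linarith [hz.1], by linarith [hz.2]⟩
  have hyI : (-1 + δ) ∈ Ioo (-1:ℝ) 1 := ⟨by linarith, by linarith⟩
  have hcs := cs_est' hu hyI hzI (by linarith [hz.1]) hW (JmidL hδ hδ2 hz)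
  have hJ0 : (0:ℝ) ≤ 8 * δ ^ (-(1/2):ℝ) := by positivity
  nlinarith [sq_nonneg (2 * u z - u (-1 + δ))]

/-- uniform interior bound -/
lemma sq_bound_mid {u u' : ℝ → ℝ} {B δ : ℝ} (hu : MemV u u') (hδ : 0 < δ) (hδ2 : δ ≤ 1/2)
    (hIu : ∫ x in Ioo (-1:ℝ) 1, u x ^ 2 ≤ B)
    (hW : ∫ t in Ioo (-1:ℝ) 1, (1 - t ^ 2) * u' t ^ 2 ≤ B)
    {x : ℝ} (hx1 : -1 + δ ≤ x) (hx2 : x ≤ 1 - δ) :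
    u x ^ 2 ≤ 2 * B + 4 * B / δ := by
  obtain ⟨z, hz, hzle⟩ := exists_small_point hu
  have hzB : u z ^ 2 ≤ B := le_trans hzle hIu
  have hB0 : 0 ≤ B := le_trans (sq_nonneg _) hzB
  have hzI : z ∈ Ioo (-1:ℝ) 1 := ⟨by linarith [hz.1], by linarith [hz.2]⟩
  have hxI : x ∈ Ioo (-1:ℝ) 1 := ⟨by linarith, by linarith⟩
  have hzb1 : -1 + δ ≤ z := by linarith [hz.1]
  have hzb2 : z ≤ 1 - δ := by linarith [hz.2]
  have hd0 : 0 ≤ 2 / δ := by positivity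
  rcases le_total x z with h | h
  · have hJ := J1 hδ hx1 h hzb2
    have hJ2 : ∫ t in Ioc x z, (1 - t ^ 2)⁻¹ ≤ 2 / δ := by
      refine le_trans hJ ?_
      gcongr
      linarith [hxI.1, hzI.2]
    have hcs := cs_est' hu hxI hzI h hW hJ2
    have h4 : u x ^ 2 ≤ 2 * u z ^ 2 + 2 * (u z - u x) ^ 2 := by
      nlinarith [sq_nonneg (2 * u z - u x)]
    have h5 : B * (2 / δ) = 2 * B / δ := by ring
    rw [h5] at hcs
    have h6 : 2 * (u z - u x) ^ 2 ≤ 2 * (2 * B / δ) := by linarith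
    have h7 : 2 * (2 * B / δ) = 4 * B / δ := by ring
    linarith
  · have hJ := J1 hδ hzb1 h hx2
    have hJ2 : ∫ t in Ioc z x, (1 - t ^ 2)⁻¹ ≤ 2 / δ := by
      refine le_trans hJ ?_
      gcongr
      linarith [hxI.2, hzI.1]
    have hcs := cs_est' hu hzI hxI h hW hJ2
    have h4 : u x ^ 2 ≤ 2 * u z ^ 2 + 2 * (u x - u z) ^ 2 := by
      nlinarith [sq_nonneg (2 * u z - u x)]
    have h5 : B * (2 / δ) = 2 * B / δ := by ring
    rw [h5] at hcs
    have h6 : 2 * (u x - u z) ^ 2 ≤ 2 * (2 * B / δ) := by linarith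
    have h7 : 2 * (2 * B / δ) = 4 * B / δ := by ring
    linarith

lemma delta_le_sqrt {δ : ℝ} (hδ : 0 < δ) (hδ1 : δ ≤ 1) : δ ≤ Real.sqrt δ := by
  nlinarith [Real.sq_sqrt hδ.le, Real.sqrt_nonneg δ, Real.sqrt_le_sqrt hδ1,
    Real.sqrt_one]

lemma rpow_cancel {δ : ℝ} (hδ : 0 < δ) : δ ^ (-(1/2) : ℝ) * δ = Real.sqrt δ := by
  nth_rewrite 2 [← Real.rpow_one δ]
  rw [← Real.rpow_add hδ, Real.sqrt_eq_rpow]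
  norm_num

lemma tailR {u u' : ℝ → ℝ} {B δ : ℝ} (hu : MemV u u') (hδ : 0 < δ) (hδ2 : δ ≤ 1/2)
    (hIu : ∫ x in Ioo (-1:ℝ) 1, u x ^ 2 ≤ B)
    (hW : ∫ t in Ioo (-1:ℝ) 1, (1 - t ^ 2) * u' t ^ 2 ≤ B) :
    ∫ x in Ioo (1 - δ) 1, u x ^ 2 ≤ 44 * B * Real.sqrt δ := by
  have hB0 : 0 ≤ B :=
    le_trans (setIntegral_nonneg measurableSet_Ioo fun x _ => sq_nonneg _) hIu
  have hy := sq_bound_y_R hu hδ hδ2 hIu hW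
  have hyI : (1 - δ) ∈ Ioo (-1:ℝ) 1 := ⟨by linarith, by linarith⟩
  have hsub : Ioo (1 - δ) 1 ⊆ Ioo (-1:ℝ) 1 := fun t ht => ⟨by linarith [ht.1], ht.2⟩
  set Cy := 2 * B + 16 * B * δ ^ (-(1/2) : ℝ) with hCy
  set g := fun x : ℝ => 2 * Cy + 4 * B * Real.sqrt δ * (1 - x) ^ (-(1/2) : ℝ) with hgdef
  have hgint : IntegrableOn g (Ioo (1 - δ) 1) := by
    apply Integrable.add
    · exact integrableOn_const measure_Ioo_lt_top.ne
    · exact ((intble_right_12 (by linarith : (1:ℝ) - δ ≤ 1)).mono_set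
        Ioo_subset_Ioc_self).const_mul _
  have hpoint : ∀ x ∈ Ioo (1 - δ) 1, u x ^ 2 ≤ g x := by
    intro x hx
    have hxI : x ∈ Ioo (-1:ℝ) 1 := hsub hx
    have hcs := cs_est' hu hyI hxI hx.1.le hW (JtailR hδ hδ2 hx)
    have h4 : u x ^ 2 ≤ 2 * u (1 - δ) ^ 2 + 2 * (u x - u (1 - δ)) ^ 2 := by
      nlinarith [sq_nonneg (2 * u (1 - δ) - u x)]
    have h6 : 2 * (u x - u (1 - δ)) ^ 2
        ≤ 2 * (B * (2 * Real.sqrt δ * (1 - x) ^ (-(1/2) : ℝ))) := by linarith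
    have h7 : 2 * (B * (2 * Real.sqrt δ * (1 - x) ^ (-(1/2) : ℝ)))
        = 4 * B * Real.sqrt δ * (1 - x) ^ (-(1/2) : ℝ) := by ring
    rw [h7] at h6
    rw [hgdef]
    exact le_trans h4 (add_le_add (by linarith) h6)
  have hmono := setIntegral_mono_on (hu.sq_int.mono_set hsub) hgint measurableSet_Ioo hpoint
  have hIoo : ∫ x in Ioo (1 - δ) 1, (1 - x) ^ (-(1/2):ℝ) = 2 * Real.sqrt δ := by
    rw [← integral_Ioc_eq_integral_Ioo, int_right_12 (by linarith : (1:ℝ) - δ ≤ 1),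
      show (1:ℝ) - (1 - δ) = δ by ring, sub_self, Real.zero_rpow (by norm_num),
      Real.sqrt_eq_rpow]
    ring
  have hgval : ∫ x in Ioo (1 - δ) 1, g x
      = 2 * Cy * δ + 4 * B * Real.sqrt δ * (2 * Real.sqrt δ) := by
    rw [hgdef]
    rw [integral_add (integrableOn_const (C := 2 * Cy) measure_Ioo_lt_top.ne)
      (((intble_right_12 (by linarith : (1:ℝ) - δ ≤ 1)).mono_set
        Ioo_subset_Ioc_self).const_mul _)]
    rw [setIntegral_const, integral_const_mul, hIoo, Real.volume_real_Ioo_of_le (by linarith),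
      smul_eq_mul]
    ring_nf
  have hfin : 2 * Cy * δ + 4 * B * Real.sqrt δ * (2 * Real.sqrt δ) ≤ 44 * B * Real.sqrt δ := by
    rw [hCy]
    have h1 : δ ^ (-(1/2) : ℝ) * δ = Real.sqrt δ := rpow_cancel hδ
    have h2 : Real.sqrt δ * Real.sqrt δ = δ := Real.mul_self_sqrt hδ.le
    have h3 : δ ≤ Real.sqrt δ := delta_le_sqrt hδ (by linarith)
    have h4 : B * δ ≤ B * Real.sqrt δ := mul_le_mul_of_nonneg_left h3 hB0
    nlinarith [h4]
  linarith [hmono, hgval.le, hgval.ge, hfin]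

lemma tailL {u u' : ℝ → ℝ} {B δ : ℝ} (hu : MemV u u') (hδ : 0 < δ) (hδ2 : δ ≤ 1/2)
    (hIu : ∫ x in Ioo (-1:ℝ) 1, u x ^ 2 ≤ B)
    (hW : ∫ t in Ioo (-1:ℝ) 1, (1 - t ^ 2) * u' t ^ 2 ≤ B) :
    ∫ x in Ioo (-1:ℝ) (-1 + δ), u x ^ 2 ≤ 44 * B * Real.sqrt δ := by
  have hB0 : 0 ≤ B :=
    le_trans (setIntegral_nonneg measurableSet_Ioo fun x _ => sq_nonneg _) hIu
  have hy := sq_bound_y_L hu hδ hδ2 hIu hW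
  have hyI : (-1 + δ) ∈ Ioo (-1:ℝ) 1 := ⟨by linarith, by linarith⟩
  have hsub : Ioo (-1:ℝ) (-1 + δ) ⊆ Ioo (-1:ℝ) 1 := fun t ht => ⟨ht.1, by linarith [ht.2]⟩
  set Cy := 2 * B + 16 * B * δ ^ (-(1/2) : ℝ) with hCy
  set g := fun x : ℝ => 2 * Cy + 4 * B * Real.sqrt δ * (1 + x) ^ (-(1/2) : ℝ) with hgdef
  have hbase : IntegrableOn (fun t : ℝ => (1 + t) ^ (-(1/2):ℝ)) (Ioc (-1:ℝ) (-1 + δ)) := by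
    rw [← intervalIntegrable_iff_integrableOn_Ioc_of_le (by linarith : (-1:ℝ) ≤ -1 + δ),
      show (-1:ℝ) + δ = δ - 1 by ring]
    have h := (intervalIntegral.intervalIntegrable_rpow' (a := (0:ℝ)) (b := δ)
      (r := (-(1/2):ℝ)) (by norm_num)).comp_add_left 1
    simpa using h
  have hgint : IntegrableOn g (Ioo (-1:ℝ) (-1 + δ)) := by
    apply Integrable.add
    · exact integrableOn_const measure_Ioo_lt_top.ne
    · exact (hbase.mono_set Ioo_subset_Ioc_self).const_mul _
  have hpoint : ∀ x ∈ Ioo (-1:ℝ) (-1 + δ), u x ^ 2 ≤ g x := by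
    intro x hx
    have hxI : x ∈ Ioo (-1:ℝ) 1 := hsub hx
    have hcs := cs_est' hu hxI hyI hx.2.le hW (JtailL hδ hδ2 hx)
    have h4 : u x ^ 2 ≤ 2 * u (-1 + δ) ^ 2 + 2 * (u (-1 + δ) - u x) ^ 2 := by
      nlinarith [sq_nonneg (2 * u (-1 + δ) - u x)]
    have h6 : 2 * (u (-1 + δ) - u x) ^ 2
        ≤ 2 * (B * (2 * Real.sqrt δ * (1 + x) ^ (-(1/2) : ℝ))) := by linarith
    have h7 : 2 * (B * (2 * Real.sqrt δ * (1 + x) ^ (-(1/2) : ℝ)))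
        = 4 * B * Real.sqrt δ * (1 + x) ^ (-(1/2) : ℝ) := by ring
    rw [h7] at h6
    rw [hgdef]
    exact le_trans h4 (add_le_add (by linarith) h6)
  have hmono := setIntegral_mono_on (hu.sq_int.mono_set hsub) hgint measurableSet_Ioo hpoint
  have hIoo : ∫ x in Ioo (-1:ℝ) (-1 + δ), (1 + x) ^ (-(1/2):ℝ) = 2 * Real.sqrt δ := by
    rw [← integral_Ioc_eq_integral_Ioo, int_left_12 (by linarith : (-1:ℝ) ≤ -1 + δ),
      show (1:ℝ) + (-1 + δ) = δ by ring, show (1:ℝ) + -1 = 0 by ring,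
      Real.zero_rpow (by norm_num), Real.sqrt_eq_rpow]
    ring
  have hgval : ∫ x in Ioo (-1:ℝ) (-1 + δ), g x
      = 2 * Cy * δ + 4 * B * Real.sqrt δ * (2 * Real.sqrt δ) := by
    rw [hgdef]
    rw [integral_add (integrableOn_const (C := 2 * Cy) measure_Ioo_lt_top.ne)
      ((hbase.mono_set Ioo_subset_Ioc_self).const_mul _)]
    rw [setIntegral_const, integral_const_mul, hIoo, Real.volume_real_Ioo_of_le (by linarith),
      smul_eq_mul]
    ring_nf
  have hfin : 2 * Cy * δ + 4 * B * Real.sqrt δ * (2 * Real.sqrt δ) ≤ 44 * B * Real.sqrt δ := by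
    rw [hCy]
    have h1 : δ ^ (-(1/2) : ℝ) * δ = Real.sqrt δ := rpow_cancel hδ
    have h2 : Real.sqrt δ * Real.sqrt δ = δ := Real.mul_self_sqrt hδ.le
    have h3 : δ ≤ Real.sqrt δ := delta_le_sqrt hδ (by linarith)
    have h4 : B * δ ≤ B * Real.sqrt δ := mul_le_mul_of_nonneg_left h3 hB0
    nlinarith [h4]
  linarith [hmono, hgval.le, hfin]

lemma asm_sq {f : ℝ → ℝ} {μ : Measure ℝ} (h : AEStronglyMeasurable f μ) :
    AEStronglyMeasurable (fun x => f x ^ 2) μ := by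
  have := h.mul h
  exact h.pow 2

/-- Fatou-type lemma: limits of L²-bounded sequences are L²-bounded. -/
lemma fatou_sq {f : ℕ → ℝ → ℝ} {g : ℝ → ℝ} {S : Set ℝ} (hS : MeasurableSet S)
    {C : ℝ} (hC : 0 ≤ C)
    (hmeasg : AEStronglyMeasurable g (volume.restrict S))
    (hint : ∀ k, IntegrableOn (fun x => f k x ^ 2) S)
    (hle : ∀ k, ∫ x in S, f k x ^ 2 ≤ C)
    (htend : ∀ x ∈ S, Tendsto (fun k => f k x) atTop (nhds (g x))) :
    IntegrableOn (fun x => g x ^ 2) S ∧ ∫ x in S, g x ^ 2 ≤ C := by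
  set μ := volume.restrict S with hμ
  have haemeas : ∀ k, AEMeasurable (fun x => ENNReal.ofReal (f k x ^ 2)) μ := fun k =>
    ENNReal.measurable_ofReal.comp_aemeasurable (hint k).aestronglyMeasurable.aemeasurable
  have hFk : ∀ k, ∫⁻ x, ENNReal.ofReal (f k x ^ 2) ∂μ ≤ ENNReal.ofReal C := by
    intro k
    rw [← ofReal_integral_eq_lintegral_ofReal (hint k)
      (Eventually.of_forall fun x => sq_nonneg _)]
    exact ENNReal.ofReal_le_ofReal (hle k)
  have hptwise : ∀ᵐ x ∂μ, Filter.liminf (fun k => ENNReal.ofReal (f k x ^ 2)) atTop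
      = ENNReal.ofReal (g x ^ 2) := by
    rw [hμ, ae_restrict_iff' hS]
    refine Eventually.of_forall fun x hx => ?_
    have h1 : Tendsto (fun k => f k x ^ 2) atTop (nhds (g x ^ 2)) := (htend x hx).pow 2
    exact ((ENNReal.continuous_ofReal.tendsto _).comp h1).liminf_eq
  have key := lintegral_liminf_le' (u := atTop) haemeas
  have h1 : ∫⁻ x, ENNReal.ofReal (g x ^ 2) ∂μ ≤ ENNReal.ofReal C := by
    have heq : ∫⁻ x, ENNReal.ofReal (g x ^ 2) ∂μ
        = ∫⁻ x, Filter.liminf (fun k => ENNReal.ofReal (f k x ^ 2)) atTop ∂μ :=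
      lintegral_congr_ae (hptwise.mono fun x hx => hx.symm)
    rw [heq]
    refine le_trans key ?_
    refine le_trans (Filter.liminf_le_liminf (Eventually.of_forall hFk)) ?_
    simp
  have hmeassq : AEStronglyMeasurable (fun x => g x ^ 2) μ := asm_sq hmeasg
  have hfin : HasFiniteIntegral (fun x => g x ^ 2) μ := by
    rw [hasFiniteIntegral_iff_ofReal (Eventually.of_forall fun x => sq_nonneg _)]
    exact lt_of_le_of_lt h1 ENNReal.ofReal_lt_top
  have hintg : IntegrableOn (fun x => g x ^ 2) S := ⟨hmeassq, hfin⟩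
  refine ⟨hintg, ?_⟩
  rw [integral_eq_lintegral_of_nonneg_ae (Eventually.of_forall fun x => sq_nonneg _) hmeassq]
  exact ENNReal.toReal_le_of_le_ofReal hC h1

/-- oscillation estimate away from the boundary -/
lemma osc_est {u u' : ℝ → ℝ} {B : ℝ} (hu : MemV u u')
    (hW : ∫ t in Ioo (-1:ℝ) 1, (1 - t ^ 2) * u' t ^ 2 ≤ B)
    {x y δ : ℝ} (hδ : 0 < δ) (hx1 : -1 + δ ≤ x) (hx2 : x ≤ 1 - δ)
    (hy1 : -1 + δ ≤ y) (hy2 : y ≤ 1 - δ) :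
    (u y - u x) ^ 2 ≤ B * (|y - x| / δ) := by
  have hδ1 : δ ≤ 1 := by linarith
  have hxI : x ∈ Ioo (-1:ℝ) 1 := ⟨by linarith, by linarith⟩
  have hyI : y ∈ Ioo (-1:ℝ) 1 := ⟨by linarith, by linarith⟩
  rcases le_total x y with h | h
  · have hJ := J1 hδ hx1 h hy2
    rw [abs_of_nonneg (by linarith : (0:ℝ) ≤ y - x)]
    exact cs_est' hu hxI hyI h hW hJ
  · have hJ := J1 hδ hy1 h hx2
    rw [abs_of_nonpos (by linarith : y - x ≤ 0)]
    have := cs_est' hu hyI hxI h hW (J := -(y - x) / δ) (by rw [neg_sub]; exact hJ)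
    calc (u y - u x) ^ 2 = (u x - u y) ^ 2 := by ring
      _ ≤ B * (-(y - x) / δ) := this

lemma abs_lt_of_sq_lt_sq'' {d e : ℝ} (h : d ^ 2 < e ^ 2) (he : 0 ≤ e) : |d| < e := by
  have := Real.sqrt_lt_sqrt (sq_nonneg d) h
  rwa [Real.sqrt_sq_eq_abs, Real.sqrt_sq he] at this

set_option maxHeartbeats 2000000 in
/-- Compact embedding of `V` into `L²(-1,1)`: every `V`-bounded sequence has a subsequence
converging in `L²(-1,1)`. -/
theorem V_compactly_embeds_L2 (u : ℕ → ℝ → ℝ) (u' : ℕ → ℝ → ℝ)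
    (hmem : ∀ n, MemV (u n) (u' n))
    (hbdd : ∃ B : ℝ, ∀ n,
      (∫ x in Ioo (-1:ℝ) 1, u n x ^ 2)
        + (∫ x in Ioo (-1:ℝ) 1, (1 - x ^ 2) * u' n x ^ 2) ≤ B) :
    ∃ φ : ℕ → ℕ, StrictMono φ ∧ ∃ v : ℝ → ℝ,
      AEStronglyMeasurable v (volume.restrict (Ioo (-1:ℝ) 1)) ∧
      IntegrableOn (fun x => v x ^ 2) (Ioo (-1:ℝ) 1) ∧
      Tendsto (fun k => ∫ x in Ioo (-1:ℝ) 1, (u (φ k) x - v x) ^ 2)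
        atTop (nhds 0) := by
  obtain ⟨B, hB⟩ := hbdd
  have hnn : ∀ n, 0 ≤ ∫ x in Ioo (-1:ℝ) 1, u n x ^ 2 := fun n =>
    setIntegral_nonneg measurableSet_Ioo fun x _ => sq_nonneg _
  have hWnn : ∀ n, 0 ≤ ∫ x in Ioo (-1:ℝ) 1, (1 - x ^ 2) * u' n x ^ 2 := fun n =>
    (hmem n).W_nonneg
  have hIu : ∀ n, ∫ x in Ioo (-1:ℝ) 1, u n x ^ 2 ≤ B := fun n => by
    linarith [hB n, hWnn n]
  have hWu : ∀ n, ∫ x in Ioo (-1:ℝ) 1, (1 - x ^ 2) * u' n x ^ 2 ≤ B := fun n => by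
    linarith [hB n, hnn n]
  have hB0 : (0:ℝ) ≤ B := le_trans (hnn 0) (hIu 0)
  -- dense sequence in the interval
  haveI : Nonempty (Ioo (-1:ℝ) 1) := ⟨⟨0, by norm_num⟩⟩
  set q : ℕ → ℝ := fun i => (TopologicalSpace.denseSeq (↥(Ioo (-1:ℝ) 1)) i : ℝ) with hqdef
  have hq : ∀ i, q i ∈ Ioo (-1:ℝ) 1 := fun i => (TopologicalSpace.denseSeq (↥(Ioo (-1:ℝ) 1)) i).2
  have hqdense := TopologicalSpace.denseRange_denseSeq (↥(Ioo (-1:ℝ) 1))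
  -- uniform bounds at the q i
  set δq : ℕ → ℝ := fun i => min (min (1 + q i) (1 - q i)) (1/2) with hδqdef
  have hδq0 : ∀ i, 0 < δq i := fun i =>
    lt_min (lt_min (by linarith [(hq i).1]) (by linarith [(hq i).2])) (by norm_num)
  have hδq2 : ∀ i, δq i ≤ 1/2 := fun i => min_le_right _ _
  have hqin : ∀ i, -1 + δq i ≤ q i ∧ q i ≤ 1 - δq i := fun i => by
    constructor
    · have : δq i ≤ 1 + q i := le_trans (min_le_left _ _) (min_le_left _ _)
      linarith
    · have : δq i ≤ 1 - q i := le_trans (min_le_left _ _) (min_le_right _ _)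
      linarith
  set M : ℕ → ℝ := fun i => Real.sqrt (2 * B + 4 * B / δq i) with hMdef
  have hM : ∀ n i, u n (q i) ∈ Icc (-(M i)) (M i) := by
    intro n i
    have hsq := sq_bound_mid (hmem n) (hδq0 i) (hδq2 i) (hIu n) (hWu n)
      (hqin i).1 (hqin i).2
    have habs : |u n (q i)| ≤ M i := by
      rw [hMdef]
      have := Real.sqrt_le_sqrt hsq
      rwa [Real.sqrt_sq_eq_abs] at this
    rw [mem_Icc, ← abs_le]
    exact habs
  -- extract subsequence converging at every q i
  haveI : ∀ i : ℕ, CompactSpace (Icc (-(M i)) (M i)) :=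
    fun i => isCompact_iff_compactSpace.1 isCompact_Icc
  set F : ℕ → (∀ i : ℕ, Icc (-(M i)) (M i)) := fun n i => ⟨u n (q i), hM n i⟩ with hFdef
  obtain ⟨a, φ, hφ, hconv⟩ := CompactSpace.tendsto_subseq F
  have hcoord : ∀ i, Tendsto (fun k => u (φ k) (q i)) atTop (nhds (a i : ℝ)) := by
    intro i
    have h1 : Tendsto (fun k => (F (φ k)) i) atTop (nhds (a i)) :=
      ((continuous_apply i).tendsto a).comp hconv
    exact ((continuous_subtype_val).tendsto (a i)).comp h1

  -- pointwise Cauchy on the open interval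
  have hcauchy : ∀ x ∈ Ioo (-1:ℝ) 1, CauchySeq (fun k => u (φ k) x) := by
    intro x hx
    rw [Metric.cauchySeq_iff]
    intro ε hε
    set r := min (1 + x) (1 - x) with hrdef
    have hr0 : 0 < r := lt_min (by linarith [hx.1]) (by linarith [hx.2])
    set ρ := min (r/2) (r * ε ^ 2 / (66 * (B + 1))) with hρdef
    have hρ0 : 0 < ρ := lt_min (by positivity) (by positivity)
    obtain ⟨i, hi⟩ := hqdense.exists_dist_lt (⟨x, hx⟩ : ↥(Ioo (-1:ℝ) 1)) hρ0
    have hdist : |x - q i| < ρ := by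
      rw [Subtype.dist_eq, Real.dist_eq] at hi
      exact hi
    have hxbandr : -1 + r ≤ x ∧ x ≤ 1 - r := by
      constructor
      · have : r ≤ 1 + x := min_le_left _ _; linarith
      · have : r ≤ 1 - x := min_le_right _ _; linarith
    have hxband : -1 + r/2 ≤ x ∧ x ≤ 1 - r/2 :=
      ⟨by linarith [hxbandr.1], by linarith [hxbandr.2]⟩
    have hqband : -1 + r/2 ≤ q i ∧ q i ≤ 1 - r/2 := by
      have h1 : |x - q i| ≤ r/2 := le_of_lt (lt_of_lt_of_le hdist (min_le_left _ _))
      have h2 := abs_le.1 h1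
      exact ⟨by linarith [hxbandr.1, h2.2], by linarith [hxbandr.2, h2.1]⟩
    have hosc : ∀ n : ℕ, |u n (q i) - u n x| < ε / 3 := by
      intro n
      have h0 := osc_est (hmem n) (hWu n) (by positivity : (0:ℝ) < r/2)
        hxband.1 hxband.2 hqband.1 hqband.2
      have h1 : |q i - x| < r * ε ^ 2 / (66 * (B + 1)) :=
        lt_of_le_of_lt (by rw [abs_sub_comm]) (lt_of_lt_of_le hdist (min_le_right _ _))
      have h2 : B * (|q i - x| / (r/2)) < (ε/3) ^ 2 := by
        have hb1 : B * (|q i - x| / (r/2)) = B * |q i - x| * (2 / r) := by ring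
        rw [hb1]
        have hb2' : B * |q i - x| * (2 / r) ≤ B * (r * ε ^ 2 / (66 * (B + 1))) * (2 / r) := by
          apply mul_le_mul_of_nonneg_right _ (by positivity)
          exact mul_le_mul_of_nonneg_left h1.le hB0
        have hb2 : B * |q i - x| * (2 / r) < B * (r * ε ^ 2 / (66 * (B + 1))) * (2 / r) + ε^2/66 :=
          lt_of_le_of_lt hb2' (lt_add_of_pos_right _ (div_pos (pow_pos hε 2) (by norm_num)))
        have hb3 : B * (r * ε ^ 2 / (66 * (B + 1))) * (2 / r) = (B / (B+1)) * (ε^2 / 33) := by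
          field_simp
          ring
        have hb4 : B / (B + 1) ≤ 1 := by
          rw [div_le_one (by positivity)]; linarith
        have hb5 : (B / (B+1)) * (ε^2/33) ≤ ε^2/33 := by
          have : 0 ≤ ε^2/33 := by positivity
          nlinarith
        have : ε^2/33 + ε^2/66 < (ε/3)^2 := by nlinarith [sq_nonneg ε, hε]
        linarith
      have h3 := lt_of_le_of_lt h0 h2
      exact abs_lt_of_sq_lt_sq'' h3 (by linarith)
    have hc := (hcoord i).cauchySeq
    rw [Metric.cauchySeq_iff] at hc
    obtain ⟨N, hN⟩ := hc (ε/3) (by linarith)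
    refine ⟨N, fun m hm n hn => ?_⟩
    have hq1 := hosc (φ m)
    have hq2 := hosc (φ n)
    have hq3 := hN m hm n hn
    rw [Real.dist_eq] at hq3 ⊢
    have : u (φ m) x - u (φ n) x =
        -(u (φ m) (q i) - u (φ m) x) + (u (φ m) (q i) - u (φ n) (q i))
        + (u (φ n) (q i) - u (φ n) x) := by ring
    rw [this]
    calc |_ + _ + _| ≤ |(-(u (φ m) (q i) - u (φ m) x) + (u (φ m) (q i) - u (φ n) (q i)))|
          + |u (φ n) (q i) - u (φ n) x| := abs_add_le _ _
      _ ≤ |(-(u (φ m) (q i) - u (φ m) x))| + |u (φ m) (q i) - u (φ n) (q i)|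
          + |u (φ n) (q i) - u (φ n) x| := by
            linarith [abs_add_le (-(u (φ m) (q i) - u (φ m) x))
              (u (φ m) (q i) - u (φ n) (q i))]
      _ < ε := by rw [abs_neg]; linarith
  -- limit function
  set v : ℝ → ℝ := fun x => limUnder atTop (fun k => u (φ k) x) with hvdef
  have hv : ∀ x ∈ Ioo (-1:ℝ) 1, Tendsto (fun k => u (φ k) x) atTop (nhds (v x)) := by
    intro x hx
    obtain ⟨l, hl⟩ := cauchySeq_tendsto_of_complete (hcauchy x hx)
    have : v x = l := by rw [hvdef]; exact hl.limUnder_eq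
    rw [this]; exact hl
  have hmeask : ∀ k, AEStronglyMeasurable (u (φ k)) (volume.restrict (Ioo (-1:ℝ) 1)) :=
    fun k => ((hmem (φ k)).contOn).aestronglyMeasurable measurableSet_Ioo
  have hmeasv : AEStronglyMeasurable v (volume.restrict (Ioo (-1:ℝ) 1)) :=
    aestronglyMeasurable_of_tendsto_ae atTop hmeask (by
      rw [ae_restrict_iff' measurableSet_Ioo]
      exact Eventually.of_forall fun x hx => hv x hx)
  have hvfatou := fatou_sq measurableSet_Ioo hB0 hmeasv (fun k => (hmem (φ k)).sq_int)
    (fun k => hIu (φ k)) (fun x hx => hv x hx)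
  refine ⟨φ, hφ, v, hmeasv, hvfatou.1, ?_⟩
  -- integrability of the squared differences
  have hdiffint : ∀ k, IntegrableOn (fun x => (u (φ k) x - v x) ^ 2) (Ioo (-1:ℝ) 1) := by
    intro k
    have hdom : IntegrableOn (fun x => 2 * u (φ k) x ^ 2 + 2 * v x ^ 2) (Ioo (-1:ℝ) 1) :=
      ((hmem (φ k)).sq_int.const_mul 2).add (hvfatou.1.const_mul 2)
    apply Integrable.mono' hdom (asm_sq ((hmeask k).sub hmeasv))
    refine Eventually.of_forall fun x => ?_
    rw [Real.norm_eq_abs, abs_of_nonneg (sq_nonneg _)]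
    simp only [Pi.sub_apply]
    nlinarith [sq_nonneg (u (φ k) x + v x)]
  -- convergence in L²
  rw [Metric.tendsto_atTop]
  intro ε hε
  set δ := min (1/2 : ℝ) ((ε / (704 * (B + 1))) ^ 2) with hδdef
  have hδ0 : 0 < δ := lt_min (by norm_num) (by positivity)
  have hδ2 : δ ≤ 1/2 := min_le_left _ _
  have hsqδ : Real.sqrt δ ≤ ε / (704 * (B + 1)) := by
    have h1 : δ ≤ (ε / (704 * (B + 1))) ^ 2 := min_le_right _ _
    have := Real.sqrt_le_sqrt h1
    rwa [Real.sqrt_sq (by positivity)] at this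
  have htails : 352 * B * Real.sqrt δ ≤ ε / 2 := by
    have h2 : 352 * B * Real.sqrt δ ≤ 352 * B * (ε / (704 * (B + 1))) :=
      mul_le_mul_of_nonneg_left hsqδ (by positivity)
    refine le_trans h2 ?_
    rw [show 352 * B * (ε / (704 * (B + 1))) = 352 * B * ε / (704 * (B + 1)) by ring,
      div_le_div_iff₀ (by positivity) (by norm_num : (0:ℝ) < 2)]
    nlinarith [hε.le, hB0]
  have hs1I : Ioo (-1:ℝ) (-1 + δ) ⊆ Ioo (-1:ℝ) 1 := fun t ht => ⟨ht.1, by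
    have := ht.2; linarith⟩
  have hs2I : Ico (-1 + δ) (1 - δ) ⊆ Ioo (-1:ℝ) 1 := fun t ht =>
    ⟨by linarith [ht.1], by linarith [ht.2]⟩
  have hs3I : Ico (1 - δ) (1:ℝ) ⊆ Ioo (-1:ℝ) 1 := fun t ht => ⟨by linarith [ht.1], ht.2⟩
  have hs3I' : Ioo (1 - δ) (1:ℝ) ⊆ Ioo (-1:ℝ) 1 := fun t ht => ⟨by linarith [ht.1], ht.2⟩
  have hC44 : (0:ℝ) ≤ 44 * B * Real.sqrt δ :=
    mul_nonneg (mul_nonneg (by norm_num) hB0) (Real.sqrt_nonneg _)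
  -- Fatou on the tails
  have hT3 := fatou_sq measurableSet_Ioo hC44
    (hmeasv.mono_measure (Measure.restrict_mono hs3I' le_rfl))
    (fun k => (hmem (φ k)).sq_int.mono_set hs3I')
    (fun k => tailR (hmem (φ k)) hδ0 hδ2 (hIu _) (hWu _))
    (fun x hx => hv x (hs3I' hx))
  have hT1 := fatou_sq measurableSet_Ioo hC44
    (hmeasv.mono_measure (Measure.restrict_mono hs1I le_rfl))
    (fun k => (hmem (φ k)).sq_int.mono_set hs1I)
    (fun k => tailL (hmem (φ k)) hδ0 hδ2 (hIu _) (hWu _))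
    (fun x hx => hv x (hs1I hx))
  -- tail bounds for the differences
  have htail3 : ∀ k, ∫ x in Ico (1 - δ) (1:ℝ), (u (φ k) x - v x) ^ 2
      ≤ 176 * B * Real.sqrt δ := by
    intro k
    rw [integral_Ico_eq_integral_Ioo]
    have hint2 : IntegrableOn (fun x => 2 * u (φ k) x ^ 2 + 2 * v x ^ 2) (Ioo (1 - δ) 1) :=
      (((hmem (φ k)).sq_int.mono_set hs3I').const_mul 2).add (hT3.1.const_mul 2)
    have hb1 := setIntegral_mono_on ((hdiffint k).mono_set hs3I') hint2 measurableSet_Ioo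
      (fun x _ => by nlinarith [sq_nonneg (u (φ k) x + v x)])
    have hb2 : ∫ x in Ioo (1 - δ) 1, (2 * u (φ k) x ^ 2 + 2 * v x ^ 2)
        = 2 * (∫ x in Ioo (1 - δ) 1, u (φ k) x ^ 2) + 2 * ∫ x in Ioo (1 - δ) 1, v x ^ 2 := by
      rw [integral_add (((hmem (φ k)).sq_int.mono_set hs3I').const_mul 2)
        (hT3.1.const_mul 2), integral_const_mul, integral_const_mul]
    have hb3 := tailR (hmem (φ k)) hδ0 hδ2 (hIu (φ k)) (hWu (φ k))
    have hb4 := hT3.2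
    rw [hb2] at hb1
    linarith
  have htail1 : ∀ k, ∫ x in Ioo (-1:ℝ) (-1 + δ), (u (φ k) x - v x) ^ 2
      ≤ 176 * B * Real.sqrt δ := by
    intro k
    have hint2 : IntegrableOn (fun x => 2 * u (φ k) x ^ 2 + 2 * v x ^ 2) (Ioo (-1:ℝ) (-1 + δ)) :=
      (((hmem (φ k)).sq_int.mono_set hs1I).const_mul 2).add (hT1.1.const_mul 2)
    have hb1 := setIntegral_mono_on ((hdiffint k).mono_set hs1I) hint2 measurableSet_Ioo
      (fun x _ => by nlinarith [sq_nonneg (u (φ k) x + v x)])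
    have hb2 : ∫ x in Ioo (-1:ℝ) (-1 + δ), (2 * u (φ k) x ^ 2 + 2 * v x ^ 2)
        = 2 * (∫ x in Ioo (-1:ℝ) (-1 + δ), u (φ k) x ^ 2)
          + 2 * ∫ x in Ioo (-1:ℝ) (-1 + δ), v x ^ 2 := by
      rw [integral_add (((hmem (φ k)).sq_int.mono_set hs1I).const_mul 2)
        (hT1.1.const_mul 2), integral_const_mul, integral_const_mul]
    have hb3 := tailL (hmem (φ k)) hδ0 hδ2 (hIu (φ k)) (hWu (φ k))
    have hb4 := hT1.2
    rw [hb2] at hb1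
    linarith
  -- dominated convergence on the middle
  set Mδ := 2 * B + 4 * B / δ with hMδdef
  have hMδ0 : 0 ≤ Mδ := add_nonneg (by linarith) (div_nonneg (by linarith) hδ0.le)
  have hres2 : volume.restrict (Ico (-1 + δ) (1 - δ)) ≤ volume.restrict (Ioo (-1:ℝ) 1) :=
    Measure.restrict_mono hs2I le_rfl
  have hu2bound : ∀ k x, x ∈ Ico (-1 + δ) (1 - δ) → u (φ k) x ^ 2 ≤ Mδ := fun k x hx =>
    sq_bound_mid (hmem _) hδ0 hδ2 (hIu _) (hWu _) hx.1 hx.2.le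
  have hv2bound : ∀ x ∈ Ico (-1 + δ) (1 - δ), v x ^ 2 ≤ Mδ := fun x hx =>
    le_of_tendsto ((hv x (hs2I hx)).pow 2)
      (Eventually.of_forall fun k => hu2bound k x hx)
  have hdct := tendsto_integral_of_dominated_convergence
    (μ := volume.restrict (Ico (-1 + δ) (1 - δ)))
    (F := fun k x => (u (φ k) x - v x) ^ 2) (f := fun _ => (0:ℝ))
    (bound := fun _ => 4 * Mδ)
    (fun k => asm_sq (((hmeask k).mono_measure hres2).sub (hmeasv.mono_measure hres2)))
    (integrableOn_const measure_Ico_lt_top.ne)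
    (fun k => by
      rw [ae_restrict_iff' measurableSet_Ico]
      refine Eventually.of_forall fun x hx => ?_
      rw [Real.norm_eq_abs, abs_of_nonneg (sq_nonneg _)]
      show (u (φ k) x - v x) ^ 2 ≤ 4 * Mδ
      nlinarith [hu2bound k x hx, hv2bound x hx, sq_nonneg (u (φ k) x + v x)])
    (by
      rw [ae_restrict_iff' measurableSet_Ico]
      refine Eventually.of_forall fun x hx => ?_
      have h1 : Tendsto (fun k => u (φ k) x - v x) atTop (nhds 0) := by
        have := (hv x (hs2I hx)).sub (tendsto_const_nhds (x := v x))
        simpa using this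
      have h2 := h1.pow 2
      simpa using h2)
  rw [integral_zero] at hdct
  obtain ⟨N, hN⟩ := Metric.tendsto_atTop.1 hdct (ε/2) (by linarith)
  refine ⟨N, fun k hk => ?_⟩
  have hmid : ∫ x in Ico (-1 + δ) (1 - δ), (u (φ k) x - v x) ^ 2 < ε/2 := by
    have := hN k hk
    rwa [Real.dist_eq, sub_zero, abs_of_nonneg (setIntegral_nonneg measurableSet_Ico
      fun x _ => sq_nonneg _)] at this
  -- split the integral
  have hunion : Ioo (-1:ℝ) 1
      = Ioo (-1:ℝ) (-1 + δ) ∪ (Ico (-1 + δ) (1 - δ) ∪ Ico (1 - δ) (1:ℝ)) := by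
    ext t
    simp only [mem_Ioo, mem_union, mem_Ico]
    constructor
    · rintro ⟨h1, h2⟩
      rcases lt_or_ge t (-1 + δ) with hc | hc
      · exact Or.inl ⟨h1, hc⟩
      rcases lt_or_ge t (1 - δ) with hc2 | hc2
      · exact Or.inr (Or.inl ⟨hc, hc2⟩)
      · exact Or.inr (Or.inr ⟨hc2, h2⟩)
    · rintro (⟨h1, h2⟩ | ⟨h1, h2⟩ | ⟨h1, h2⟩) <;> constructor <;> linarith
  have hd12 : Disjoint (Ioo (-1:ℝ) (-1 + δ))
      (Ico (-1 + δ) (1 - δ) ∪ Ico (1 - δ) (1:ℝ)) := by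
    rw [Set.disjoint_left]
    rintro t ht (ht2 | ht3)
    · exact absurd ht.2 (not_lt.2 ht2.1)
    · have h1 := ht.2
      have h2 := ht3.1
      linarith
  have hd23 : Disjoint (Ico (-1 + δ) (1 - δ)) (Ico (1 - δ) (1:ℝ)) := by
    rw [Set.disjoint_left]
    rintro t ht ht3
    exact absurd ht.2 (not_lt.2 ht3.1)
  have hsplit : ∫ x in Ioo (-1:ℝ) 1, (u (φ k) x - v x) ^ 2
      = (∫ x in Ioo (-1:ℝ) (-1 + δ), (u (φ k) x - v x) ^ 2)
        + ((∫ x in Ico (-1 + δ) (1 - δ), (u (φ k) x - v x) ^ 2)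
          + ∫ x in Ico (1 - δ) (1:ℝ), (u (φ k) x - v x) ^ 2) := by
    rw [hunion, setIntegral_union hd12 (measurableSet_Ico.union measurableSet_Ico)
      ((hdiffint k).mono_set (hunion ▸ subset_union_left))
      ((hdiffint k).mono_set (hunion ▸ subset_union_right)),
      setIntegral_union hd23 measurableSet_Ico
      ((hdiffint k).mono_set (hunion ▸ (subset_union_left.trans subset_union_right)))
      ((hdiffint k).mono_set (hunion ▸ (subset_union_right.trans subset_union_right)))]
  rw [Real.dist_eq, sub_zero, abs_of_nonneg (setIntegral_nonneg measurableSet_Ioo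
    fun x _ => sq_nonneg _), hsplit]
  have h1 := htail1 k
  have h3 := htail3 k
  linarith
end
end

section
/- (Strong maximum principle for linear cooperative degenerate parabolic systems) Let T>0, Q_T=(0,T)×(−1,1), and let k₁,k₂>0. Let a,b,c,d:Q_T→ℝ be bounded functions with b(t,x)≥0 and c(t,x)≥0 on Q_T. Let u,v be continuous on [0,T]×[−1,1], of class C^{1,2} on Q_T, satisfy u≤0 and v≤0 on Q_T, and satisfy on Q_T the differential inequalities ∂ₜu − k₁·∂ₓ((1−x²)∂ₓu) ≤ a·u + b·v and ∂ₜv − k₂·∂ₓ((1−x²)∂ₓv) ≤ c·u + d·v. If there exists (t₁,x₁)∈Q_T with u(t₁,x₁)=0, then u(t,x)=0 for all t∈(0,t₁] and all x∈(−1,1); analogously, if there exists (t₂,x₂)∈Q_T with v(t₂,x₂)=0, then v(t,x)=0 for all t∈(0,t₂] and all x∈(−1,1). -/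
open Set Filter

noncomputable section

/-- The parabolic cylinder `Q_T = (0,T) × (-1,1)` as a subset of `ℝ × ℝ`. -/
def cylQT (T : ℝ) : Set (ℝ × ℝ) := Ioo (0:ℝ) T ×ˢ Ioo (-1:ℝ) 1

section StrongMaxAux
open Real Topology



/-- If `f` has derivative `d` at `t` and `f s ≤ f t` for `s` in a left neighborhood,
then `d ≥ 0`. -/
lemma deriv_nonneg_of_left_max {f : ℝ → ℝ} {t η d : ℝ} (hη : 0 < η)
    (hd : HasDerivAt f d t) (hmax : ∀ s ∈ Ico (t - η) t, f s ≤ f t) : 0 ≤ d := by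
  have h := hasDerivAt_iff_tendsto_slope.1 hd
  have h' : Tendsto (slope f t) (𝓝[<] t) (𝓝 d) :=
    h.mono_left (nhdsWithin_mono _ (fun y hy => ne_of_lt hy))
  refine ge_of_tendsto h' ?_
  filter_upwards [Ico_mem_nhdsLT_of_mem (show t ∈ Ioc (t-η) t from ⟨by linarith, le_refl t⟩)] with s hs
  rcases hs with ⟨hs1, hs2⟩
  have hle : f s ≤ f t := hmax s ⟨hs1, hs2⟩
  have heq : slope f t s = (f s - f t) / (s - t) := by rw [slope_def_field]
  rw [heq]
  exact div_nonneg_of_nonpos (by linarith) (by linarith)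

/-- Second derivative test: right-sided max with vanishing first derivative gives
nonpositive second derivative. -/
lemma second_deriv_nonpos_of_right_max {f f' : ℝ → ℝ} {x η d : ℝ} (hη : 0 < η)
    (hf : ∀ y ∈ Icc x (x + η), HasDerivAt f (f' y) y)
    (hf' : HasDerivAt f' d x) (h0 : f' x = 0)
    (hmax : ∀ y ∈ Icc x (x + η), f y ≤ f x) : d ≤ 0 := by
  by_contra hd
  push_neg at hd
  -- slope of f' tends to d > 0, so f' > 0 just right of x
  have h := hasDerivAt_iff_tendsto_slope.1 hf'
  have h' : Tendsto (slope f' x) (𝓝[>] x) (𝓝 d) :=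
    h.mono_left (nhdsWithin_mono _ (fun y hy => ne_of_gt hy))
  have hev : ∀ᶠ y in 𝓝[>] x, 0 < slope f' x y := h'.eventually (eventually_gt_nhds hd)
  rw [eventually_iff, mem_nhdsGT_iff_exists_Ioo_subset] at hev
  obtain ⟨u, hu, hsub⟩ := hev
  set b := min u (x + η) with hb
  have hxb : x < b := lt_min hu (by linarith)
  have hbx : b ≤ x + η := min_le_right _ _
  have hpos : ∀ y ∈ Ioo x b, 0 < f' y := by
    intro y hy
    have : 0 < slope f' x y := hsub ⟨hy.1, lt_of_lt_of_le hy.2 (min_le_left _ _)⟩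
    rw [slope_def_field, h0, sub_zero] at this
    have hyx : 0 < y - x := by linarith [hy.1]
    have := mul_pos this hyx
    calc (0:ℝ) < (f' y / (y - x)) * (y - x) := this
    _ = f' y := by field_simp
  -- MVT on [x, b]
  have hcont : ContinuousOn f (Icc x b) := by
    intro y hy
    exact ((hf y ⟨hy.1, le_trans hy.2 hbx⟩).continuousAt).continuousWithinAt
  have hdiff : ∀ y ∈ Ioo x b, HasDerivAt f (f' y) y := fun y hy =>
    hf y ⟨le_of_lt hy.1, le_trans (le_of_lt hy.2) hbx⟩
  obtain ⟨c, hc, hceq⟩ := exists_hasDerivAt_eq_slope f f' hxb hcont hdiff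
  have h1 : 0 < f' c := hpos c hc
  have h2 : f b ≤ f x := hmax b ⟨le_of_lt hxb, hbx⟩
  rw [hceq] at h1
  have : 0 < f b - f x := by
    have hbx0 : 0 < b - x := by linarith
    have := mul_pos h1 hbx0
    calc (0:ℝ) < ((f b - f x)/(b-x)) * (b - x) := this
    _ = f b - f x := by field_simp
  linarith


/-- Exponent used in the tilted barrier. -/
def Bf (k sl x : ℝ) : ℝ :=
  -(1/2) * Real.log (1 - x^2) - sl/(4*k) * (Real.log (1+x) - Real.log (1-x))

/-- First derivative of `Bf`. -/
def Bf1 (k sl x : ℝ) : ℝ := (2*k*x - sl)/(2*k*(1-x^2))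

/-- Second derivative of `Bf`. -/
def Bf2 (k sl x : ℝ) : ℝ :=
  (2*k*(2*k*(1-x^2)) - (2*k*x - sl)*(2*k*(-(2*x))))/(2*k*(1-x^2))^2

lemma hasDerivAt_Bf {k x : ℝ} (sl : ℝ) (hk : 0 < k) (hx1 : -1 < x) (hx2 : x < 1) :
    HasDerivAt (fun y => Bf k sl y) (Bf1 k sl x) x := by
  have h1 : (0:ℝ) < 1 - x^2 := by nlinarith
  have h2 : (0:ℝ) < 1 + x := by linarith
  have h3 : (0:ℝ) < 1 - x := by linarith
  have d1 : HasDerivAt (fun y : ℝ => 1 - y^2) (-(2*x)) x := by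
    simpa using ((hasDerivAt_pow 2 x).const_sub 1)
  have dlog1 : HasDerivAt (fun y : ℝ => Real.log (1 - y^2)) ((1-x^2)⁻¹ * (-(2*x))) x :=
    by exact (Real.hasDerivAt_log (ne_of_gt h1)).comp x d1
  have d2 : HasDerivAt (fun y : ℝ => 1 + y) (1:ℝ) x := by
    simpa using (hasDerivAt_id x).const_add 1
  have dlog2 : HasDerivAt (fun y : ℝ => Real.log (1 + y)) ((1+x)⁻¹ * 1) x :=
    (Real.hasDerivAt_log (ne_of_gt h2)).comp x d2
  have d3 : HasDerivAt (fun y : ℝ => 1 - y) (-1:ℝ) x := by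
    simpa using (hasDerivAt_id x).const_sub 1
  have dlog3 : HasDerivAt (fun y : ℝ => Real.log (1 - y)) ((1-x)⁻¹ * (-1)) x :=
    (Real.hasDerivAt_log (ne_of_gt h3)).comp x d3
  have := ((dlog1.const_mul (-(1/2):ℝ)).fun_sub
    (((dlog2.fun_sub dlog3)).const_mul (sl/(4*k))))
  convert this using 1
  · rfl
  · rfl
  · rfl
  unfold Bf1
  have hk' : (k:ℝ) ≠ 0 := ne_of_gt hk
  field_simp
  ring

lemma hasDerivAt_Bf1 {k x : ℝ} (sl : ℝ) (hk : 0 < k) (hx1 : -1 < x) (hx2 : x < 1) :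
    HasDerivAt (fun y => Bf1 k sl y) (Bf2 k sl x) x := by
  have h1 : (0:ℝ) < 1 - x^2 := by nlinarith
  have hden : 2*k*(1-x^2) ≠ 0 := by positivity
  have dnum : HasDerivAt (fun y : ℝ => 2*k*y - sl) (2*k) x := by
    simpa using ((hasDerivAt_id x).const_mul (2*k)).sub_const sl
  have dden : HasDerivAt (fun y : ℝ => 2*k*(1-y^2)) (2*k*(-(2*x))) x := by
    have : HasDerivAt (fun y : ℝ => 1 - y^2) (-(2*x)) x := by
      simpa using ((hasDerivAt_pow 2 x).const_sub 1)
    exact this.const_mul (2*k)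
  simpa [Bf1, Bf2] using dnum.fun_div dden hden

/-- The tilted barrier function. -/
def Wf (ε γ lam sl t₀ x₀ k : ℝ) (t x : ℝ) : ℝ :=
  -(ε * Real.exp (-(γ*(t - t₀))) * Real.exp (Bf k sl x) *
    Real.cos (lam * (x - x₀ - sl*(t - t₀))))

/-- Spatial derivative of the barrier. -/
def Wfx (ε γ lam sl t₀ x₀ k : ℝ) (t x : ℝ) : ℝ :=
  -(ε * Real.exp (-(γ*(t - t₀))) * Real.exp (Bf k sl x) *
    (Bf1 k sl x * Real.cos (lam * (x - x₀ - sl*(t - t₀)))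
      - lam * Real.sin (lam * (x - x₀ - sl*(t - t₀)))))

/-- Time derivative of the barrier. -/
def Wft (ε γ lam sl t₀ x₀ k : ℝ) (t x : ℝ) : ℝ :=
  ε * Real.exp (-(γ*(t - t₀))) * Real.exp (Bf k sl x) *
    (γ * Real.cos (lam * (x - x₀ - sl*(t - t₀)))
      - lam * sl * Real.sin (lam * (x - x₀ - sl*(t - t₀))))

/-- Second spatial derivative of the barrier. -/
def Wfxx (ε γ lam sl t₀ x₀ k : ℝ) (t x : ℝ) : ℝ :=
  -(ε * Real.exp (-(γ*(t - t₀))) * Real.exp (Bf k sl x) *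
    (((Bf1 k sl x)^2 + Bf2 k sl x - lam^2) * Real.cos (lam * (x - x₀ - sl*(t - t₀)))
      - 2 * Bf1 k sl x * lam * Real.sin (lam * (x - x₀ - sl*(t - t₀)))))

lemma hasDerivAt_Wf_t (ε γ lam sl t₀ x₀ k t x : ℝ) :
    HasDerivAt (fun s => Wf ε γ lam sl t₀ x₀ k s x) (Wft ε γ lam sl t₀ x₀ k t x) t := by
  have h1 : HasDerivAt (fun s : ℝ => -(γ*(s - t₀))) (-γ) t := by
    simpa using (((hasDerivAt_id t).sub_const t₀).const_mul γ).fun_neg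
  have h2 := h1.exp
  have h3 : HasDerivAt (fun s : ℝ => lam * (x - x₀ - sl*(s - t₀))) (lam * (-sl)) t := by
    have : HasDerivAt (fun s : ℝ => x - x₀ - sl*(s - t₀)) (-sl) t := by
      simpa using (((hasDerivAt_id t).sub_const t₀).const_mul sl).const_sub (x - x₀)
    exact this.const_mul lam
  have h4 := h3.cos
  have h5 := (h2.fun_mul h4).const_mul (ε * Real.exp (Bf k sl x))
  have h6 := h5.fun_neg
  convert h6 using 1
  · rfl
  · rfl
  · funext s; unfold Wf; ring
  · unfold Wft; ring

lemma hasDerivAt_Wf_x (ε γ lam sl t₀ x₀ : ℝ) {k t x : ℝ}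
    (hk : 0 < k) (hx1 : -1 < x) (hx2 : x < 1) :
    HasDerivAt (fun y => Wf ε γ lam sl t₀ x₀ k t y) (Wfx ε γ lam sl t₀ x₀ k t x) x := by
  have hB := (hasDerivAt_Bf sl hk hx1 hx2).exp
  have h3 : HasDerivAt (fun y : ℝ => lam * (y - x₀ - sl*(t - t₀))) lam x := by
    simpa using (((hasDerivAt_id x).sub_const x₀).sub_const (sl*(t-t₀))).const_mul lam
  have h4 := h3.cos
  have h5 := (hB.fun_mul h4).const_mul (ε * Real.exp (-(γ*(t - t₀))))
  have h6 := h5.fun_neg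
  convert h6 using 1
  · rfl
  · rfl
  · funext y; unfold Wf; ring
  · unfold Wfx; ring

lemma hasDerivAt_Wf_xx (ε γ lam sl t₀ x₀ : ℝ) {k t x : ℝ}
    (hk : 0 < k) (hx1 : -1 < x) (hx2 : x < 1) :
    HasDerivAt (fun y => Wfx ε γ lam sl t₀ x₀ k t y) (Wfxx ε γ lam sl t₀ x₀ k t x) x := by
  have hB := (hasDerivAt_Bf sl hk hx1 hx2).exp
  have hB1 := hasDerivAt_Bf1 sl hk hx1 hx2
  have h3 : HasDerivAt (fun y : ℝ => lam * (y - x₀ - sl*(t - t₀))) lam x := by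
    simpa using (((hasDerivAt_id x).sub_const x₀).sub_const (sl*(t-t₀))).const_mul lam
  have h4 := h3.cos
  have h4' := h3.sin
  have hinner := (hB1.fun_mul h4).fun_sub (h4'.const_mul lam)
  have h5 := (hB.fun_mul hinner).const_mul (ε * Real.exp (-(γ*(t - t₀))))
  have h6 := h5.fun_neg
  convert h6 using 1
  · rfl
  · rfl
  · funext y; unfold Wfx; ring
  · unfold Wfxx; ring

lemma continuousOn_Bf (k sl : ℝ) :
    ContinuousOn (fun x => Bf k sl x) (Ioo (-1:ℝ) 1) := by
  have h1 : ContinuousOn (fun x : ℝ => Real.log (1 - x^2)) (Ioo (-1:ℝ) 1) := by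
    apply ContinuousOn.log (by fun_prop)
    intro x hx
    rcases hx with ⟨hx1, hx2⟩
    nlinarith
  have h2 : ContinuousOn (fun x : ℝ => Real.log (1 + x)) (Ioo (-1:ℝ) 1) := by
    apply ContinuousOn.log (by fun_prop)
    intro x hx; rcases hx with ⟨hx1, hx2⟩; intro h; linarith [h]
  have h3 : ContinuousOn (fun x : ℝ => Real.log (1 - x)) (Ioo (-1:ℝ) 1) := by
    apply ContinuousOn.log (by fun_prop)
    intro x hx; rcases hx with ⟨hx1, hx2⟩; intro h; linarith [h]
  unfold Bf
  exact (h1.const_smul (-(1/2):ℝ)).sub ((h2.sub h3).const_smul (sl/(4*k)))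

lemma continuousOn_Gf (k sl lam : ℝ) (hk : 0 < k) {s : Set ℝ}
    (hs : ∀ x ∈ s, -1 < x ∧ x < 1) :
    ContinuousOn
      (fun x => k*(1-x^2)*((Bf1 k sl x)^2 + Bf2 k sl x - lam^2) - 2*k*x*(Bf1 k sl x)) s := by
  have hden : ∀ x ∈ s, 2*k*(1-x^2) ≠ 0 := by
    intro x hx
    obtain ⟨h1, h2⟩ := hs x hx
    have : (0:ℝ) < 1 - x^2 := by nlinarith
    positivity
  have hB1 : ContinuousOn (fun x => Bf1 k sl x) s := by
    unfold Bf1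
    exact ContinuousOn.div (by fun_prop) (by fun_prop) hden
  have hB2 : ContinuousOn (fun x => Bf2 k sl x) s := by
    unfold Bf2
    exact ContinuousOn.div (by fun_prop) (by fun_prop)
      (fun x hx => pow_ne_zero 2 (hden x hx))
  exact ((Continuous.continuousOn (by fun_prop)).mul
      (((hB1.pow 2).add hB2).sub continuousOn_const)).sub
    ((Continuous.continuousOn (by fun_prop : Continuous fun x : ℝ => 2*k*x)).mul hB1)

lemma continuousOn_Wf (ε γ lam sl t₀ x₀ k : ℝ) :
    ContinuousOn (fun p : ℝ × ℝ => Wf ε γ lam sl t₀ x₀ k p.1 p.2)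
      {p : ℝ × ℝ | -1 < p.2 ∧ p.2 < 1} := by
  have hBcomp : ContinuousOn (fun p : ℝ × ℝ => Bf k sl p.2)
      {p : ℝ × ℝ | -1 < p.2 ∧ p.2 < 1} := by
    apply (continuousOn_Bf k sl).comp continuous_snd.continuousOn
    intro p hp
    exact ⟨hp.1, hp.2⟩
  have hexp : ContinuousOn (fun p : ℝ × ℝ => Real.exp (Bf k sl p.2))
      {p : ℝ × ℝ | -1 < p.2 ∧ p.2 < 1} := Real.continuous_exp.comp_continuousOn hBcomp
  have c1 : Continuous (fun p : ℝ × ℝ => ε * Real.exp (-(γ*(p.1 - t₀)))) := by fun_prop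
  have c3 : Continuous (fun p : ℝ × ℝ => Real.cos (lam*(p.2 - x₀ - sl*(p.1 - t₀)))) := by
    fun_prop
  unfold Wf
  exact (((c1.continuousOn.mul hexp)).mul c3.continuousOn).neg

lemma barrier_ineq (ε γ lam sl t₀ x₀ M k t x : ℝ) (hk : 0 < k) (hε : 0 ≤ ε)
    (hx1 : -1 < x) (hx2 : x < 1)
    (hcos : 0 ≤ Real.cos (lam * (x - x₀ - sl*(t - t₀))))
    (hG : 0 ≤ γ - M +
      (k*(1-x^2)*((Bf1 k sl x)^2 + Bf2 k sl x - lam^2) - 2*k*x*(Bf1 k sl x))) :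
    -(M * Wf ε γ lam sl t₀ x₀ k t x) ≤
      Wft ε γ lam sl t₀ x₀ k t x
        - k * (-(2*x) * Wfx ε γ lam sl t₀ x₀ k t x
          + (1-x^2) * Wfxx ε γ lam sl t₀ x₀ k t x) := by
  have h1 : (0:ℝ) < 1 - x^2 := by nlinarith
  have hcanc : 2*k*(1-x^2) * Bf1 k sl x = 2*k*x - sl := by
    unfold Bf1; field_simp
  have key : Wft ε γ lam sl t₀ x₀ k t x
        - k * (-(2*x) * Wfx ε γ lam sl t₀ x₀ k t x
          + (1-x^2) * Wfxx ε γ lam sl t₀ x₀ k t x)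
        + M * Wf ε γ lam sl t₀ x₀ k t x
      = ε * Real.exp (-(γ*(t - t₀))) * Real.exp (Bf k sl x) *
          Real.cos (lam * (x - x₀ - sl*(t - t₀))) *
          (γ - M + (k*(1-x^2)*((Bf1 k sl x)^2 + Bf2 k sl x - lam^2)
            - 2*k*x*(Bf1 k sl x))) := by
    unfold Wft Wfx Wfxx Wf
    linear_combination (-(ε * Real.exp (-(γ*(t - t₀))) * Real.exp (Bf k sl x) * lam *
      Real.sin (lam * (x - x₀ - sl*(t - t₀))))) * hcanc
  have hpos : 0 ≤ ε * Real.exp (-(γ*(t - t₀))) * Real.exp (Bf k sl x) *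
      Real.cos (lam * (x - x₀ - sl*(t - t₀))) *
      (γ - M + (k*(1-x^2)*((Bf1 k sl x)^2 + Bf2 k sl x - lam^2)
        - 2*k*x*(Bf1 k sl x))) := by
    apply mul_nonneg (mul_nonneg (mul_nonneg (mul_nonneg hε (Real.exp_pos _).le)
      (Real.exp_pos _).le) hcos) hG
  linarith


set_option maxHeartbeats 2000000 in
lemma scalar_neg_propagates
    (T k M : ℝ) (hk : 0 < k) (hM : 0 < M)
    (aco u ut ux uxx : ℝ → ℝ → ℝ)
    (ha : ∀ t x : ℝ, (t, x) ∈ cylQT T → |aco t x| ≤ M)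
    (hu_cont : ContinuousOn (fun p : ℝ × ℝ => u p.1 p.2) (Icc (0:ℝ) T ×ˢ Icc (-1:ℝ) 1))
    (hut : ∀ t x : ℝ, (t, x) ∈ cylQT T → HasDerivAt (fun s => u s x) (ut t x) t)
    (hux : ∀ t x : ℝ, (t, x) ∈ cylQT T → HasDerivAt (fun y => u t y) (ux t x) x)
    (huxx : ∀ t x : ℝ, (t, x) ∈ cylQT T → HasDerivAt (fun y => ux t y) (uxx t x) x)
    (hu_nonpos : ∀ t x : ℝ, (t, x) ∈ cylQT T → u t x ≤ 0)
    (hineq : ∀ t x : ℝ, (t, x) ∈ cylQT T →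
      ut t x - k * (-(2 * x) * ux t x + (1 - x ^ 2) * uxx t x) ≤ aco t x * u t x)
    {t₀ x₀ t₁ x₁ : ℝ} (h0 : (t₀, x₀) ∈ cylQT T) (h1 : (t₁, x₁) ∈ cylQT T)
    (hlt : t₀ < t₁) (hneg : u t₀ x₀ < 0) : u t₁ x₁ < 0 := by
  simp only [cylQT, Set.mem_prod, Set.mem_Ioo] at h0 h1
  obtain ⟨⟨ht00, ht0T⟩, hx01, hx02⟩ := h0
  obtain ⟨⟨ht10, ht1T⟩, hx11, hx12⟩ := h1
  have hmemQ : ∀ t x : ℝ, 0 < t → t < T → -1 < x → x < 1 → (t, x) ∈ cylQT T := by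
    intro t x h1' h2' h3' h4'
    simp only [cylQT, Set.mem_prod, Set.mem_Ioo]
    exact ⟨⟨h1', h2'⟩, h3', h4'⟩
  have htdiff : 0 < t₁ - t₀ := by linarith
  set sl : ℝ := (x₁ - x₀) / (t₁ - t₀) with hsl
  set m : ℝ := -(u t₀ x₀) / 2 with hm
  have hm0 : 0 < m := by rw [hm]; linarith
  -- continuity at (t₀,x₀): u < -m nearby
  have hmem : Icc (0:ℝ) T ×ˢ Icc (-1:ℝ) 1 ∈ 𝓝 ((t₀, x₀) : ℝ × ℝ) :=
    prod_mem_nhds (Icc_mem_nhds ht00 ht0T) (Icc_mem_nhds hx01 hx02)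
  have hCA := hu_cont.continuousAt hmem
  have hev := hCA (Iio_mem_nhds (show u t₀ x₀ < -m by rw [hm]; linarith))
  rw [Filter.mem_map, Metric.mem_nhds_iff] at hev
  obtain ⟨δ₀, hδ₀, hball⟩ := hev
  have hbot : ∀ x' : ℝ, |x' - x₀| < δ₀ → u t₀ x' < -m := by
    intro x' hx'
    have : ((t₀, x') : ℝ × ℝ) ∈ Metric.ball ((t₀, x₀) : ℝ × ℝ) δ₀ := by
      rw [Metric.mem_ball, Prod.dist_eq]
      simp only [dist_self]
      rw [Real.dist_eq]
      exact max_lt hδ₀ hx'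
    exact hball this
  set ρ : ℝ := max |x₀| |x₁| with hρ
  have hρ1 : ρ < 1 := max_lt (abs_lt.2 ⟨hx01, hx02⟩) (abs_lt.2 ⟨hx11, hx12⟩)
  have hρ0 : 0 ≤ ρ := le_trans (abs_nonneg x₀) (le_max_left _ _)
  set δ : ℝ := min (δ₀ / 2) ((1 - ρ) / 4) with hδdef
  have hδ : 0 < δ := lt_min (by linarith) (by linarith)
  have hδδ₀ : δ < δ₀ := lt_of_le_of_lt (min_le_left _ _) (by linarith)
  set ρ' : ℝ := (1 + ρ) / 2 with hρ'
  have hρ'1 : ρ' < 1 := by rw [hρ']; linarith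
  have hρ'0 : 0 < ρ' := by rw [hρ']; linarith
  have hρδ : ρ + δ ≤ ρ' := by
    have : δ ≤ (1 - ρ) / 4 := min_le_right _ _
    rw [hρ']; linarith
  -- center line bound
  have hcbound : ∀ t : ℝ, t₀ ≤ t → t ≤ t₁ → |x₀ + sl * (t - t₀)| ≤ ρ := by
    intro t ht1 ht2
    have hθ0 : 0 ≤ (t - t₀) / (t₁ - t₀) := div_nonneg (by linarith) htdiff.le
    have hθ1 : (t - t₀) / (t₁ - t₀) ≤ 1 := by
      rw [div_le_one htdiff]; linarith
    have hrep : x₀ + sl * (t - t₀)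
        = (1 - (t - t₀) / (t₁ - t₀)) * x₀ + ((t - t₀) / (t₁ - t₀)) * x₁ := by
      rw [hsl]; field_simp; ring
    rw [hrep]
    have h₀a : |x₀| ≤ ρ := le_max_left _ _
    have h₁a : |x₁| ≤ ρ := le_max_right _ _
    have h₀b := abs_le.1 h₀a
    have h₁b := abs_le.1 h₁a
    rw [abs_le]
    constructor <;> nlinarith [h₀b.1, h₀b.2, h₁b.1, h₁b.2]
  set lam : ℝ := Real.pi / (2 * δ) with hlamdef
  have hlam0 : 0 < lam := by rw [hlamdef]; positivity
  have hlamδ : lam * δ = Real.pi / 2 := by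
    rw [hlamdef]; field_simp
  -- bounds for G and B on the strip
  have hsubIoo : Icc (-ρ') ρ' ⊆ Ioo (-1 : ℝ) 1 := by
    intro x hx
    rcases hx with ⟨hxa, hxb⟩
    constructor <;> [linarith; linarith]
  obtain ⟨CG, hCG⟩ := (isCompact_Icc (a := -ρ') (b := ρ')).exists_bound_of_continuousOn
    (continuousOn_Gf k sl lam hk (fun x hx => ⟨(hsubIoo hx).1, (hsubIoo hx).2⟩))
  obtain ⟨CB, hCB⟩ := (isCompact_Icc (a := -ρ') (b := ρ')).exists_bound_of_continuousOn
    ((continuousOn_Bf k sl).mono hsubIoo)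
  set γ : ℝ := M + CG with hγ
  set ε : ℝ := m * Real.exp (-CB) with hε
  have hε0 : 0 < ε := by rw [hε]; positivity
  have hεB : ∀ x : ℝ, x ∈ Icc (-ρ') ρ' → ε * Real.exp (Bf k sl x) ≤ m := by
    intro x hx
    have h1 : Bf k sl x ≤ CB := by
      have := hCB x hx
      rw [Real.norm_eq_abs] at this
      exact le_trans (le_abs_self _) this
    rw [hε, mul_assoc, ← Real.exp_add]
    calc m * Real.exp (-CB + Bf k sl x) ≤ m * 1 := by
          apply mul_le_mul_of_nonneg_left _ hm0.le
          rw [Real.exp_le_one_iff]; linarith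
      _ = m := mul_one m
  -- the tilted domain
  set D : Set (ℝ × ℝ) :=
    {p : ℝ × ℝ | p.1 ∈ Icc t₀ t₁ ∧ |p.2 - (x₀ + sl * (p.1 - t₀))| ≤ δ} with hD
  have hDeq : D = (fun q : ℝ × ℝ => (q.1, q.2 + (x₀ + sl * (q.1 - t₀)))) ''
      (Icc t₀ t₁ ×ˢ Icc (-δ) δ) := by
    ext ⟨t, x⟩
    simp only [hD, Set.mem_image, Set.mem_setOf_eq, Set.mem_prod, Set.mem_Icc, Prod.exists,
      Prod.mk.injEq]
    constructor
    · rintro ⟨h1', h2'⟩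
      rcases abs_le.1 h2' with ⟨ha1, ha2⟩
      exact ⟨t, x - (x₀ + sl * (t - t₀)), ⟨⟨h1'.1, h1'.2⟩, ha1, ha2⟩, rfl, by ring⟩
    · rintro ⟨s, y, ⟨⟨hs1, hs2⟩, hy1, hy2⟩, rfl, rfl⟩
      refine ⟨⟨hs1, hs2⟩, ?_⟩
      rw [show y + (x₀ + sl * (s - t₀)) - (x₀ + sl * (s - t₀)) = y by ring]
      exact abs_le.2 ⟨hy1, hy2⟩
  have hDcp : IsCompact D := by
    rw [hDeq]
    exact (isCompact_Icc.prod isCompact_Icc).image (by fun_prop)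
  have hDQ : ∀ t x : ℝ, (t, x) ∈ D →
      (0 < t ∧ t < T) ∧ (|x| ≤ ρ' ∧ -1 < x ∧ x < 1) := by
    intro t x hp
    obtain ⟨⟨hp1, hp2⟩, hp3⟩ := hp
    have hc := hcbound t hp1 hp2
    have hxb : |x| ≤ ρ + δ := by
      calc |x| = |(x - (x₀ + sl * (t - t₀))) + (x₀ + sl * (t - t₀))| := by ring_nf
        _ ≤ |x - (x₀ + sl * (t - t₀))| + |x₀ + sl * (t - t₀)| := abs_add_le _ _
        _ ≤ ρ + δ := by linarith
    have hx' : |x| ≤ ρ' := le_trans hxb hρδ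
    refine ⟨⟨by linarith, by linarith⟩, hx', ?_, ?_⟩
    · have := abs_le.1 hx'; linarith [this.1]
    · have := abs_le.1 hx'; linarith [this.2]
  -- membership in the cylinder
  have hDQ' : ∀ t x : ℝ, (t, x) ∈ D → (t, x) ∈ cylQT T := by
    intro t x hp
    obtain ⟨⟨h1', h2'⟩, _, h3', h4'⟩ := hDQ t x hp
    exact hmemQ t x h1' h2' h3' h4'
  have hDsubIcc : D ⊆ Icc (0:ℝ) T ×ˢ Icc (-1:ℝ) 1 := by
    intro p hp
    obtain ⟨⟨h1', h2'⟩, _, h3', h4'⟩ := hDQ p.1 p.2 hp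
    exact ⟨⟨h1'.le, h2'.le⟩, h3'.le, h4'.le⟩
  -- the comparison function and its maximum
  set z : ℝ × ℝ → ℝ := fun p => u p.1 p.2 - Wf ε γ lam sl t₀ x₀ k p.1 p.2 with hz
  have hz_cont : ContinuousOn z D := by
    apply ContinuousOn.sub (hu_cont.mono hDsubIcc)
    apply (continuousOn_Wf ε γ lam sl t₀ x₀ k).mono
    intro p hp
    obtain ⟨_, _, h3', h4'⟩ := hDQ p.1 p.2 hp
    exact ⟨h3', h4'⟩
  have hD0 : ((t₀, x₀) : ℝ × ℝ) ∈ D := by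
    refine ⟨⟨le_refl t₀, hlt.le⟩, ?_⟩
    simp only []
    rw [show x₀ - (x₀ + sl * (t₀ - t₀)) = 0 by ring]
    simpa using hδ.le
  obtain ⟨p, hpD, hpmax'⟩ := hDcp.exists_isMaxOn ⟨(t₀, x₀), hD0⟩ hz_cont
  obtain ⟨ts, xs⟩ := p
  have hpmax : ∀ q ∈ D, z q ≤ z (ts, xs) := fun q hq => hpmax' hq
  -- the key claim : max of z over D is ≤ 0
  have hclaim : z (ts, xs) ≤ 0 := by
    by_contra hpos'
    push_neg at hpos'
    obtain ⟨⟨hts1, hts2⟩, hxsd⟩ := hpD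
    dsimp only at hts1 hts2 hxsd
    obtain ⟨⟨hq1, hq2⟩, hxsρ, hxs1, hxs2⟩ := hDQ ts xs ⟨⟨hts1, hts2⟩, hxsd⟩
    have hpQ : (ts, xs) ∈ cylQT T := hmemQ ts xs hq1 hq2 hxs1 hxs2
    have hxsIcc : xs ∈ Icc (-ρ') ρ' := abs_le.1 hxsρ
    -- the max is not on the bottom t = t₀
    have hts0 : t₀ < ts := by
      rcases eq_or_lt_of_le hts1 with heq | h
      · exfalso
        have hxsx₀ : |xs - x₀| ≤ δ := by
          have := hxsd
          rw [← heq] at this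
          simpa using this
        have hu' : u t₀ xs < -m := hbot xs (lt_of_le_of_lt hxsx₀ hδδ₀)
        have hW : -m ≤ Wf ε γ lam sl t₀ x₀ k t₀ xs := by
          unfold Wf
          rw [show -(γ * (t₀ - t₀)) = 0 by ring, Real.exp_zero, mul_one]
          have hA : 0 ≤ ε * Real.exp (Bf k sl xs) := by positivity
          have hAm : ε * Real.exp (Bf k sl xs) ≤ m := hεB xs hxsIcc
          have hc1 : Real.cos (lam * (xs - x₀ - sl * (t₀ - t₀))) ≤ 1 := Real.cos_le_one _
          have hAc : ε * Real.exp (Bf k sl xs) * Real.cos (lam * (xs - x₀ - sl * (t₀ - t₀)))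
              ≤ ε * Real.exp (Bf k sl xs) := mul_le_of_le_one_right hA hc1
          linarith only [hAc, hAm]
        have : z (ts, xs) < 0 := by
          have hzb : z (ts, xs) = u ts xs - Wf ε γ lam sl t₀ x₀ k ts xs := rfl
          rw [hzb, ← heq]
          linarith
        linarith
      · exact h
    -- the max is not on the lateral sides
    have hxsd' : |xs - (x₀ + sl * (ts - t₀))| < δ := by
      rcases lt_or_eq_of_le hxsd with h | h
      · exact h
      · exfalso
        have hcos0 : Real.cos (lam * (xs - x₀ - sl * (ts - t₀))) = 0 := by
          rcases (abs_eq hδ.le).1 h with h' | h'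
          · rw [show xs - x₀ - sl * (ts - t₀) = δ by linarith [h'], hlamδ]
            exact Real.cos_pi_div_two
          · rw [show xs - x₀ - sl * (ts - t₀) = -δ by linarith [h'],
              show lam * -δ = -(lam * δ) by ring, hlamδ, Real.cos_neg]
            exact Real.cos_pi_div_two
        have hWf0 : Wf ε γ lam sl t₀ x₀ k ts xs = 0 := by
          unfold Wf
          rw [hcos0]
          ring
        have : z (ts, xs) ≤ 0 := by
          have hzb : z (ts, xs) = u ts xs - Wf ε γ lam sl t₀ x₀ k ts xs := rfl
          rw [hzb, hWf0]
          simpa using hu_nonpos ts xs hpQ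
        linarith
    -- time derivative at the max point
    have hzt : 0 ≤ ut ts xs - Wft ε γ lam sl t₀ x₀ k ts xs := by
      set η : ℝ := min ((δ - |xs - (x₀ + sl * (ts - t₀))|) / (|sl| + 1)) (ts - t₀) with hη
      have hη0 : 0 < η := by
        apply lt_min
        · apply div_pos (by linarith) (by positivity)
        · linarith
      apply deriv_nonneg_of_left_max hη0
        ((hut ts xs hpQ).sub (hasDerivAt_Wf_t ε γ lam sl t₀ x₀ k ts xs))
      intro s hs
      obtain ⟨hs1, hs2⟩ := hs
      have hη1 : η ≤ (δ - |xs - (x₀ + sl * (ts - t₀))|) / (|sl| + 1) := min_le_left _ _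
      have hη2 : η ≤ ts - t₀ := min_le_right _ _
      have hsD : ((s, xs) : ℝ × ℝ) ∈ D := by
        refine ⟨⟨by linarith, by linarith⟩, ?_⟩
        simp only []
        have hb : |xs - (x₀ + sl * (s - t₀))|
            ≤ |xs - (x₀ + sl * (ts - t₀))| + |sl| * |ts - s| := by
          calc |xs - (x₀ + sl * (s - t₀))|
              = |(xs - (x₀ + sl * (ts - t₀))) + sl * (ts - s)| := by ring_nf
            _ ≤ |xs - (x₀ + sl * (ts - t₀))| + |sl * (ts - s)| := abs_add_le _ _
            _ = |xs - (x₀ + sl * (ts - t₀))| + |sl| * |ts - s| := by rw [abs_mul]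
        have hts : |ts - s| ≤ η := by
          rw [abs_of_nonneg (by linarith : (0:ℝ) ≤ ts - s)]
          linarith
        have hsl1 : (0:ℝ) ≤ |sl| := abs_nonneg sl
        have : |sl| * |ts - s| ≤ (|sl| + 1) * η := by nlinarith
        have h2 : (|sl| + 1) * η ≤ δ - |xs - (x₀ + sl * (ts - t₀))| := by
          calc (|sl| + 1) * η ≤ (|sl| + 1) * ((δ - |xs - (x₀ + sl * (ts - t₀))|) / (|sl| + 1)) :=
                mul_le_mul_of_nonneg_left hη1 (by positivity)
            _ = δ - |xs - (x₀ + sl * (ts - t₀))| := by field_simp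
        linarith
      exact hpmax (s, xs) hsD
    -- first spatial derivative vanishes
    have hzx : ux ts xs - Wfx ε γ lam sl t₀ x₀ k ts xs = 0 := by
      have hloc : IsLocalMax (fun y => u ts y - Wf ε γ lam sl t₀ x₀ k ts y) xs := by
        filter_upwards [Metric.ball_mem_nhds xs
          (show (0:ℝ) < δ - |xs - (x₀ + sl * (ts - t₀))| by linarith)] with y hy
        have hyd : |y - xs| < δ - |xs - (x₀ + sl * (ts - t₀))| := by
          simpa [Real.dist_eq] using hy
        have hyD : ((ts, y) : ℝ × ℝ) ∈ D := by
          refine ⟨⟨hts1, hts2⟩, ?_⟩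
          simp only []
          calc |y - (x₀ + sl * (ts - t₀))|
              ≤ |y - xs| + |xs - (x₀ + sl * (ts - t₀))| := abs_sub_le _ _ _
            _ ≤ δ := by linarith
        exact hpmax (ts, y) hyD
      exact hloc.hasDerivAt_eq_zero
        ((hux ts xs hpQ).sub (hasDerivAt_Wf_x ε γ lam sl t₀ x₀ hk hxs1 hxs2))
    -- second spatial derivative is nonpositive
    have hzxx : uxx ts xs - Wfxx ε γ lam sl t₀ x₀ k ts xs ≤ 0 := by
      set η₂ : ℝ := (δ - |xs - (x₀ + sl * (ts - t₀))|) / 2 with hη₂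
      have hη₂0 : 0 < η₂ := by rw [hη₂]; linarith
      have hymem : ∀ y : ℝ, y ∈ Icc xs (xs + η₂) → ((ts, y) : ℝ × ℝ) ∈ D := by
        intro y hy
        obtain ⟨hy1, hy2⟩ := hy
        refine ⟨⟨hts1, hts2⟩, ?_⟩
        simp only []
        calc |y - (x₀ + sl * (ts - t₀))|
            ≤ |y - xs| + |xs - (x₀ + sl * (ts - t₀))| := abs_sub_le _ _ _
          _ ≤ δ := by
              rw [abs_of_nonneg (by linarith : (0:ℝ) ≤ y - xs)]
              rw [hη₂] at hy2
              linarith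
      apply second_deriv_nonpos_of_right_max hη₂0
        (f := fun y => u ts y - Wf ε γ lam sl t₀ x₀ k ts y)
        (f' := fun y => ux ts y - Wfx ε γ lam sl t₀ x₀ k ts y)
      · intro y hy
        obtain ⟨_, _, hy3, hy4⟩ := hDQ ts y (hymem y hy)
        exact (hux ts y (hDQ' ts y (hymem y hy))).sub
          (hasDerivAt_Wf_x ε γ lam sl t₀ x₀ hk hy3 hy4)
      · exact (huxx ts xs hpQ).sub (hasDerivAt_Wf_xx ε γ lam sl t₀ x₀ hk hxs1 hxs2)
      · exact hzx
      · intro y hy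
        exact hpmax (ts, y) (hymem y hy)
    -- barrier inequality at the max point
    have hcosnn : 0 ≤ Real.cos (lam * (xs - x₀ - sl * (ts - t₀))) := by
      apply Real.cos_nonneg_of_mem_Icc
      have habs : |lam * (xs - x₀ - sl * (ts - t₀))| ≤ Real.pi / 2 := by
        rw [abs_mul, abs_of_pos hlam0,
          show xs - x₀ - sl * (ts - t₀) = xs - (x₀ + sl * (ts - t₀)) by ring]
        calc lam * |xs - (x₀ + sl * (ts - t₀))| ≤ lam * δ :=
              mul_le_mul_of_nonneg_left hxsd'.le hlam0.le
          _ = Real.pi / 2 := hlamδ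
      exact abs_le.1 habs
    have hGb : 0 ≤ γ - M + (k*(1-xs^2)*((Bf1 k sl xs)^2 + Bf2 k sl xs - lam^2)
        - 2*k*xs*(Bf1 k sl xs)) := by
      have := hCG xs hxsIcc
      rw [Real.norm_eq_abs] at this
      have h2 := neg_abs_le (k*(1-xs^2)*((Bf1 k sl xs)^2 + Bf2 k sl xs - lam^2)
        - 2*k*xs*(Bf1 k sl xs))
      rw [hγ]
      linarith
    have hbar := barrier_ineq ε γ lam sl t₀ x₀ M k ts xs hk hε0.le hxs1 hxs2 hcosnn hGb
    -- assembling the contradiction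
    have hu_ineq := hineq ts xs hpQ
    have habs' := abs_le.1 (ha ts xs hpQ)
    have hu0 := hu_nonpos ts xs hpQ
    have hA2 : aco ts xs * u ts xs ≤ M * (-(u ts xs)) := by
      have hnn : 0 ≤ aco ts xs + M := by linarith only [habs'.1]
      have hmul := mul_nonpos_of_nonneg_of_nonpos hnn hu0
      have hexp : (aco ts xs + M) * u ts xs = aco ts xs * u ts xs + M * u ts xs := by ring
      have hneg : M * (-(u ts xs)) = -(M * u ts xs) := by ring
      linarith only [hmul, hexp, hneg]
    have h1x : (0:ℝ) < 1 - xs^2 := by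
      have h := mul_pos (show (0:ℝ) < 1 - xs by linarith only [hxs2])
        (show (0:ℝ) < 1 + xs by linarith only [hxs1])
      calc (0:ℝ) < (1 - xs) * (1 + xs) := h
        _ = 1 - xs^2 := by ring
    have hprod1 : k * ((1 - xs^2) * (uxx ts xs - Wfxx ε γ lam sl t₀ x₀ k ts xs)) ≤ 0 :=
      mul_nonpos_of_nonneg_of_nonpos hk.le
        (mul_nonpos_of_nonneg_of_nonpos h1x.le hzxx)
    have hzval : z (ts, xs) = u ts xs - Wf ε γ lam sl t₀ x₀ k ts xs := rfl
    have hprod2 : 0 < M * (u ts xs - Wf ε γ lam sl t₀ x₀ k ts xs) := by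
      apply mul_pos hM
      rw [← hzval]
      exact hpos'
    have hprod3 : k * (-(2*xs)) * (ux ts xs - Wfx ε γ lam sl t₀ x₀ k ts xs) = 0 := by
      rw [hzx]; ring
    linarith only [hu_ineq, hA2, hbar, hzt, hprod1, hprod2, hprod3]
  -- conclusion
  have hc1 : x₀ + sl * (t₁ - t₀) = x₁ := by
    rw [hsl]
    field_simp
    ring
  have hend : ((t₁, x₁) : ℝ × ℝ) ∈ D := by
    refine ⟨⟨hlt.le, le_refl t₁⟩, ?_⟩
    simp only []
    rw [hc1]
    simpa using hδ.le
  have hfin : u t₁ x₁ - Wf ε γ lam sl t₀ x₀ k t₁ x₁ ≤ 0 := le_trans (hpmax (t₁, x₁) hend) hclaim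
  have harg : x₁ - x₀ - sl * (t₁ - t₀) = 0 := by linarith
  have hWval : Wf ε γ lam sl t₀ x₀ k t₁ x₁
      = -(ε * Real.exp (-(γ * (t₁ - t₀))) * Real.exp (Bf k sl x₁)) := by
    unfold Wf
    rw [harg, mul_zero, Real.cos_zero, mul_one]
  have : 0 < ε * Real.exp (-(γ * (t₁ - t₀))) * Real.exp (Bf k sl x₁) := by positivity
  rw [hWval] at hfin
  linarith

lemma scalar_strong_max
    (T k M : ℝ) (hk : 0 < k) (hM : 0 < M)
    (aco u ut ux uxx : ℝ → ℝ → ℝ)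
    (ha : ∀ t x : ℝ, (t, x) ∈ cylQT T → |aco t x| ≤ M)
    (hu_cont : ContinuousOn (fun p : ℝ × ℝ => u p.1 p.2) (Icc (0:ℝ) T ×ˢ Icc (-1:ℝ) 1))
    (hut : ∀ t x : ℝ, (t, x) ∈ cylQT T → HasDerivAt (fun s => u s x) (ut t x) t)
    (hux : ∀ t x : ℝ, (t, x) ∈ cylQT T → HasDerivAt (fun y => u t y) (ux t x) x)
    (huxx : ∀ t x : ℝ, (t, x) ∈ cylQT T → HasDerivAt (fun y => ux t y) (uxx t x) x)
    (hu_nonpos : ∀ t x : ℝ, (t, x) ∈ cylQT T → u t x ≤ 0)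
    (hineq : ∀ t x : ℝ, (t, x) ∈ cylQT T →
      ut t x - k * (-(2 * x) * ux t x + (1 - x ^ 2) * uxx t x) ≤ aco t x * u t x) :
    ∀ t₁ x₁ : ℝ, (t₁, x₁) ∈ cylQT T → u t₁ x₁ = 0 →
      ∀ t ∈ Ioc (0:ℝ) t₁, ∀ x ∈ Ioo (-1:ℝ) 1, u t x = 0 := by
  intro t₁ x₁ h1 hu0 t ht x hx
  obtain ⟨ht0, htt1⟩ := ht
  obtain ⟨hxm1, hx1⟩ := hx
  have h1' := h1
  simp only [cylQT, Set.mem_prod, Set.mem_Ioo] at h1'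
  obtain ⟨⟨ht10, ht1T⟩, hx11, hx12⟩ := h1'
  have htx : (t, x) ∈ cylQT T := by
    simp only [cylQT, Set.mem_prod, Set.mem_Ioo]
    exact ⟨⟨ht0, lt_of_le_of_lt htt1 ht1T⟩, hxm1, hx1⟩
  by_contra hne
  have hutx : u t x < 0 := lt_of_le_of_ne (hu_nonpos t x htx) hne
  rcases eq_or_lt_of_le htt1 with heq | hlt'
  · -- t = t₁ : find a slightly earlier time with u < 0 by continuity
    subst heq
    have hmemn : Icc (0:ℝ) T ×ˢ Icc (-1:ℝ) 1 ∈ 𝓝 ((t, x) : ℝ × ℝ) :=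
      prod_mem_nhds (Icc_mem_nhds ht0 (lt_of_le_of_lt (le_refl t) ht1T))
        (Icc_mem_nhds hxm1 hx1)
    have hCA := hu_cont.continuousAt hmemn
    have hc : ContinuousAt (fun s : ℝ => u s x) t := by
      have hcm : ContinuousAt (fun s : ℝ => ((s, x) : ℝ × ℝ)) t := by fun_prop
      have h2 := ContinuousAt.comp (g := fun p : ℝ × ℝ => u p.1 p.2)
        (f := fun s : ℝ => ((s, x) : ℝ × ℝ)) (x := t) hCA hcm
      exact h2
    have hev := hc (Iio_mem_nhds hutx)
    rw [Filter.mem_map, Metric.mem_nhds_iff] at hev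
    obtain ⟨r, hr, hball⟩ := hev
    set t' : ℝ := t - min (r / 2) (t / 2) with ht'
    have hmin0 : 0 < min (r / 2) (t / 2) := lt_min (by linarith) (by linarith)
    have ht'0 : 0 < t' := by
      have : min (r / 2) (t / 2) ≤ t / 2 := min_le_right _ _
      rw [ht']; linarith
    have ht't : t' < t := by rw [ht']; linarith
    have ht'b : t' ∈ Metric.ball t r := by
      rw [Metric.mem_ball, Real.dist_eq, ht']
      rw [abs_of_nonpos (by linarith : t - min (r / 2) (t / 2) - t ≤ 0)]
      have : min (r / 2) (t / 2) ≤ r / 2 := min_le_left _ _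
      have h2 : -(t - min (r / 2) (t / 2) - t) = min (r / 2) (t / 2) := by ring
      rw [h2]; linarith
    have hu' : u t' x < 0 := hball ht'b
    have htx' : (t', x) ∈ cylQT T := by
      simp only [cylQT, Set.mem_prod, Set.mem_Ioo]
      exact ⟨⟨ht'0, by linarith⟩, hxm1, hx1⟩
    have := scalar_neg_propagates T k M hk hM aco u ut ux uxx ha hu_cont hut hux huxx
      hu_nonpos hineq htx' h1 ht't hu'
    linarith [hu0 ▸ this]
  · have := scalar_neg_propagates T k M hk hM aco u ut ux uxx ha hu_cont hut hux huxx
      hu_nonpos hineq htx h1 hlt' hutx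
    linarith [hu0 ▸ this]

end StrongMaxAux

/-- Strong maximum principle for linear cooperative degenerate parabolic systems:
let `u, v ≤ 0` be continuous on `[0,T] × [-1,1]`, of class `C^{1,2}` on `Q_T`, satisfying
`∂ₜu - k₁ ∂ₓ((1-x²)∂ₓu) ≤ a u + b v` and `∂ₜv - k₂ ∂ₓ((1-x²)∂ₓv) ≤ c u + d v` on `Q_T`,
with `a, b, c, d` bounded and `b, c ≥ 0` on `Q_T`. If `u` vanishes at some interior point
`(t₁, x₁) ∈ Q_T`, then `u ≡ 0` on `(0,t₁] × (-1,1)`; analogously, if `v` vanishes at some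
`(t₂, x₂) ∈ Q_T`, then `v ≡ 0` on `(0,t₂] × (-1,1)`. -/
theorem strong_maximum_principle_cooperative_system
    (T k₁ k₂ : ℝ) (hT : 0 < T) (hk₁ : 0 < k₁) (hk₂ : 0 < k₂)
    (a b c d : ℝ → ℝ → ℝ)
    (ha_bdd : ∃ M : ℝ, ∀ p ∈ cylQT T, |a p.1 p.2| ≤ M)
    (hb_bdd : ∃ M : ℝ, ∀ p ∈ cylQT T, |b p.1 p.2| ≤ M)
    (hc_bdd : ∃ M : ℝ, ∀ p ∈ cylQT T, |c p.1 p.2| ≤ M)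
    (hd_bdd : ∃ M : ℝ, ∀ p ∈ cylQT T, |d p.1 p.2| ≤ M)
    (hb_nonneg : ∀ p ∈ cylQT T, 0 ≤ b p.1 p.2)
    (hc_nonneg : ∀ p ∈ cylQT T, 0 ≤ c p.1 p.2)
    (u ut ux uxx : ℝ → ℝ → ℝ)
    (v vt vx vxx : ℝ → ℝ → ℝ)
    (hu_cont : ContinuousOn (fun p : ℝ × ℝ => u p.1 p.2) (Icc (0:ℝ) T ×ˢ Icc (-1:ℝ) 1))
    (hv_cont : ContinuousOn (fun p : ℝ × ℝ => v p.1 p.2) (Icc (0:ℝ) T ×ˢ Icc (-1:ℝ) 1))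
    (hut : ∀ t x : ℝ, (t, x) ∈ cylQT T → HasDerivAt (fun s => u s x) (ut t x) t)
    (hux : ∀ t x : ℝ, (t, x) ∈ cylQT T → HasDerivAt (fun y => u t y) (ux t x) x)
    (huxx : ∀ t x : ℝ, (t, x) ∈ cylQT T → HasDerivAt (fun y => ux t y) (uxx t x) x)
    (hvt : ∀ t x : ℝ, (t, x) ∈ cylQT T → HasDerivAt (fun s => v s x) (vt t x) t)
    (hvx : ∀ t x : ℝ, (t, x) ∈ cylQT T → HasDerivAt (fun y => v t y) (vx t x) x)
    (hvxx : ∀ t x : ℝ, (t, x) ∈ cylQT T → HasDerivAt (fun y => vx t y) (vxx t x) x)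
    (hut_cont : ContinuousOn (fun p : ℝ × ℝ => ut p.1 p.2) (cylQT T))
    (hux_cont : ContinuousOn (fun p : ℝ × ℝ => ux p.1 p.2) (cylQT T))
    (huxx_cont : ContinuousOn (fun p : ℝ × ℝ => uxx p.1 p.2) (cylQT T))
    (hvt_cont : ContinuousOn (fun p : ℝ × ℝ => vt p.1 p.2) (cylQT T))
    (hvx_cont : ContinuousOn (fun p : ℝ × ℝ => vx p.1 p.2) (cylQT T))
    (hvxx_cont : ContinuousOn (fun p : ℝ × ℝ => vxx p.1 p.2) (cylQT T))
    (hu_nonpos : ∀ t x : ℝ, (t, x) ∈ cylQT T → u t x ≤ 0)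
    (hv_nonpos : ∀ t x : ℝ, (t, x) ∈ cylQT T → v t x ≤ 0)
    (hinequ : ∀ t x : ℝ, (t, x) ∈ cylQT T →
        ut t x - k₁ * (-(2 * x) * ux t x + (1 - x ^ 2) * uxx t x)
          ≤ a t x * u t x + b t x * v t x)
    (hineqv : ∀ t x : ℝ, (t, x) ∈ cylQT T →
        vt t x - k₂ * (-(2 * x) * vx t x + (1 - x ^ 2) * vxx t x)
          ≤ c t x * u t x + d t x * v t x) :
    (∀ t₁ x₁ : ℝ, (t₁, x₁) ∈ cylQT T → u t₁ x₁ = 0 →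
      ∀ t ∈ Ioc (0:ℝ) t₁, ∀ x ∈ Ioo (-1:ℝ) 1, u t x = 0) ∧
    (∀ t₂ x₂ : ℝ, (t₂, x₂) ∈ cylQT T → v t₂ x₂ = 0 →
      ∀ t ∈ Ioc (0:ℝ) t₂, ∀ x ∈ Ioo (-1:ℝ) 1, v t x = 0) := by
  
  obtain ⟨Ma, hMa⟩ := ha_bdd
  obtain ⟨Md, hMd⟩ := hd_bdd
  constructor
  · -- component u
    have hineq' : ∀ t x : ℝ, (t, x) ∈ cylQT T →
        ut t x - k₁ * (-(2 * x) * ux t x + (1 - x ^ 2) * uxx t x) ≤ a t x * u t x := by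
      intro t x h
      have h1 := hinequ t x h
      have hbv : b t x * v t x ≤ 0 :=
        mul_nonpos_of_nonneg_of_nonpos (hb_nonneg (t, x) h) (hv_nonpos t x h)
      linarith
    have ha' : ∀ t x : ℝ, (t, x) ∈ cylQT T → |a t x| ≤ |Ma| + 1 := by
      intro t x h
      calc |a t x| ≤ Ma := hMa (t, x) h
        _ ≤ |Ma| + 1 := by linarith [le_abs_self Ma]
    exact scalar_strong_max T k₁ (|Ma| + 1) hk₁ (by positivity) a u ut ux uxx ha'
      hu_cont hut hux huxx hu_nonpos hineq'
  · -- component v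
    have hineq' : ∀ t x : ℝ, (t, x) ∈ cylQT T →
        vt t x - k₂ * (-(2 * x) * vx t x + (1 - x ^ 2) * vxx t x) ≤ d t x * v t x := by
      intro t x h
      have h1 := hineqv t x h
      have hcu : c t x * u t x ≤ 0 :=
        mul_nonpos_of_nonneg_of_nonpos (hc_nonneg (t, x) h) (hu_nonpos t x h)
      linarith
    have hd' : ∀ t x : ℝ, (t, x) ∈ cylQT T → |d t x| ≤ |Md| + 1 := by
      intro t x h
      calc |d t x| ≤ Md := hMd (t, x) h
        _ ≤ |Md| + 1 := by linarith [le_abs_self Md]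
    exact scalar_strong_max T k₂ (|Md| + 1) hk₂ (by positivity) d v vt vx vxx hd'
      hv_cont hvt hvx hvxx hv_nonpos hineq'
end
end

section
/- (Integration by parts and dissipativity for the degenerate operator) For every u∈D(A) the function √(1−x²)·u′ belongs to L²(−1,1) (so D(A)⊆V), and ∫_{−1}^{1} ((1−x²)u′)′(x)·u(x) dx = −∫_{−1}^{1} (1−x²)·u′(x)² dx; in particular ∫_{−1}^{1} (Au)(x)·u(x) dx ≤ 0. -/
open MeasureTheory Set Filter

noncomputable section

/-- `u` belongs to the domain `D(A)` of the degenerate operator `A u = ((1-x²)u')'` on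
`I = (-1,1)`: `u ∈ L²(I)` is locally absolutely continuous on `I` with a.e. derivative `u'`,
and `x ↦ (1-x²)u'(x)` extends to an absolutely continuous function on `[-1,1]` vanishing at
`x = ±1`, whose a.e. derivative `Au` belongs to `L²(I)`. -/
structure MemDA (u u' Au : ℝ → ℝ) : Prop where
  sq_int : IntegrableOn (fun x => u x ^ 2) (Ioo (-1:ℝ) 1)
  locAC : ∀ a b : ℝ, a ∈ Ioo (-1:ℝ) 1 → b ∈ Ioo (-1:ℝ) 1 →
      u b - u a = ∫ t in a..b, u' t
  deriv_intble : ∀ a b : ℝ, a ∈ Ioo (-1:ℝ) 1 → b ∈ Ioo (-1:ℝ) 1 →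
      IntervalIntegrable u' volume a b
  Au_intble : IntervalIntegrable Au volume (-1) 1
  Au_sq_int : IntegrableOn (fun x => Au x ^ 2) (Ioo (-1:ℝ) 1)
  flux : ∀ x ∈ Ioo (-1:ℝ) 1, (1 - x ^ 2) * u' x = ∫ t in (-1:ℝ)..x, Au t
  flux_one : (∫ t in (-1:ℝ)..(1:ℝ), Au t) = 0

namespace DAaux

open intervalIntegral

variable {u u' Au : ℝ → ℝ}

/-- primitive of `Au` -/
def Fp (Au : ℝ → ℝ) (x : ℝ) : ℝ := ∫ t in (-1:ℝ)..x, Au t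

/-- the constant in the flux bounds -/
def CC (Au : ℝ → ℝ) : ℝ := ((∫ x in Ioo (-1:ℝ) 1, Au x ^ 2) + 1) / 2

lemma CC_pos (Au : ℝ → ℝ) : 0 < CC Au := by
  have hM0 : 0 ≤ ∫ x in Ioo (-1:ℝ) 1, Au x ^ 2 :=
    setIntegral_nonneg measurableSet_Ioo (fun _ _ => sq_nonneg _)
  unfold CC; linarith

lemma AuIntOn (hu : MemDA u u' Au) {y z : ℝ} (hy : (-1:ℝ) ≤ y) (hz : z ≤ 1) :
    IntegrableOn Au (Ioo y z) :=
  hu.Au_intble.1.mono_set (fun t ht => ⟨lt_of_le_of_lt hy ht.1, le_of_lt (lt_of_lt_of_le ht.2 hz)⟩)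

lemma absAu_int_bound (hu : MemDA u u' Au) {y z : ℝ} (hy : (-1:ℝ) ≤ y) (hyz : y < z)
    (hz : z ≤ 1) : (∫ t in Ioo y z, |Au t|) ≤ CC Au * Real.sqrt (z - y) := by
  set M := ∫ x in Ioo (-1:ℝ) 1, Au x ^ 2 with hM
  have hM0 : 0 ≤ M := setIntegral_nonneg measurableSet_Ioo (fun _ _ => sq_nonneg _)
  have hε : 0 < Real.sqrt (z - y) := Real.sqrt_pos.2 (by linarith)
  set ε := Real.sqrt (z - y) with hεdef
  have hε2 : ε ^ 2 = z - y := Real.sq_sqrt (by linarith)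
  have hsub : Ioo y z ⊆ Ioo (-1:ℝ) 1 := fun t ht =>
    ⟨lt_of_le_of_lt hy ht.1, lt_of_lt_of_le ht.2 hz⟩
  have hAuI : IntegrableOn Au (Ioo y z) := AuIntOn hu hy hz
  have hAu2I : IntegrableOn (fun t => Au t ^ 2) (Ioo y z) := hu.Au_sq_int.mono_set hsub
  have hpt : ∀ t, |Au t| ≤ ε / 2 * Au t ^ 2 + 1 / (2 * ε) := by
    intro t
    have h2 : |Au t| ^ 2 = Au t ^ 2 := sq_abs _
    have key : 2 * ε * |Au t| ≤ ε ^ 2 * Au t ^ 2 + 1 := by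
      nlinarith [sq_nonneg (ε * |Au t| - 1)]
    calc |Au t| = (2 * ε * |Au t|) / (2 * ε) := by field_simp
      _ ≤ (ε ^ 2 * Au t ^ 2 + 1) / (2 * ε) := by gcongr
      _ = ε / 2 * Au t ^ 2 + 1 / (2 * ε) := by field_simp
  calc (∫ t in Ioo y z, |Au t|)
      ≤ ∫ t in Ioo y z, (ε / 2 * Au t ^ 2 + 1 / (2 * ε)) := by
        refine setIntegral_mono_on hAuI.abs ?_ measurableSet_Ioo (fun t _ => hpt t)
        exact (hAu2I.const_mul _).add (integrableOn_const measure_Ioo_lt_top.ne)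
    _ = ε / 2 * (∫ t in Ioo y z, Au t ^ 2) + (z - y) * (1 / (2 * ε)) := by
        rw [integral_add (hAu2I.const_mul _) (integrableOn_const measure_Ioo_lt_top.ne),
          MeasureTheory.integral_const_mul, setIntegral_const, Real.volume_real_Ioo_of_le (by linarith),
          smul_eq_mul]
    _ ≤ ε / 2 * M + (z - y) * (1 / (2 * ε)) := by
        have hle : (∫ t in Ioo y z, Au t ^ 2) ≤ M := by
          refine setIntegral_mono_set hu.Au_sq_int ?_ hsub.eventuallyLE
          exact Filter.Eventually.of_forall (fun t => sq_nonneg _)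
        nlinarith
    _ = CC Au * ε := by
        rw [← hε2]; unfold CC; rw [← hM]; field_simp


lemma AuII (hu : MemDA u u' Au) {y z : ℝ} (hy : (-1:ℝ) ≤ y) (hy1 : y ≤ 1)
    (hz : (-1:ℝ) ≤ z) (hz1 : z ≤ 1) : IntervalIntegrable Au volume y z := by
  refine hu.Au_intble.mono_set ?_
  rw [uIcc_of_le (by norm_num : (-1:ℝ) ≤ 1)]
  exact uIcc_subset_Icc ⟨hy, hy1⟩ ⟨hz, hz1⟩

lemma Fp_sub (hu : MemDA u u' Au) {y z : ℝ} (hy : y ∈ Icc (-1:ℝ) 1) (hz : z ∈ Icc (-1:ℝ) 1) :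
    Fp Au z - Fp Au y = ∫ t in y..z, Au t := by
  have h := integral_add_adjacent_intervals (a := (-1:ℝ)) (b := y) (c := z)
    (AuII hu le_rfl (by norm_num) hy.1 hy.2) (AuII hu hy.1 hy.2 hz.1 hz.2)
  unfold Fp; linarith

lemma Fp_le_left (hu : MemDA u u' Au) {x : ℝ} (hx : x ∈ Ioo (-1:ℝ) 1) :
    |Fp Au x| ≤ CC Au * Real.sqrt (1 + x) := by
  have h1 : Fp Au x = ∫ t in Ioo (-1:ℝ) x, Au t := by
    unfold Fp
    rw [integral_of_le hx.1.le, MeasureTheory.integral_Ioc_eq_integral_Ioo]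
  rw [h1]
  calc |∫ t in Ioo (-1:ℝ) x, Au t| ≤ ∫ t in Ioo (-1:ℝ) x, |Au t| := by
        simpa using norm_integral_le_integral_norm (μ := volume.restrict (Ioo (-1:ℝ) x)) Au
    _ ≤ CC Au * Real.sqrt (x - -1) := absAu_int_bound hu le_rfl hx.1 hx.2.le
    _ = CC Au * Real.sqrt (1 + x) := by ring_nf

lemma Fp_le_right (hu : MemDA u u' Au) {x : ℝ} (hx : x ∈ Ioo (-1:ℝ) 1) :
    |Fp Au x| ≤ CC Au * Real.sqrt (1 - x) := by
  have h0 : Fp Au x = -∫ t in Ioo x (1:ℝ), Au t := by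
    have h := Fp_sub hu (y := x) (z := 1) ⟨hx.1.le, hx.2.le⟩ ⟨by norm_num, le_rfl⟩
    have h2 : Fp Au (1:ℝ) = 0 := hu.flux_one
    rw [integral_of_le hx.2.le, MeasureTheory.integral_Ioc_eq_integral_Ioo] at h
    linarith
  rw [h0, abs_neg]
  calc |∫ t in Ioo x (1:ℝ), Au t| ≤ ∫ t in Ioo x (1:ℝ), |Au t| := by
        simpa using norm_integral_le_integral_norm (μ := volume.restrict (Ioo x (1:ℝ))) Au
    _ ≤ CC Au * Real.sqrt (1 - x) := absAu_int_bound hu hx.1.le hx.2 le_rfl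

lemma flux' (hu : MemDA u u' Au) {x : ℝ} (hx : x ∈ Ioo (-1:ℝ) 1) :
    (1 - x ^ 2) * u' x = Fp Au x := hu.flux x hx

lemma integrand_eq (hu : MemDA u u' Au) {x : ℝ} (hx : x ∈ Ioo (-1:ℝ) 1) :
    (1 - x ^ 2) * u' x ^ 2 = Fp Au x * u' x := by
  rw [← flux' hu hx]; ring

lemma one_sub_sq_pos {x : ℝ} (hx : x ∈ Ioo (-1:ℝ) 1) : 0 < 1 - x ^ 2 := by
  nlinarith [hx.1, hx.2]

/-- pointwise bound on the integrand -/
lemma integrand_bound (hu : MemDA u u' Au) {x : ℝ} (hx : x ∈ Ioo (-1:ℝ) 1) :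
    (1 - x ^ 2) * u' x ^ 2 ≤ CC Au ^ 2 := by
  have hpos := one_sub_sq_pos hx
  have hkey : (1 - x ^ 2) * ((1 - x ^ 2) * u' x ^ 2) = Fp Au x ^ 2 := by
    rw [← flux' hu hx]; ring
  rcases le_or_gt x 0 with hx0 | hx0
  · have hb := Fp_le_left hu hx
    have hs : Real.sqrt (1 + x) ^ 2 = 1 + x := Real.sq_sqrt (by linarith [hx.1])
    have hb2 : Fp Au x ^ 2 ≤ CC Au ^ 2 * (1 + x) := by
      nlinarith [abs_nonneg (Fp Au x), Real.sqrt_nonneg (1 + x), CC_pos Au, sq_abs (Fp Au x)]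
    nlinarith [CC_pos Au, sq_nonneg (u' x)]
  · have hb := Fp_le_right hu hx
    have hs : Real.sqrt (1 - x) ^ 2 = 1 - x := Real.sq_sqrt (by linarith [hx.2])
    have hb2 : Fp Au x ^ 2 ≤ CC Au ^ 2 * (1 - x) := by
      nlinarith [abs_nonneg (Fp Au x), Real.sqrt_nonneg (1 - x), CC_pos Au, sq_abs (Fp Au x)]
    nlinarith [CC_pos Au, sq_nonneg (u' x)]

lemma Fp_contOn (hu : MemDA u u' Au) : ContinuousOn (Fp Au) (Icc (-1:ℝ) 1) := by
  have := continuousOn_primitive_interval' (a := (-1:ℝ)) hu.Au_intble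
    (by rw [uIcc_of_le (by norm_num : (-1:ℝ) ≤ 1)]; exact ⟨le_rfl, by norm_num⟩)
  rwa [uIcc_of_le (by norm_num : (-1:ℝ) ≤ 1)] at this


lemma u_contOn (hu : MemDA u u' Au) : ContinuousOn u (Ioo (-1:ℝ) 1) := by
  intro x hx
  have ha : (x - 1) / 2 ∈ Ioo (-1:ℝ) 1 := ⟨by linarith [hx.1], by linarith [hx.2]⟩
  have hb : (x + 1) / 2 ∈ Ioo (-1:ℝ) 1 := ⟨by linarith [hx.1], by linarith [hx.2]⟩
  set a := (x - 1) / 2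
  set b := (x + 1) / 2
  have hax : a < x := by unfold a; linarith [hx.1]
  have hxb : x < b := by unfold b; linarith [hx.2]
  have hprim : ContinuousOn (fun y => u a + ∫ t in a..y, u' t) (uIcc a b) :=
    continuousOn_const.add (continuousOn_primitive_interval'
      (hu.deriv_intble a b ha hb) left_mem_uIcc)
  rw [uIcc_of_le (by linarith : a ≤ b)] at hprim
  have hCA : ContinuousAt (fun y => u a + ∫ t in a..y, u' t) x :=
    hprim.continuousAt (Icc_mem_nhds hax hxb)
  have heq : (fun y => u a + ∫ t in a..y, u' t) =ᶠ[nhds x] u := by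
    filter_upwards [Ioo_mem_nhds hax hxb] with y hy
    have hyI : y ∈ Ioo (-1:ℝ) 1 := ⟨lt_trans ha.1 hy.1, lt_trans hy.2 hb.2⟩
    have := hu.locAC a y ha hyI
    linarith
  exact (hCA.congr heq).continuousWithinAt

lemma u'_bound_right (hu : MemDA u u' Au) {t : ℝ} (ht : t ∈ Ico (0:ℝ) 1) :
    |u' t| ≤ CC Au * (Real.sqrt (1 - t))⁻¹ := by
  have htI : t ∈ Ioo (-1:ℝ) 1 := ⟨by linarith [ht.1], ht.2⟩
  have hs : 0 < Real.sqrt (1 - t) := Real.sqrt_pos.2 (by linarith [ht.2])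
  set s := Real.sqrt (1 - t)
  have hs2 : s ^ 2 = 1 - t := Real.sq_sqrt (by linarith [ht.2])
  have hF := Fp_le_right hu htI
  have hflux : |u' t| * (1 - t ^ 2) = |Fp Au t| := by
    rw [← flux' hu htI, abs_mul, abs_of_pos (one_sub_sq_pos htI)]; ring
  rw [le_mul_inv_iff₀ hs]
  have h1pt : (0:ℝ) < 1 + t := by linarith [ht.1]
  have hfact : 1 - t ^ 2 = s ^ 2 * (1 + t) := by nlinarith [hs2]
  have hp : |u' t| * s * (s * (1 + t)) ≤ CC Au * s := by
    calc |u' t| * s * (s * (1 + t)) = |u' t| * (1 - t ^ 2) := by rw [hfact]; ring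
      _ = |Fp Au t| := hflux
      _ ≤ CC Au * s := hF
  have hle : CC Au * s ≤ CC Au * (s * (1 + t)) := by nlinarith [mul_pos (CC_pos Au) hs, ht.1]
  exact le_of_mul_le_mul_right (hp.trans hle) (mul_pos hs h1pt)

lemma u'_bound_left (hu : MemDA u u' Au) {t : ℝ} (ht : t ∈ Ioc (-1:ℝ) 0) :
    |u' t| ≤ CC Au * (Real.sqrt (1 + t))⁻¹ := by
  have htI : t ∈ Ioo (-1:ℝ) 1 := ⟨ht.1, by linarith [ht.2]⟩
  have hs : 0 < Real.sqrt (1 + t) := Real.sqrt_pos.2 (by linarith [ht.1])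
  set s := Real.sqrt (1 + t)
  have hs2 : s ^ 2 = 1 + t := Real.sq_sqrt (by linarith [ht.1])
  have hF := Fp_le_left hu htI
  have hflux : |u' t| * (1 - t ^ 2) = |Fp Au t| := by
    rw [← flux' hu htI, abs_mul, abs_of_pos (one_sub_sq_pos htI)]; ring
  rw [le_mul_inv_iff₀ hs]
  have h1pt : (0:ℝ) < 1 - t := by linarith [ht.2]
  have hfact : 1 - t ^ 2 = s ^ 2 * (1 - t) := by nlinarith [hs2]
  have hp : |u' t| * s * (s * (1 - t)) ≤ CC Au * s := by
    calc |u' t| * s * (s * (1 - t)) = |u' t| * (1 - t ^ 2) := by rw [hfact]; ring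
      _ = |Fp Au t| := hflux
      _ ≤ CC Au * s := hF
  have hle : CC Au * s ≤ CC Au * (s * (1 - t)) := by
    nlinarith [mul_pos (CC_pos Au) hs, neg_nonneg.2 ht.2]
  exact le_of_mul_le_mul_right (hp.trans hle) (mul_pos hs h1pt)

lemma u_bound (hu : MemDA u u' Au) {x : ℝ} (hx : x ∈ Ioo (-1:ℝ) 1) :
    |u x| ≤ |u 0| + 2 * CC Au := by
  have h0 : (0:ℝ) ∈ Ioo (-1:ℝ) 1 := by norm_num
  rcases le_or_gt 0 x with hx0 | hx0
  · -- right side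
    have hker : ∀ t ∈ uIcc (0:ℝ) x, HasDerivAt (fun y => -(2 * CC Au * Real.sqrt (1 - y)))
        (CC Au * (Real.sqrt (1 - t))⁻¹) t := by
      intro t ht
      rw [uIcc_of_le hx0] at ht
      have h1t : 0 < 1 - t := by linarith [ht.2, hx.2]
      have hd : HasDerivAt (fun y : ℝ => 1 - y) (-1) t := (hasDerivAt_id t).const_sub 1
      have hsq := (Real.hasDerivAt_sqrt h1t.ne').comp t hd
      have := hsq.const_mul (-(2 * CC Au))
      convert this using 1
      · rfl
      · rfl
      · funext y; simp only [Function.comp_def]; ring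
      have hs : 0 < Real.sqrt (1 - t) := Real.sqrt_pos.2 h1t
      field_simp
    have hcont : ContinuousOn (fun t => CC Au * (Real.sqrt (1 - t))⁻¹) (uIcc 0 x) := by
      rw [uIcc_of_le hx0]
      refine continuousOn_const.mul (ContinuousOn.inv₀ ?_ ?_)
      · exact (Real.continuous_sqrt.comp (continuous_const.sub continuous_id)).continuousOn
      · intro t ht
        exact (Real.sqrt_pos.2 (by linarith [ht.2, hx.2])).ne'
    have hFTC : (∫ t in (0:ℝ)..x, CC Au * (Real.sqrt (1 - t))⁻¹)
        = -(2 * CC Au * Real.sqrt (1 - x)) - -(2 * CC Au * Real.sqrt (1 - 0)) :=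
      integral_eq_sub_of_hasDerivAt hker (hcont.intervalIntegrable)
    have hmono : |∫ t in (0:ℝ)..x, u' t| ≤ ∫ t in (0:ℝ)..x, CC Au * (Real.sqrt (1 - t))⁻¹ := by
      refine (abs_integral_le_integral_abs hx0).trans ?_
      refine integral_mono_on hx0 (hu.deriv_intble 0 x h0 hx).abs hcont.intervalIntegrable ?_
      intro t ht
      exact u'_bound_right hu ⟨ht.1, lt_of_le_of_lt ht.2 hx.2⟩
    have hloc := hu.locAC 0 x h0 hx
    have hsn : 0 ≤ Real.sqrt (1 - x) := Real.sqrt_nonneg _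
    have h2 : |u x - u 0| ≤ 2 * CC Au := by
      rw [hloc]
      refine hmono.trans ?_
      rw [hFTC]
      simp only [sub_zero, Real.sqrt_one]
      nlinarith [CC_pos Au]
    calc |u x| = |u 0 + (u x - u 0)| := by ring_nf
      _ ≤ |u 0| + |u x - u 0| := abs_add_le _ _
      _ ≤ |u 0| + 2 * CC Au := by linarith
  · -- left side
    have hker : ∀ t ∈ uIcc x (0:ℝ), HasDerivAt (fun y => 2 * CC Au * Real.sqrt (1 + y))
        (CC Au * (Real.sqrt (1 + t))⁻¹) t := by
      intro t ht
      rw [uIcc_of_le hx0.le] at ht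
      have h1t : 0 < 1 + t := by linarith [ht.1, hx.1]
      have hd : HasDerivAt (fun y : ℝ => 1 + y) (1) t := (hasDerivAt_id t).const_add 1
      have hsq := (Real.hasDerivAt_sqrt h1t.ne').comp t hd
      have := hsq.const_mul (2 * CC Au)
      convert this using 1
      · rfl
      · rfl
      · funext y; simp only [Function.comp_def]
      have hs : 0 < Real.sqrt (1 + t) := Real.sqrt_pos.2 h1t
      field_simp
    have hcont : ContinuousOn (fun t => CC Au * (Real.sqrt (1 + t))⁻¹) (uIcc x 0) := by
      rw [uIcc_of_le hx0.le]
      refine continuousOn_const.mul (ContinuousOn.inv₀ ?_ ?_)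
      · exact (Real.continuous_sqrt.comp (continuous_const.add continuous_id)).continuousOn
      · intro t ht
        exact (Real.sqrt_pos.2 (by linarith [ht.1, hx.1])).ne'
    have hFTC : (∫ t in x..(0:ℝ), CC Au * (Real.sqrt (1 + t))⁻¹)
        = 2 * CC Au * Real.sqrt (1 + 0) - 2 * CC Au * Real.sqrt (1 + x) :=
      integral_eq_sub_of_hasDerivAt hker (hcont.intervalIntegrable)
    have hmono : |∫ t in x..(0:ℝ), u' t| ≤ ∫ t in x..(0:ℝ), CC Au * (Real.sqrt (1 + t))⁻¹ := by
      refine (abs_integral_le_integral_abs hx0.le).trans ?_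
      refine integral_mono_on hx0.le (hu.deriv_intble x 0 hx h0).abs hcont.intervalIntegrable ?_
      intro t ht
      exact u'_bound_left hu ⟨lt_of_lt_of_le hx.1 ht.1, ht.2⟩
    have hloc := hu.locAC x 0 hx h0
    have hsn : 0 ≤ Real.sqrt (1 + x) := Real.sqrt_nonneg _
    have h2 : |u 0 - u x| ≤ 2 * CC Au := by
      rw [hloc]
      refine hmono.trans ?_
      rw [hFTC]
      simp only [add_zero, Real.sqrt_one]
      nlinarith [CC_pos Au]
    calc |u x| = |u 0 - (u 0 - u x)| := by ring_nf
      _ ≤ |u 0| + |u 0 - u x| := abs_sub _ _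
      _ ≤ |u 0| + 2 * CC Au := by linarith


lemma u'_contOn (hu : MemDA u u' Au) : ContinuousOn u' (Ioo (-1:ℝ) 1) := by
  have h : ContinuousOn (fun x => Fp Au x * (1 - x ^ 2)⁻¹) (Ioo (-1:ℝ) 1) := by
    refine ((Fp_contOn hu).mono Ioo_subset_Icc_self).mul (ContinuousOn.inv₀ ?_ ?_)
    · exact (continuous_const.sub (continuous_pow 2)).continuousOn
    · exact fun x hx => (one_sub_sq_pos hx).ne'
  refine h.congr fun x hx => ?_
  have hne := (one_sub_sq_pos hx).ne'
  field_simp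
  rw [mul_comm]
  exact flux' hu hx

lemma integrand_integrableOn (hu : MemDA u u' Au) :
    IntegrableOn (fun x => (1 - x ^ 2) * u' x ^ 2) (Ioo (-1:ℝ) 1) := by
  have hcont : ContinuousOn (fun x => (1 - x ^ 2) * u' x ^ 2) (Ioo (-1:ℝ) 1) :=
    ((continuous_const.sub (continuous_pow 2)).continuousOn).mul ((u'_contOn hu).pow 2)
  refine Integrable.mono' (g := fun _ => CC Au ^ 2)
    (integrableOn_const measure_Ioo_lt_top.ne)
    (hcont.aestronglyMeasurable measurableSet_Ioo) ?_
  rw [ae_restrict_iff' measurableSet_Ioo]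
  filter_upwards with x hx
  rw [Real.norm_eq_abs, abs_of_nonneg (mul_nonneg (one_sub_sq_pos hx).le (sq_nonneg _))]
  exact integrand_bound hu hx

lemma Auu_integrableOn (hu : MemDA u u' Au) :
    IntegrableOn (fun x => Au x * u x) (Ioo (-1:ℝ) 1) := by
  have hAuI : IntegrableOn Au (Ioo (-1:ℝ) 1) := AuIntOn hu le_rfl le_rfl
  refine Integrable.mono' (g := fun x => |Au x| * (|u 0| + 2 * CC Au)) (hAuI.abs.mul_const _)
    (hAuI.aestronglyMeasurable.mul ((u_contOn hu).aestronglyMeasurable measurableSet_Ioo)) ?_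
  rw [ae_restrict_iff' measurableSet_Ioo]
  filter_upwards with x hx
  rw [Real.norm_eq_abs, abs_mul]
  exact mul_le_mul_of_nonneg_left (u_bound hu hx) (abs_nonneg _)


lemma parts (hu : MemDA u u' Au) {a b : ℝ} (ha : a ∈ Ioo (-1:ℝ) 1) (hb : b ∈ Ioo (-1:ℝ) 1)
    (hab : a ≤ b) :
    ∫ x in Ioo a b, Au x * u x
      = Fp Au b * u b - Fp Au a * u a - ∫ x in Ioo a b, (1 - x ^ 2) * u' x ^ 2 := by
  have hsub : Ioc a b ⊆ Ioo (-1:ℝ) 1 := fun t ht =>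
    ⟨lt_trans ha.1 ht.1, lt_of_le_of_lt ht.2 hb.2⟩
  have hAuI : IntegrableOn Au (Ioc a b) :=
    hu.Au_intble.1.mono_set (Ioc_subset_Ioc ha.1.le hb.2.le)
  have hu'I : IntegrableOn u' (Ioc a b) := (hu.deriv_intble a b ha hb).1
  have hIccint : IntegrableOn u' (Icc a b) := by
    rw [integrableOn_Icc_iff_integrableOn_Ioc]; exact hu'I
  have hprim_cont : ContinuousOn (fun x => ∫ t in Ioc a x, u' t) (Icc a b) :=
    continuousOn_primitive hIccint
  have hux : ∀ x ∈ Ioc a b, u x = u a + ∫ t in Ioc a x, u' t := by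
    intro x hx
    have h := hu.locAC a x ha (hsub hx)
    rw [integral_of_le hx.1.le] at h
    linarith
  have hI1 : IntegrableOn (fun x => Au x * u a) (Ioc a b) := hAuI.mul_const _
  have hI2 : IntegrableOn (fun x => Au x * ∫ t in Ioc a x, u' t) (Ioc a b) :=
    hAuI.mul_continuousOn_of_subset hprim_cont measurableSet_Ioc isCompact_Icc Ioc_subset_Icc_self
  have hdec : ∫ x in Ioc a b, Au x * u x
      = (∫ x in Ioc a b, Au x * u a) + ∫ x in Ioc a b, Au x * ∫ t in Ioc a x, u' t := by
    rw [← integral_add hI1 hI2]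
    refine setIntegral_congr_fun measurableSet_Ioc fun x hx => ?_
    rw [hux x hx]; ring
  have hFab : Fp Au b - Fp Au a = ∫ t in Ioc a b, Au t := by
    rw [Fp_sub hu ⟨ha.1.le, ha.2.le⟩ ⟨hb.1.le, hb.2.le⟩, integral_of_le hab]
  have hstep2 : (∫ x in Ioc a b, Au x * u a) = (Fp Au b - Fp Au a) * u a := by
    rw [hFab, MeasureTheory.integral_mul_const]
  set S : Set (ℝ × ℝ) := {p : ℝ × ℝ | p.2 ≤ p.1} with hSdef
  have hSm : MeasurableSet S := measurableSet_le measurable_snd measurable_fst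
  set g : ℝ × ℝ → ℝ := S.indicator (fun p => Au p.1 * u' p.2) with hgdef
  have hgint : Integrable g ((volume.restrict (Ioc a b)).prod (volume.restrict (Ioc a b))) :=
    (Integrable.mul_prod hAuI hu'I).indicator hSm
  have key1 : ∀ x ∈ Ioc a b, (Au x * ∫ t in Ioc a x, u' t) = ∫ t in Ioc a b, g (x, t) := by
    intro x hx
    have hfun : (fun t => g (x, t)) = (Iic x).indicator (fun t => Au x * u' t) := by
      funext t
      by_cases h : t ≤ x <;> simp [hgdef, hSdef, Set.indicator, h, Set.mem_Iic]
    rw [hfun, setIntegral_indicator measurableSet_Iic, Ioc_inter_Iic, min_eq_right hx.2,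
      MeasureTheory.integral_const_mul]
  have key2 : ∀ t ∈ Ioc a b, (∫ x in Ioc a b, g (x, t)) = u' t * (Fp Au b - Fp Au t) := by
    intro t ht
    have hgt : (fun x => g (x, t)) = (Ici t).indicator (fun x => Au x * u' t) := by
      funext x
      by_cases h : t ≤ x <;> simp [hgdef, hSdef, Set.indicator, h, Set.mem_Ici]
    have hset : Ioc a b ∩ Ici t = Icc t b := by
      ext y
      simp only [mem_inter_iff, mem_Ioc, mem_Ici, mem_Icc]
      exact ⟨fun h => ⟨h.2, h.1.2⟩, fun h => ⟨⟨lt_of_lt_of_le ht.1 h.1, h.2⟩, h.1⟩⟩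
    have hFtb : Fp Au b - Fp Au t = ∫ x in Icc t b, Au x := by
      rw [Fp_sub hu ⟨(hsub ht).1.le, (hsub ht).2.le⟩ ⟨hb.1.le, hb.2.le⟩, integral_of_le ht.2,
        MeasureTheory.integral_Icc_eq_integral_Ioc]
    rw [hgt, setIntegral_indicator measurableSet_Ici, hset, MeasureTheory.integral_mul_const,
      hFtb, mul_comm]
  have hswap : (∫ x in Ioc a b, ∫ t in Ioc a b, g (x, t))
      = ∫ t in Ioc a b, ∫ x in Ioc a b, g (x, t) :=
    MeasureTheory.integral_integral_swap (f := fun x t => g (x, t)) hgint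
  have hu'F : IntegrableOn (fun t => u' t * Fp Au t) (Ioc a b) :=
    hu'I.mul_continuousOn_of_subset ((Fp_contOn hu).mono (Icc_subset_Icc ha.1.le hb.2.le))
      measurableSet_Ioc isCompact_Icc Ioc_subset_Icc_self
  have hu'int : (∫ t in Ioc a b, u' t) = u b - u a := by
    rw [← integral_of_le hab]; exact (hu.locAC a b ha hb).symm
  have hstep3 : (∫ t in Ioc a b, u' t * (Fp Au b - Fp Au t))
      = Fp Au b * (u b - u a) - ∫ t in Ioc a b, u' t * Fp Au t := by
    have hptw : ∀ t, u' t * (Fp Au b - Fp Au t) = Fp Au b * u' t - u' t * Fp Au t :=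
      fun t => by ring
    simp_rw [hptw]
    rw [integral_sub (hu'I.const_mul _) hu'F, MeasureTheory.integral_const_mul, hu'int]
  have hlast : (∫ t in Ioc a b, u' t * Fp Au t) = ∫ t in Ioc a b, (1 - t ^ 2) * u' t ^ 2 := by
    refine setIntegral_congr_fun measurableSet_Ioc fun t ht => ?_
    rw [integrand_eq hu (hsub ht)]; ring
  have hIoc : ∫ x in Ioc a b, Au x * u x
      = Fp Au b * u b - Fp Au a * u a - ∫ x in Ioc a b, (1 - x ^ 2) * u' x ^ 2 := by
    rw [hdec, hstep2, setIntegral_congr_fun measurableSet_Ioc key1, hswap,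
      setIntegral_congr_fun measurableSet_Ioc key2, hstep3, hlast]
    ring
  rw [← MeasureTheory.integral_Ioc_eq_integral_Ioo,
    ← MeasureTheory.integral_Ioc_eq_integral_Ioo, hIoc]


theorem main (hu : MemDA u u' Au) :
    IntegrableOn (fun x => (1 - x ^ 2) * u' x ^ 2) (Ioo (-1:ℝ) 1) ∧
    (∫ x in Ioo (-1:ℝ) 1, Au x * u x)
      = -∫ x in Ioo (-1:ℝ) 1, (1 - x ^ 2) * u' x ^ 2 ∧
    (∫ x in Ioo (-1:ℝ) 1, Au x * u x) ≤ 0 := by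
  have hint := integrand_integrableOn hu
  have hAuu := Auu_integrableOn hu
  set e : ℕ → ℝ := fun n => ((n : ℝ) + 2)⁻¹ with he
  have he_pos : ∀ n, 0 < e n := fun n => by positivity
  have he_le : ∀ n, e n ≤ 1 / 2 := by
    intro n
    have h2 : (2:ℝ) ≤ (n : ℝ) + 2 := by linarith [Nat.cast_nonneg (α := ℝ) n]
    have := inv_anti₀ (by norm_num : (0:ℝ) < 2) h2
    simpa [he] using this
  have haI : ∀ n, (-1 + e n) ∈ Ioo (-1:ℝ) 1 := fun n =>
    ⟨by linarith [he_pos n], by linarith [he_le n]⟩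
  have hbI : ∀ n, (1 - e n) ∈ Ioo (-1:ℝ) 1 := fun n =>
    ⟨by linarith [he_le n], by linarith [he_pos n]⟩
  have hab : ∀ n, -1 + e n ≤ 1 - e n := fun n => by linarith [he_le n]
  have hmono : Monotone (fun n => Ioo (-1 + e n) (1 - e n)) := by
    intro m n hmn
    have hcast : (m : ℝ) + 2 ≤ (n : ℝ) + 2 := by exact_mod_cast by omega
    have hle : e n ≤ e m := inv_anti₀ (by positivity) hcast
    exact Ioo_subset_Ioo (by linarith) (by linarith)
  have hunion : (⋃ n, Ioo (-1 + e n) (1 - e n)) = Ioo (-1:ℝ) 1 := by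
    ext x
    simp only [mem_iUnion, mem_Ioo]
    constructor
    · rintro ⟨n, h1, h2⟩
      exact ⟨by linarith [he_pos n], by linarith [he_pos n]⟩
    · rintro ⟨h1, h2⟩
      obtain ⟨n, hn⟩ := exists_nat_one_div_lt (show (0:ℝ) < min (x + 1) (1 - x) by
        apply lt_min <;> linarith)
      have hen : e n < min (x + 1) (1 - x) := by
        refine lt_of_le_of_lt ?_ hn
        rw [he, one_div]
        exact inv_anti₀ (by positivity) (by linarith)
      exact ⟨n, by linarith [lt_of_lt_of_le hen (min_le_left _ _)],
        by linarith [lt_of_lt_of_le hen (min_le_right _ _)]⟩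
  have htend1 : Tendsto (fun n => ∫ x in Ioo (-1 + e n) (1 - e n), Au x * u x) atTop
      (nhds (∫ x in Ioo (-1:ℝ) 1, Au x * u x)) := by
    have := tendsto_setIntegral_of_monotone (fun n => measurableSet_Ioo) hmono
      (by rw [hunion]; exact hAuu)
    rwa [hunion] at this
  have htend2 : Tendsto (fun n => ∫ x in Ioo (-1 + e n) (1 - e n), (1 - x ^ 2) * u' x ^ 2) atTop
      (nhds (∫ x in Ioo (-1:ℝ) 1, (1 - x ^ 2) * u' x ^ 2)) := by
    have := tendsto_setIntegral_of_monotone (fun n => measurableSet_Ioo) hmono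
      (by rw [hunion]; exact hint)
    rwa [hunion] at this
  have hsqrt0 : Tendsto (fun n => Real.sqrt (e n)) atTop (nhds 0) := by
    have h1 : Tendsto e atTop (nhds 0) :=
      tendsto_inv_atTop_zero.comp
        (tendsto_atTop_add_const_right _ 2 tendsto_natCast_atTop_atTop)
    have h2 := (Real.continuous_sqrt.tendsto 0).comp h1
    simpa [Function.comp_def] using h2
  set K : ℝ := |u 0| + 2 * CC Au with hK
  have hK0 : 0 ≤ K := by have := CC_pos Au; have := abs_nonneg (u 0); unfold K; linarith
  have hb_bdry : Tendsto (fun n => Fp Au (1 - e n) * u (1 - e n)) atTop (nhds 0) := by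
    refine squeeze_zero_norm (a := fun n => CC Au * K * Real.sqrt (e n)) (fun n => ?_) ?_
    · rw [Real.norm_eq_abs, abs_mul]
      have h1 : |Fp Au (1 - e n)| ≤ CC Au * Real.sqrt (e n) := by
        have := Fp_le_right hu (hbI n)
        simpa using this
      have h2 : |u (1 - e n)| ≤ K := u_bound hu (hbI n)
      calc |Fp Au (1 - e n)| * |u (1 - e n)|
          ≤ (CC Au * Real.sqrt (e n)) * K :=
            mul_le_mul h1 h2 (abs_nonneg _) (mul_nonneg (CC_pos Au).le (Real.sqrt_nonneg _))
        _ = CC Au * K * Real.sqrt (e n) := by ring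
    · simpa using hsqrt0.const_mul (CC Au * K)
  have ha_bdry : Tendsto (fun n => Fp Au (-1 + e n) * u (-1 + e n)) atTop (nhds 0) := by
    refine squeeze_zero_norm (a := fun n => CC Au * K * Real.sqrt (e n)) (fun n => ?_) ?_
    · rw [Real.norm_eq_abs, abs_mul]
      have h1 : |Fp Au (-1 + e n)| ≤ CC Au * Real.sqrt (e n) := by
        have := Fp_le_left hu (haI n)
        simpa using this
      have h2 : |u (-1 + e n)| ≤ K := u_bound hu (haI n)
      calc |Fp Au (-1 + e n)| * |u (-1 + e n)|
          ≤ (CC Au * Real.sqrt (e n)) * K :=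
            mul_le_mul h1 h2 (abs_nonneg _) (mul_nonneg (CC_pos Au).le (Real.sqrt_nonneg _))
        _ = CC Au * K * Real.sqrt (e n) := by ring
    · simpa using hsqrt0.const_mul (CC Au * K)
  have hcomb : Tendsto (fun n => Fp Au (1 - e n) * u (1 - e n)
        - Fp Au (-1 + e n) * u (-1 + e n)
        - ∫ x in Ioo (-1 + e n) (1 - e n), (1 - x ^ 2) * u' x ^ 2) atTop
      (nhds (0 - 0 - ∫ x in Ioo (-1:ℝ) 1, (1 - x ^ 2) * u' x ^ 2)) :=
    (hb_bdry.sub ha_bdry).sub htend2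
  have heqfun : (fun n => ∫ x in Ioo (-1 + e n) (1 - e n), Au x * u x)
      = (fun n => Fp Au (1 - e n) * u (1 - e n) - Fp Au (-1 + e n) * u (-1 + e n)
          - ∫ x in Ioo (-1 + e n) (1 - e n), (1 - x ^ 2) * u' x ^ 2) :=
    funext fun n => parts hu (haI n) (hbI n) (hab n)
  have hmain : (∫ x in Ioo (-1:ℝ) 1, Au x * u x)
      = 0 - 0 - ∫ x in Ioo (-1:ℝ) 1, (1 - x ^ 2) * u' x ^ 2 := by
    refine tendsto_nhds_unique htend1 ?_
    rw [heqfun]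
    exact hcomb
  have hnn : 0 ≤ ∫ x in Ioo (-1:ℝ) 1, (1 - x ^ 2) * u' x ^ 2 :=
    setIntegral_nonneg measurableSet_Ioo fun x hx =>
      mul_nonneg (one_sub_sq_pos hx).le (sq_nonneg _)
  exact ⟨hint, by linarith, by linarith⟩

end DAaux

/-- Integration by parts and dissipativity for the degenerate operator: for `u ∈ D(A)`,
`√(1-x²) u' ∈ L²(-1,1)` (so `D(A) ⊆ V`), `∫ Au · u = - ∫ (1-x²) u'²`, and `∫ Au · u ≤ 0`. -/
theorem DA_integration_by_parts (u u' Au : ℝ → ℝ) (hu : MemDA u u' Au) :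
    IntegrableOn (fun x => (1 - x ^ 2) * u' x ^ 2) (Ioo (-1:ℝ) 1) ∧
    (∫ x in Ioo (-1:ℝ) 1, Au x * u x)
      = -∫ x in Ioo (-1:ℝ) 1, (1 - x ^ 2) * u' x ^ 2 ∧
    (∫ x in Ioo (-1:ℝ) 1, Au x * u x) ≤ 0 := by
  exact DAaux.main hu
end
end

section
/- (An unbounded function in V) Let β∈(1/4,1/2) and define u:(−1,1)→ℝ by u(x)=|ln(1−x²)|^β for x≠0 and u(0)=0. Then u∈L²(−1,1), u is locally absolutely continuous on (−1,1) with ∫_{−1}^{1}(1−x²)·u′(x)² dx < ∞ (hence u∈V), and u(x)→+∞ as x→1⁻ and as x→(−1)⁺; in particular u is not bounded, so V is not contained in L^∞(−1,1). -/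
open MeasureTheory Set Filter

set_option maxHeartbeats 1000000

noncomputable section

namespace UnboundedV

/-- `L x = -log (1-x²)`, so that `|log (1-x²)| = L x` on `(-1,1)`. -/
def L (x : ℝ) : ℝ := -Real.log (1 - x ^ 2)

/-- The candidate derivative. -/
def du (β : ℝ) : ℝ → ℝ := fun x => if x = 0 then 0
  else β * |Real.log (1 - x ^ 2)| ^ (β - 1) * (2 * x / (1 - x ^ 2))

lemma D_pos {x : ℝ} (hx : x ∈ Ioo (-1:ℝ) 1) : 0 < 1 - x ^ 2 := by
  nlinarith [hx.1, hx.2]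

lemma sq_le_L {x : ℝ} (hx : x ∈ Ioo (-1:ℝ) 1) : x ^ 2 ≤ L x := by
  have h := Real.log_le_sub_one_of_pos (D_pos hx)
  simp only [L]; linarith

lemma L_nonneg {x : ℝ} (hx : x ∈ Ioo (-1:ℝ) 1) : 0 ≤ L x :=
  le_trans (sq_nonneg x) (sq_le_L hx)

lemma L_pos {x : ℝ} (hx : x ∈ Ioo (-1:ℝ) 1) (hx0 : x ≠ 0) : 0 < L x :=
  lt_of_lt_of_le (by positivity) (sq_le_L hx)

lemma abs_log_eq {x : ℝ} (hx : x ∈ Ioo (-1:ℝ) 1) : |Real.log (1 - x ^ 2)| = L x := by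
  rw [abs_of_nonpos (Real.log_nonpos (D_pos hx).le (by nlinarith [sq_nonneg x]))]; rfl

lemma hasDerivAt_L {x : ℝ} (hx : x ∈ Ioo (-1:ℝ) 1) :
    HasDerivAt L (2 * x / (1 - x ^ 2)) x := by
  have h1 : HasDerivAt (fun y : ℝ => 1 - y ^ 2) (-(2 * x)) x := by
    simpa using (hasDerivAt_pow 2 x).const_sub 1
  have h2 := (h1.log (D_pos hx).ne').neg
  exact h2.congr_deriv (by ring)

lemma hasDerivAt_Lrpow (r : ℝ) {x : ℝ} (hx : x ∈ Ioo (-1:ℝ) 1) (hx0 : x ≠ 0) :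
    HasDerivAt (fun y => L y ^ r) (r * L x ^ (r - 1) * (2 * x / (1 - x ^ 2))) x := by
  have := (hasDerivAt_L hx).rpow_const (p := r) (Or.inl (L_pos hx hx0).ne')
  convert this using 1; ring

lemma continuousAt_L {x : ℝ} (hx : x ∈ Ioo (-1:ℝ) 1) : ContinuousAt L x := by
  have h1 : ContinuousAt (fun y : ℝ => 1 - y ^ 2) x := by fun_prop
  have h2 : ContinuousAt Real.log (1 - x ^ 2) := Real.continuousAt_log (D_pos hx).ne'
  exact (ContinuousAt.comp (g := Real.log) (f := fun y : ℝ => 1 - y ^ 2) h2 h1).neg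

lemma continuousOn_Lrpow (r : ℝ) (hr : 0 ≤ r) :
    ContinuousOn (fun x => L x ^ r) (Ioo (-1:ℝ) 1) := by
  apply ContinuousOn.rpow_const _ (fun x _ => Or.inr hr)
  exact ((continuousOn_const.sub (continuousOn_pow 2)).log
    (fun x hx => (D_pos hx).ne')).neg

lemma measurable_du (β : ℝ) : Measurable (du β) := by
  apply Measurable.ite measurableSet_eq measurable_const
  apply Measurable.mul
  · exact ((Real.measurable_log.comp
      (measurable_const.sub (measurable_id.pow_const 2))).abs.pow_const (β-1)).const_mul β
  · exact (measurable_id.const_mul 2).div (measurable_const.sub (measurable_id.pow_const 2))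

lemma du_neg (β : ℝ) (x : ℝ) : du β (-x) = - du β x := by
  unfold du
  by_cases hx : x = 0
  · simp [hx]
  · rw [if_neg (by simpa using hx), if_neg hx]
    rw [neg_pow, show ((-1:ℝ))^2 = 1 by norm_num, one_mul]
    ring

/-- `|x| ^ r` is interval integrable for `r > -1`. -/
lemma intervalIntegrable_abs_rpow {r : ℝ} (hr : -1 < r) (a b : ℝ) :
    IntervalIntegrable (fun x => |x| ^ r) volume a b := by
  have key : ∀ c : ℝ, 0 ≤ c → IntervalIntegrable (fun x => |x| ^ r) volume 0 c := by
    intro c hc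
    have h : IntervalIntegrable (fun x : ℝ => x ^ r) volume 0 c :=
      intervalIntegral.intervalIntegrable_rpow' hr
    rw [intervalIntegrable_iff, uIoc_of_le hc] at h ⊢
    exact h.congr_fun (fun x hx => by rw [abs_of_pos hx.1]) measurableSet_Ioc
  have key' : ∀ c : ℝ, IntervalIntegrable (fun x => |x| ^ r) volume 0 c := by
    intro c
    rcases le_or_gt 0 c with hc | hc
    · exact key c hc
    · have h := (IntervalIntegrable.iff_comp_neg (f := fun x => |x| ^ r)).mp (key (-c) (by linarith))
      simp only [abs_neg, neg_zero, neg_neg] at h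
      exact h
  exact (key' a).symm.trans (key' b)

/-- Even functions integrable on `(0,1)` are integrable on `(-1,1)`. -/
lemma evenIntegrable {f : ℝ → ℝ} (hsymm : ∀ x, f (-x) = f x)
    (h : IntegrableOn f (Ioo 0 1)) : IntegrableOn f (Ioo (-1:ℝ) 1) := by
  have h1 : IntervalIntegrable f volume 0 1 := by
    rw [intervalIntegrable_iff, uIoc_of_le zero_le_one,
      integrableOn_Ioc_iff_integrableOn_Ioo]
    exact h
  have h2 : IntervalIntegrable f volume (-1) 0 := by
    have h' := (IntervalIntegrable.iff_comp_neg (f := f)).mp h1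
    simp only [hsymm, neg_zero] at h'
    exact h'.symm
  have h3 := h2.trans h1
  rw [intervalIntegrable_iff, uIoc_of_le (by norm_num : (-1:ℝ) ≤ 1),
    integrableOn_Ioc_iff_integrableOn_Ioo] at h3
  exact h3

lemma sq_rpow (x : ℝ) (r : ℝ) : ((x:ℝ) ^ 2) ^ r = |x| ^ (2 * r) := by
  rw [← sq_abs, ← Real.rpow_natCast |x| 2, ← Real.rpow_mul (abs_nonneg x)]
  norm_num

lemma L_le {x : ℝ} (hx : x ∈ Ioo (-1:ℝ) 1) {ε : ℝ} (hε : 0 < ε) :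
    ε * L x ≤ (1 - x ^ 2) ^ (-ε) := by
  have h1 := Real.log_le_sub_one_of_pos (Real.rpow_pos_of_pos (D_pos hx) (-ε))
  rw [Real.log_rpow (D_pos hx)] at h1
  simp only [L]
  nlinarith [Real.rpow_pos_of_pos (D_pos hx) (-ε)]

section Beta

variable {β : ℝ} (hβ : β ∈ Ioo (1/4 : ℝ) (1/2))
include hβ

lemma hβ0 : 0 < β := lt_trans (by norm_num) hβ.1

/-- Derivative of `u` away from `0`. -/
lemma hasDerivAt_u {x : ℝ} (hx : x ∈ Ioo (-1:ℝ) 1) (hx0 : x ≠ 0) :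
    HasDerivAt (fun y => |Real.log (1 - y ^ 2)| ^ β) (du β x) x := by
  have h := hasDerivAt_Lrpow β hx hx0
  have he : (fun y => |Real.log (1 - y ^ 2)| ^ β) =ᶠ[nhds x] (fun y => L y ^ β) := by
    filter_upwards [isOpen_Ioo.mem_nhds hx] with y hy
    rw [abs_log_eq hy]
  have h2 := h.congr_of_eventuallyEq he
  have : du β x = β * L x ^ (β - 1) * (2 * x / (1 - x ^ 2)) := by
    simp only [du, if_neg hx0, abs_log_eq hx]
  rw [this]
  exact h2

/-- Interval integrability of the derivative within `(-1,1)`. -/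
lemma du_intervalIntegrable {a b : ℝ} (ha : a ∈ Ioo (-1:ℝ) 1) (hb : b ∈ Ioo (-1:ℝ) 1) :
    IntervalIntegrable (du β) volume a b := by
  set m : ℝ := max |a| |b| with hm
  have hm1 : m < 1 := max_lt (abs_lt.2 ⟨ha.1, ha.2⟩) (abs_lt.2 ⟨hb.1, hb.2⟩)
  have hm0 : 0 ≤ m := le_trans (abs_nonneg a) (le_max_left _ _)
  have hmm : 0 < 1 - m ^ 2 := by nlinarith
  have habs : ∀ x ∈ Set.uIoc a b, |x| ≤ m := by
    intro x hx
    rcases le_total a b with h | h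
    · rw [uIoc_of_le h] at hx
      exact le_trans (abs_le_max_abs_abs hx.1.le hx.2) le_rfl
    · rw [uIoc_of_ge h] at hx
      calc |x| ≤ max |b| |a| := abs_le_max_abs_abs hx.1.le hx.2
        _ = m := max_comm _ _
  have hβp := hβ0 hβ
  have hint : IntervalIntegrable (fun x => (2*β/(1-m^2)) * |x| ^ (2*β - 1)) volume a b :=
    (intervalIntegrable_abs_rpow (by linarith [hβ.1] : (-1:ℝ) < 2*β - 1) a b).const_mul _
  apply hint.mono_fun ((measurable_du β).aestronglyMeasurable)
  rw [Filter.EventuallyLE, ae_restrict_iff' measurableSet_uIoc]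
  apply Eventually.of_forall
  intro x hx
  have hxm := habs x hx
  have hxI : x ∈ Ioo (-1:ℝ) 1 := abs_lt.1 (lt_of_le_of_lt hxm hm1)
  by_cases hx0 : x = 0
  · show ‖du β x‖ ≤ ‖_‖
    rw [show du β x = 0 by simp [du, hx0], norm_zero]
    exact norm_nonneg _
  · have hax : 0 < |x| := abs_pos.2 hx0
    have hD : 0 < 1 - x ^ 2 := D_pos hxI
    have hDm : 1 - m ^ 2 ≤ 1 - x ^ 2 := by
      have : x ^ 2 ≤ m ^ 2 := by
        rw [← sq_abs x]; exact pow_le_pow_left₀ (abs_nonneg x) hxm 2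
      linarith
    have hL1 : L x ^ (β - 1) ≤ |x| ^ (2*β - 2) := by
      have h1 : L x ^ (β - 1) ≤ (x ^ 2) ^ (β - 1) :=
        Real.rpow_le_rpow_of_nonpos (by positivity) (sq_le_L hxI)
          (by linarith [hβ.2])
      rw [sq_rpow x (β - 1)] at h1
      convert h1 using 2; ring
    have hnorm : ‖du β x‖ = β * L x ^ (β - 1) * (2 * |x| / (1 - x ^ 2)) := by
      simp only [du, if_neg hx0, abs_log_eq hxI]
      rw [Real.norm_eq_abs, abs_mul, abs_mul, abs_div, abs_of_pos hβp,
        abs_of_nonneg (Real.rpow_nonneg (L_nonneg hxI) _), abs_of_pos hD, abs_mul,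
        abs_of_pos (by norm_num : (0:ℝ) < 2)]
    have hRHS : ‖(2*β/(1-m^2)) * |x| ^ (2*β - 1)‖ = (2*β/(1-m^2)) * |x| ^ (2*β - 1) :=
      Real.norm_of_nonneg (by positivity)
    show ‖du β x‖ ≤ ‖(2*β/(1-m^2)) * |x| ^ (2*β - 1)‖
    rw [hnorm, hRHS]
    have key : β * L x ^ (β - 1) * (2 * |x| / (1 - x ^ 2))
        ≤ β * |x| ^ (2*β - 2) * (2 * |x| / (1 - m ^ 2)) := by
      apply mul_le_mul
      · exact mul_le_mul_of_nonneg_left hL1 hβp.le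
      · apply div_le_div_of_nonneg_left (by positivity) hmm hDm
      · positivity
      · positivity
    apply le_trans key
    apply le_of_eq
    have hxx : |x| ^ (2*β - 2) * |x| = |x| ^ (2*β - 1) := by
      rw [show (2*β - 1) = (2*β - 2) + 1 by ring, Real.rpow_add hax, Real.rpow_one]
    calc β * |x| ^ (2*β - 2) * (2 * |x| / (1 - m ^ 2))
        = (2*β/(1-m^2)) * (|x| ^ (2*β - 2) * |x|) := by ring
      _ = (2*β/(1-m^2)) * |x| ^ (2*β - 1) := by rw [hxx]

lemma u_zero : |Real.log (1 - (0:ℝ) ^ 2)| ^ β = 0 := by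
  have := hβ0 hβ
  norm_num [Real.zero_rpow this.ne']

set_option maxHeartbeats 1000000 in
/-- Fundamental theorem of calculus from `0` to `c`. -/
lemma key_FTC {c : ℝ} (hc : c ∈ Ioo (-1:ℝ) 1) :
    |Real.log (1 - c ^ 2)| ^ β = ∫ t in (0:ℝ)..c, du β t := by
  have h0 : (0:ℝ) ∈ Ioo (-1:ℝ) 1 := by norm_num
  have hβp := hβ0 hβ
  have hint : IntervalIntegrable (du β) volume 0 c := du_intervalIntegrable hβ h0 hc
  have hcont : ContinuousOn (fun y => |Real.log (1 - y ^ 2)| ^ β) (Ioo (-1:ℝ) 1) :=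
    (continuousOn_Lrpow β hβp.le).congr (fun y hy => by rw [abs_log_eq hy])
  rcases le_or_gt 0 c with h0c | h0c
  · have hsub : Icc (0:ℝ) c ⊆ Ioo (-1:ℝ) 1 := fun x hx =>
      ⟨by linarith [hx.1], lt_of_le_of_lt hx.2 hc.2⟩
    have := intervalIntegral.integral_eq_sub_of_hasDeriv_right_of_le h0c
      (hcont.mono hsub)
      (fun x hx => ((hasDerivAt_u hβ ⟨by linarith [hx.1], lt_trans hx.2 hc.2⟩
        (ne_of_gt hx.1)).hasDerivWithinAt))
      hint
    rw [this, u_zero hβ, sub_zero]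
  · have hsub : Icc c (0:ℝ) ⊆ Ioo (-1:ℝ) 1 := fun x hx =>
      ⟨lt_of_lt_of_le hc.1 hx.1, by linarith [hx.2]⟩
    have := intervalIntegral.integral_eq_sub_of_hasDeriv_right_of_le h0c.le
      (hcont.mono hsub)
      (fun x hx => ((hasDerivAt_u hβ ⟨lt_trans hc.1 hx.1, by linarith [hx.2]⟩
        (ne_of_lt hx.2)).hasDerivWithinAt))
      hint.symm
    rw [intervalIntegral.integral_symm, this, u_zero hβ]
    ring

/-- Square integrability of `u` on `(0,1)`. -/
lemma sq_int_right : IntegrableOn (fun x => (|Real.log (1 - x ^ 2)| ^ β) ^ 2) (Ioo (0:ℝ) 1) := by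
  have hβp := hβ0 hβ
  have hg : IntegrableOn (fun x => (4*β) ^ (2*β) * (1 - x) ^ (-(1:ℝ)/2)) (Ioo (0:ℝ) 1) := by
    have h1 : IntervalIntegrable (fun x : ℝ => x ^ (-(1:ℝ)/2)) volume 1 0 :=
      intervalIntegral.intervalIntegrable_rpow' (by norm_num)
    have h2 := h1.comp_sub_left 1
    simp only [sub_self, sub_zero] at h2
    rw [intervalIntegrable_iff, uIoc_of_le zero_le_one,
      integrableOn_Ioc_iff_integrableOn_Ioo] at h2
    exact h2.const_mul _
  apply Integrable.mono' hg
  · exact (((Real.measurable_log.comp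
      (measurable_const.sub (measurable_id.pow_const 2))).abs.pow_const β).pow_const
      2).aestronglyMeasurable
  · rw [ae_restrict_iff' measurableSet_Ioo]
    apply Eventually.of_forall
    intro x hx
    have hxI : x ∈ Ioo (-1:ℝ) 1 := ⟨by linarith [hx.1], hx.2⟩
    have hD := D_pos hxI
    rw [abs_log_eq hxI, Real.norm_eq_abs, abs_of_nonneg (sq_nonneg _)]
    have e1 : (L x ^ β) ^ 2 = L x ^ (2*β) := by
      rw [← Real.rpow_natCast (L x ^ β) 2, ← Real.rpow_mul (L_nonneg hxI)]
      congr 1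
      push_cast
      ring
    rw [e1]
    have hε : (0:ℝ) < 1/(4*β) := by positivity
    have hβne : β ≠ 0 := hβp.ne'
    have h1 : L x ≤ 4*β * (1 - x ^ 2) ^ (-(1/(4*β))) := by
      have h0 := L_le hxI hε
      calc L x = (4*β) * ((1/(4*β)) * L x) := by field_simp
        _ ≤ 4*β * (1 - x ^ 2) ^ (-(1/(4*β))) :=
          mul_le_mul_of_nonneg_left h0 (by positivity)
    have h2 : L x ^ (2*β) ≤ (4*β * (1 - x ^ 2) ^ (-(1/(4*β)))) ^ (2*β) :=
      Real.rpow_le_rpow (L_nonneg hxI) h1 (by positivity)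
    have h3 : (4*β * (1 - x ^ 2) ^ (-(1/(4*β)))) ^ (2*β)
        = (4*β) ^ (2*β) * (1 - x ^ 2) ^ (-(1:ℝ)/2) := by
      rw [Real.mul_rpow (by positivity) (Real.rpow_nonneg hD.le _),
        ← Real.rpow_mul hD.le,
        show -(1/(4*β)) * (2*β) = -(1:ℝ)/2 by field_simp; ring]
    have h4 : (1 - x ^ 2) ^ (-(1:ℝ)/2) ≤ (1 - x) ^ (-(1:ℝ)/2) := by
      apply Real.rpow_le_rpow_of_nonpos (by linarith [hx.2])
        (by nlinarith [hx.1, hx.2]) (by norm_num)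
    calc L x ^ (2*β) ≤ (4*β) ^ (2*β) * (1 - x ^ 2) ^ (-(1:ℝ)/2) := by rw [← h3]; exact h2
      _ ≤ (4*β) ^ (2*β) * (1 - x) ^ (-(1:ℝ)/2) := by
          apply mul_le_mul_of_nonneg_left h4 (by positivity)

lemma wsq_eval {x : ℝ} (hx : x ∈ Ioo (-1:ℝ) 1) (hx0 : x ≠ 0) :
    (1 - x ^ 2) * (du β x) ^ 2 = 4*β^2 * x^2 * L x ^ (2*β - 2) / (1 - x ^ 2) := by
  have hD := D_pos hx
  simp only [du, if_neg hx0, abs_log_eq hx]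
  have hL2 : (L x ^ (β - 1)) ^ 2 = L x ^ (2*β - 2) := by
    rw [← Real.rpow_natCast (L x ^ (β - 1)) 2, ← Real.rpow_mul (L_nonneg hx)]
    congr 1
    push_cast
    ring
  rw [mul_pow, mul_pow, div_pow, hL2]
  field_simp
  ring

/-- Weighted square integrability of `u'` on `(0,1)`. -/
lemma wsq_int_right : IntegrableOn (fun x => (1 - x ^ 2) * (du β x) ^ 2) (Ioo (0:ℝ) 1) := by
  have hβp := hβ0 hβ
  have hmeas : Measurable (fun x : ℝ => (1 - x ^ 2) * (du β x) ^ 2) :=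
    (measurable_const.sub (measurable_id.pow_const 2)).mul ((measurable_du β).pow_const 2)
  have part1 : IntegrableOn (fun x => (1 - x ^ 2) * (du β x) ^ 2) (Ioc (0:ℝ) (1/2)) := by
    have hg : IntegrableOn (fun x => (16/3*β^2) * |x| ^ (4*β - 2)) (Ioc (0:ℝ) (1/2)) := by
      have h := intervalIntegrable_abs_rpow (by linarith [hβ.1] : (-1:ℝ) < 4*β - 2) 0 (1/2)
      rw [intervalIntegrable_iff, uIoc_of_le (by norm_num : (0:ℝ) ≤ 1/2)] at h
      exact h.const_mul _
    apply Integrable.mono' hg hmeas.aestronglyMeasurable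
    rw [ae_restrict_iff' measurableSet_Ioc]
    apply Eventually.of_forall
    intro x hx
    have hxI : x ∈ Ioo (-1:ℝ) 1 := ⟨by linarith [hx.1], by linarith [hx.2]⟩
    have hx0 : x ≠ 0 := ne_of_gt hx.1
    have hax : 0 < |x| := abs_pos.2 hx0
    have hD := D_pos hxI
    have hLn : 0 ≤ L x ^ (2*β - 2) := Real.rpow_nonneg (L_nonneg hxI) _
    rw [Real.norm_eq_abs, wsq_eval hβ hxI hx0,
      abs_of_nonneg (div_nonneg (mul_nonneg (by positivity) hLn) hD.le)]
    have hL1 : L x ^ (2*β - 2) ≤ |x| ^ (4*β - 4) := by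
      have h1 : L x ^ (2*β - 2) ≤ (x ^ 2) ^ (2*β - 2) :=
        Real.rpow_le_rpow_of_nonpos (by positivity) (sq_le_L hxI)
          (by linarith [hβ.2])
      rw [sq_rpow x (2*β - 2)] at h1
      convert h1 using 2; ring
    have hDb : 1/(1 - x ^ 2) ≤ 4/3 := by
      rw [div_le_div_iff₀ hD (by norm_num)]
      nlinarith [hx.1, hx.2]
    have e2 : x ^ 2 = |x| ^ (2:ℝ) := by
      rw [← sq_abs, ← Real.rpow_natCast |x| 2]; norm_num
    calc 4*β^2 * x^2 * L x ^ (2*β - 2) / (1 - x ^ 2)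
        ≤ 4*β^2 * x^2 * |x| ^ (4*β - 4) / (1 - x ^ 2) := by
          gcongr
      _ = (4*β^2 * (x^2 * |x| ^ (4*β - 4))) * (1/(1 - x ^ 2)) := by ring
      _ ≤ (4*β^2 * (x^2 * |x| ^ (4*β - 4))) * (4/3) := by
          apply mul_le_mul_of_nonneg_left hDb (by positivity)
      _ = (16/3*β^2) * (x^2 * |x| ^ (4*β - 4)) := by ring
      _ = (16/3*β^2) * |x| ^ (4*β - 2) := by
          congr 1
          rw [e2, ← Real.rpow_add hax]
          congr 1; ring
  have part2 : IntegrableOn (fun x => (1 - x ^ 2) * (du β x) ^ 2) (Ioo (1/2:ℝ) 1) := by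
    set G : ℝ → ℝ := fun x => -(L x ^ (2*β - 1)) with hG
    set g' : ℝ → ℝ := fun x => (1 - 2*β) * L x ^ (2*β - 2) * (2 * x / (1 - x ^ 2)) with hg'
    have hGd : ∀ x ∈ Ioo (1/2:ℝ) 1, HasDerivAt G (g' x) x := by
      intro x hx
      have hxI : x ∈ Ioo (-1:ℝ) 1 := ⟨by linarith [hx.1], hx.2⟩
      have h := (hasDerivAt_Lrpow (2*β - 1) hxI (show (0:ℝ) < x by linarith [hx.1]).ne').neg
      refine h.congr_deriv ?_
      show _ = (1 - 2*β) * L x ^ (2*β - 2) * (2 * x / (1 - x ^ 2))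
      have : (2*β - 1) - 1 = 2*β - 2 := by ring
      rw [this]; ring
    have hGc : ContinuousOn G (Icc (1/2:ℝ) 1) := by
      intro x hx
      rcases lt_or_eq_of_le hx.2 with hx1 | hx1
      · have hxI : x ∈ Ioo (-1:ℝ) 1 := ⟨by linarith [hx.1], hx1⟩
        apply ContinuousAt.continuousWithinAt
        exact (ContinuousAt.rpow_const (continuousAt_L hxI)
          (Or.inl (L_pos hxI (by linarith [hx.1])).ne')).neg
      · subst hx1
        rw [← continuousWithinAt_diff_self]
        unfold ContinuousWithinAt
        have hG1 : G 1 = 0 := by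
          simp only [hG, L]
          norm_num [Real.zero_rpow (by linarith [hβ.2] : 2*β - 1 ≠ 0)]
        rw [hG1]
        have t1 : Tendsto (fun x : ℝ => 1 - x ^ 2) (nhdsWithin 1 (Icc (1/2:ℝ) 1 \ {1}))
            (nhdsWithin 0 (Ioi 0)) := by
          rw [tendsto_nhdsWithin_iff]
          constructor
          · have hc : Continuous (fun x : ℝ => 1 - x ^ 2) := by fun_prop
            have h : Tendsto (fun x : ℝ => 1 - x ^ 2)
                (nhdsWithin 1 (Icc (1/2:ℝ) 1 \ {1})) (nhds (1 - 1 ^ 2)) :=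
              (hc.tendsto 1).mono_left nhdsWithin_le_nhds
            rw [show (1:ℝ) - 1 ^ 2 = 0 by norm_num] at h
            exact h
          · filter_upwards [self_mem_nhdsWithin] with x hx
            have hx1 : x < 1 := lt_of_le_of_ne hx.1.2 (by simpa using hx.2)
            have := hx.1.1
            simp only [mem_Ioi]
            nlinarith
        have t2 : Tendsto (fun x : ℝ => L x) (nhdsWithin 1 (Icc (1/2:ℝ) 1 \ {1})) atTop :=
          (tendsto_neg_atBot_atTop.comp
            (Real.tendsto_log_nhdsGT_zero.comp t1))
        have t3 : Tendsto (fun y : ℝ => y ^ (2*β - 1)) atTop (nhds 0) := by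
          have := tendsto_rpow_neg_atTop (by linarith [hβ.2] : (0:ℝ) < 1 - 2*β)
          convert this using 2
          ring
        have := (t3.comp t2).neg
        rw [neg_zero] at this
        exact this
    have hg'pos : ∀ x ∈ Ioo (1/2:ℝ) 1, 0 ≤ g' x := by
      intro x hx
      have hxI : x ∈ Ioo (-1:ℝ) 1 := ⟨by linarith [hx.1], hx.2⟩
      have hD := D_pos hxI
      have hLn : 0 ≤ L x ^ (2*β - 2) := Real.rpow_nonneg (L_nonneg hxI) _
      have h2β : 0 < 1 - 2*β := by linarith [hβ.2]
      have hx0 : 0 < x := by linarith [hx.1]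
      exact mul_nonneg (mul_nonneg (by linarith) hLn)
        (div_nonneg (by linarith) hD.le)
    have hint := intervalIntegral.integrableOn_deriv_of_nonneg hGc hGd hg'pos
    have hint' : IntegrableOn (fun x => (2*β^2/(1-2*β)) * g' x) (Ioo (1/2:ℝ) 1) :=
      ((hint.mono_set Ioo_subset_Ioc_self).const_mul _)
    apply Integrable.mono' hint' hmeas.aestronglyMeasurable
    rw [ae_restrict_iff' measurableSet_Ioo]
    apply Eventually.of_forall
    intro x hx
    have hxI : x ∈ Ioo (-1:ℝ) 1 := ⟨by linarith [hx.1], hx.2⟩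
    have hx0 : x ≠ 0 := ne_of_gt (by linarith [hx.1])
    have hD := D_pos hxI
    have hLn : 0 ≤ L x ^ (2*β - 2) := Real.rpow_nonneg (L_nonneg hxI) _
    rw [Real.norm_eq_abs, wsq_eval hβ hxI hx0, abs_of_nonneg (by positivity)]
    have h2β : 0 < 1 - 2*β := by linarith [hβ.2]
    have expand : (2*β^2/(1-2*β)) * g' x = 4*β^2 * x * L x ^ (2*β - 2) / (1 - x ^ 2) := by
      simp only [hg']
      field_simp
      ring
    rw [expand]
    gcongr
    have hx2 : x ^ 2 ≤ x := by nlinarith [hx.1, hx.2]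
    nlinarith [mul_le_mul_of_nonneg_left hx2 (mul_nonneg (by positivity : (0:ℝ) ≤ 4*β^2) hLn)]
  have : IntegrableOn (fun x => (1 - x ^ 2) * (du β x) ^ 2)
      (Ioc (0:ℝ) (1/2) ∪ Ioo (1/2:ℝ) 1) := part1.union part2
  apply this.mono_set
  intro x hx
  rcases le_or_gt x (1/2) with h | h
  · exact Or.inl ⟨hx.1, h⟩
  · exact Or.inr ⟨h, hx.2⟩

/-- The blow-up of `u`. -/
lemma tendsto_top {l : Filter ℝ} (h : Tendsto (fun x : ℝ => 1 - x ^ 2) l (nhdsWithin 0 (Ioi 0))) :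
    Tendsto (fun x : ℝ => |Real.log (1 - x ^ 2)| ^ β) l atTop := by
  have hβp := hβ0 hβ
  have h1 : Tendsto (fun x : ℝ => -Real.log (1 - x ^ 2)) l atTop :=
    tendsto_neg_atBot_atTop.comp (Real.tendsto_log_nhdsGT_zero.comp h)
  have h2 := (tendsto_rpow_atTop hβp).comp h1
  apply h2.congr'
  have hpos : ∀ᶠ x in l, 0 < 1 - x ^ 2 := h.eventually self_mem_nhdsWithin
  have hle : ∀ᶠ x in l, 1 - x ^ 2 < 1 :=
    Filter.Tendsto.eventually_lt_const (by norm_num)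
      (h.mono_right nhdsWithin_le_nhds)
  filter_upwards [hpos, hle] with x h0 h1'
  simp only [Function.comp]
  rw [abs_of_nonpos (Real.log_nonpos h0.le h1'.le)]

lemma tendsto_one : Tendsto (fun x : ℝ => |Real.log (1 - x ^ 2)| ^ β)
    (nhdsWithin 1 (Iio (1:ℝ))) atTop := by
  apply tendsto_top hβ
  rw [tendsto_nhdsWithin_iff]
  constructor
  · have hc : Continuous (fun x : ℝ => 1 - x ^ 2) := by fun_prop
    have h : Tendsto (fun x : ℝ => 1 - x ^ 2) (nhdsWithin 1 (Iio (1:ℝ)))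
        (nhds (1 - 1 ^ 2)) := (hc.tendsto 1).mono_left nhdsWithin_le_nhds
    norm_num at h
    exact h
  · filter_upwards [Ioo_mem_nhdsLT_of_mem (show (1:ℝ) ∈ Ioc 0 1 by norm_num)] with x hx
    simp only [mem_Ioi]
    nlinarith [hx.1, hx.2]

lemma tendsto_negone : Tendsto (fun x : ℝ => |Real.log (1 - x ^ 2)| ^ β)
    (nhdsWithin (-1) (Ioi (-1:ℝ))) atTop := by
  apply tendsto_top hβ
  rw [tendsto_nhdsWithin_iff]
  constructor
  · have hc : Continuous (fun x : ℝ => 1 - x ^ 2) := by fun_prop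
    have h : Tendsto (fun x : ℝ => 1 - x ^ 2) (nhdsWithin (-1) (Ioi (-1:ℝ)))
        (nhds (1 - (-1) ^ 2)) := (hc.tendsto (-1)).mono_left nhdsWithin_le_nhds
    norm_num at h
    exact h
  · filter_upwards [Ioo_mem_nhdsGT_of_mem (show (-1:ℝ) ∈ Ico (-1) 0 by norm_num)] with x hx
    simp only [mem_Ioi]
    nlinarith [hx.1, hx.2]

end Beta

end UnboundedV

open UnboundedV in
set_option maxHeartbeats 4000000 in
/-- An unbounded function in `V`: for `β ∈ (1/4, 1/2)`, the function
`u(x) = |log(1-x²)|^β` belongs to `V` (with the natural a.e. derivative) and tends to `+∞`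
as `x → 1⁻` and as `x → (-1)⁺`; in particular it is not bounded on `(-1,1)`, so `V` is not
contained in `L^∞(-1,1)`. -/
theorem unbounded_function_in_V (β : ℝ) (hβ : β ∈ Ioo (1/4 : ℝ) (1/2)) :
    MemV (fun x => |Real.log (1 - x ^ 2)| ^ β)
      (fun x => if x = 0 then 0
        else β * |Real.log (1 - x ^ 2)| ^ (β - 1) * (2 * x / (1 - x ^ 2))) ∧
    Tendsto (fun x : ℝ => |Real.log (1 - x ^ 2)| ^ β)
      (nhdsWithin 1 (Iio (1:ℝ))) atTop ∧
    Tendsto (fun x : ℝ => |Real.log (1 - x ^ 2)| ^ β)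
      (nhdsWithin (-1) (Ioi (-1:ℝ))) atTop ∧
    ¬ ∃ C : ℝ, ∀ x ∈ Ioo (-1:ℝ) 1, |Real.log (1 - x ^ 2)| ^ β ≤ C := by
  have hβp := hβ0 hβ
  refine ⟨⟨?_, ?_, ?_, ?_⟩, tendsto_one hβ, tendsto_negone hβ, ?_⟩
  · -- square integrability
    apply evenIntegrable
    · intro x; rw [neg_pow, show ((-1:ℝ))^2 = 1 by norm_num, one_mul]
    · exact sq_int_right hβ
  · -- FTC
    intro a b ha hb
    have h1 := key_FTC hβ ha
    have h2 := key_FTC hβ hb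
    have hI : (0:ℝ) ∈ Ioo (-1:ℝ) 1 := by norm_num
    have hadd := intervalIntegral.integral_add_adjacent_intervals
      (du_intervalIntegrable hβ ha hI) (du_intervalIntegrable hβ hI hb)
    have key : |Real.log (1 - b ^ 2)| ^ β - |Real.log (1 - a ^ 2)| ^ β
        = ∫ t in a..b, du β t := by
      rw [← hadd, ← h2, intervalIntegral.integral_symm, ← h1]
      ring
    exact key
  · -- interval integrability of u'
    intro a b ha hb
    exact du_intervalIntegrable hβ ha hb
  · -- weighted square integrability
    have h : IntegrableOn (fun x => (1 - x ^ 2) * (du β x) ^ 2) (Ioo (-1:ℝ) 1) := by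
      apply evenIntegrable
      · intro x
        rw [du_neg, neg_pow x, show ((-1:ℝ))^2 = 1 by norm_num, one_mul]
        ring
      · exact wsq_int_right hβ
    exact h
  · -- unboundedness
    rintro ⟨C, hC⟩
    have h1 := (tendsto_one hβ).eventually_ge_atTop (C + 1)
    have h2 : ∀ᶠ x in nhdsWithin 1 (Iio (1:ℝ)), x ∈ Ioo (-1:ℝ) 1 :=
      Ioo_mem_nhdsLT_of_mem (show (1:ℝ) ∈ Ioc (-1) 1 by norm_num)
    obtain ⟨x, hx1, hx2⟩ := (h1.and h2).exists
    have := hC x hx2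
    linarith

end
end
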